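/- arXiv:1611.08496 — 3 statements merged into one kernel-verified Lean document; each statement's English description precedes it below -/
import Mathlib

section
/- For every ν ∈ (0,1] there exists n₀ ∈ ℕ such that the following holds for every n ≥ n₀. Let μ be a real number with 400ν ≤ μ ≤ 1 and let p ∈ (0,1]. Let D be a degree sequence on V = [n] with R^D_p ≥ μn, and let S ⊆ V satisfy Σ_{v∈S} d(v) ≤ νn. Let G be any simple graph on V with degree sequence D, let G′ be obtained from G by deleting all vertices in S and afterwards deleting all vertices of degree 0, let D′ be the degree sequence of G′ and let n′ be its length. Then n′ ≥ (1−2ν)n and R^{D′}_p ≥ (μ/50)·n′. -/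
open Finset

noncomputable section
open scoped Classical

/-- Partial sum `Σ_{i=1}^{j} d_i (p(d_i - 1) - 1)` of the first `j` entries of the
degree sequence `D` (indexed by `Fin n`, `0`-based). -/
def driftPartialSum (n : ℕ) (D : Fin n → ℕ) (p : ℝ) (j : ℕ) : ℝ :=
  ∑ i ∈ Finset.univ.filter (fun i : Fin n => (i : ℕ) < j),
    (D i : ℝ) * (p * ((D i : ℝ) - 1) - 1)

/-- `j^D_p`: the minimum of `n` and the smallest `j ∈ ℕ` with
`Σ_{i=1}^{j} d_i (p(d_i-1)-1) > 0` (equal to `n` if no such `j` exists). -/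
def jDp (n : ℕ) (D : Fin n → ℕ) (p : ℝ) : ℕ :=
  if h : ∃ j : ℕ, 0 < driftPartialSum n D p j then min n (Nat.find h) else n

/-- `R^D_p := Σ_{i=j^D_p}^{n} (p(d_i - 1) - 1)` (`1`-based indices, so the `0`-based
index `i` contributes iff `j^D_p ≤ i + 1`). -/
def RDp (n : ℕ) (D : Fin n → ℕ) (p : ℝ) : ℝ :=
  ∑ i ∈ Finset.univ.filter (fun i : Fin n => jDp n D p ≤ (i : ℕ) + 1),
    (p * ((D i : ℝ) - 1) - 1)

/-- Degree of `v` in the graph obtained from `G` by deleting the vertices of `S`. -/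
def degDel {n : ℕ} (G : SimpleGraph (Fin n)) (S : Finset (Fin n)) (v : Fin n) : ℕ :=
  (Finset.univ.filter (fun w => G.Adj v w ∧ w ∉ S)).card

namespace RDpAux

/-- `f(x) = p(x-1)-1`. -/
def fR (p x : ℝ) : ℝ := p * (x - 1) - 1

/-- `g(x) = x·f(x)`. -/
def gR (p x : ℝ) : ℝ := x * fR p x

lemma fR_mono {p x y : ℝ} (hp : 0 ≤ p) (h : x ≤ y) : fR p x ≤ fR p y := by
  unfold fR; nlinarith

lemma fR_diff (p x y : ℝ) : fR p x - fR p y = p * (x - y) := by unfold fR; ring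

lemma fR_le (p x : ℝ) (hp : 0 ≤ p) : fR p x ≤ p * x := by unfold fR; nlinarith

lemma gR_identity (p x y : ℝ) :
    gR p x - gR p y = (x - y) * (p * (x + y) - p - 1) := by unfold gR fR; ring

/-- P1: low vertices, degree drop. -/
lemma neg_gR_drop {p x y : ℝ} (hp : 0 < p) (hp1 : p ≤ 1) (hy : 1 ≤ y) (hxy : y ≤ x)
    (hfx : fR p x ≤ 0) : -gR p y ≤ -gR p x + 2 * (x - y) := by
  have hid := gR_identity p x y
  have hpx : p * x ≤ 1 + p := by unfold fR at hfx; nlinarith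
  have hpy : p * y ≤ p * x := by nlinarith
  have hc : p * (x + y) - p - 1 ≤ 2 := by nlinarith
  nlinarith [mul_le_mul_of_nonneg_left hc (sub_nonneg.mpr hxy)]

/-- P2: crossed vertices. -/
lemma neg_gR_cross {p x y : ℝ} (hp : 0 < p) (hp1 : p ≤ 1) (hy : 1 ≤ y) (hxy : y ≤ x)
    (hfy : fR p y ≤ 0) (hfx : 0 < fR p x) : -gR p y ≤ 2 * (x - y) := by
  have h1 : 1 + p - p * y ≤ p * (x - y) := by unfold fR at hfx; nlinarith
  have h2 : 0 ≤ 1 + p - p * y := by unfold fR at hfy; nlinarith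
  have h3 : -gR p y = y * (1 + p - p * y) := by unfold gR fR; ring
  have h4 : y * (1 + p - p * y) ≤ y * (p * (x - y)) :=
    mul_le_mul_of_nonneg_left h1 (by linarith)
  have h5 : p * y ≤ 1 + p := by unfold fR at hfy; nlinarith
  nlinarith [sub_nonneg.mpr hxy]

/-- P3: drift increase bound. -/
lemma gR_drop {p x y z : ℝ} (hp : 0 < p) (hy : 0 ≤ y) (hxy : y ≤ x) (hxz : x ≤ z) :
    gR p x - gR p y ≤ 2 * p * z * (x - y) := by
  have hid := gR_identity p x y
  have hc : p * (x + y) - p - 1 ≤ 2 * p * z := by nlinarith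
  nlinarith [mul_le_mul_of_nonneg_left hc (sub_nonneg.mpr hxy)]

/-- pointwise ite comparison -/
lemma ite_le_ite {c d : Prop} [Decidable c] [Decidable d] {x y : ℝ}
    (hcd : c → d) (hxy : c → x ≤ y) (hy0 : d → ¬ c → 0 ≤ y) :
    (if c then x else 0) ≤ (if d then y else 0) := by
  by_cases hc : c
  · rw [if_pos hc, if_pos (hcd hc)]; exact hxy hc
  · rw [if_neg hc]
    by_cases hd : d
    · rw [if_pos hd]; exact hy0 hd hc
    · rw [if_neg hd]

lemma ite_split {c t : Prop} [Decidable c] [Decidable t] (x : ℝ) :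
    (if c then x else 0) = (if c ∧ t then x else 0) + (if c ∧ ¬ t then x else 0) := by
  by_cases hc : c <;> by_cases ht : t <;> simp [hc, ht]

/-- transport of a position-indexed ite-sum along σ to a vertex-indexed one -/
lemma trans_ite {k m : ℕ} {W : Fin k → Prop} (σ : Fin m ≃ {v : Fin k // W v})
    (P : Fin m → Prop) [DecidablePred P] (F : Fin k → ℝ) :
    ∑ i : Fin m, (if P i then F (σ i) else 0)
      = ∑ v : Fin k, (if (∃ i, P i ∧ ((σ i : Fin k) = v)) then F v else 0) := by
  rw [← Finset.sum_filter, ← Finset.sum_filter]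
  apply Finset.sum_bij (i := fun (i : Fin m) (_ : i ∈ Finset.univ.filter P) => ((σ i : Fin k)))
  · intro a ha
    rw [Finset.mem_filter] at ha ⊢
    exact ⟨Finset.mem_univ _, a, ha.2, rfl⟩
  · intro a₁ _ a₂ _ h
    exact σ.injective (Subtype.ext h)
  · intro b hb
    rw [Finset.mem_filter] at hb
    obtain ⟨i, hPi, hib⟩ := hb.2
    exact ⟨i, Finset.mem_filter.mpr ⟨Finset.mem_univ _, hPi⟩, hib⟩
  · intros
    rfl

lemma jDp_le (n : ℕ) (D : Fin n → ℕ) (p : ℝ) : jDp n D p ≤ n := by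
  unfold jDp; split
  · exact min_le_left _ _
  · exact le_rfl

lemma driftPartialSum_zero (n : ℕ) (D : Fin n → ℕ) (p : ℝ) : driftPartialSum n D p 0 = 0 := by
  unfold driftPartialSum
  simp

lemma jDp_one_le {n : ℕ} (D : Fin n → ℕ) (p : ℝ) (hn : 1 ≤ n) : 1 ≤ jDp n D p := by
  unfold jDp; split
  · rename_i hE
    refine le_min hn ?_
    rw [Nat.one_le_iff_ne_zero]
    intro h0
    have := Nat.find_spec hE
    rw [h0, driftPartialSum_zero] at this
    exact lt_irrefl _ this
  · exact hn

lemma jDp_pos_dps {n : ℕ} {D : Fin n → ℕ} {p : ℝ} (h : jDp n D p < n) :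
    0 < driftPartialSum n D p (jDp n D p) := by
  unfold jDp at h ⊢
  by_cases hE : ∃ j, 0 < driftPartialSum n D p j
  · rw [dif_pos hE] at h ⊢
    rcases le_or_gt (Nat.find hE) n with h1 | h1
    · rw [min_eq_right h1] at h ⊢
      exact Nat.find_spec hE
    · rw [min_eq_left h1.le] at h
      exact absurd h (lt_irrefl _)
  · rw [dif_neg hE] at h
    exact absurd h (lt_irrefl _)

lemma jDp_prefix_nonpos {n : ℕ} {D : Fin n → ℕ} {p : ℝ} {m : ℕ} (h : m < jDp n D p) :
    driftPartialSum n D p m ≤ 0 := by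
  by_contra h0
  push_neg at h0
  unfold jDp at h
  by_cases hE : ∃ j, 0 < driftPartialSum n D p j
  · rw [dif_pos hE] at h
    have h2 : Nat.find hE ≤ m := Nat.find_le h0
    have h3 : m < Nat.find hE := lt_of_lt_of_le h (min_le_right _ _)
    omega
  · rw [dif_neg hE] at h
    exact hE ⟨m, h0⟩

lemma driftPartialSum_succ {n : ℕ} (D : Fin n → ℕ) (p : ℝ) {m : ℕ} (hm : m < n) :
    driftPartialSum n D p (m + 1)
      = driftPartialSum n D p m + gR p (D ⟨m, hm⟩ : ℝ) := by
  unfold driftPartialSum gR fR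
  have hins : Finset.univ.filter (fun i : Fin n => (i : ℕ) < m + 1)
      = insert (⟨m, hm⟩ : Fin n) (Finset.univ.filter (fun i : Fin n => (i : ℕ) < m)) := by
    ext i
    simp [Nat.lt_succ_iff_lt_or_eq, Fin.ext_iff, or_comm]
    omega
  rw [hins, Finset.sum_insert (by simp)]
  ring

lemma gR_nonpos {p x : ℝ} (hx : 0 ≤ x) (hf : fR p x ≤ 0) : gR p x ≤ 0 := by
  unfold gR
  calc x * fR p x ≤ x * 0 := mul_le_mul_of_nonneg_left hf hx
    _ = 0 := mul_zero _

lemma gR_nonneg {p x : ℝ} (hx : 0 ≤ x) (hf : 0 ≤ fR p x) : 0 ≤ gR p x := by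
  unfold gR; exact mul_nonneg hx hf

lemma sum_ite_neg {α : Type*} [Fintype α] (c : α → Prop) [DecidablePred c] (x : α → ℝ) :
    ∑ a : α, (if c a then -x a else 0) = -∑ a : α, (if c a then x a else 0) := by
  rw [← Finset.sum_neg_distrib]
  apply Finset.sum_congr rfl
  intro a _
  by_cases h : c a <;> simp [h]


end RDpAux

open RDpAux

set_option maxHeartbeats 4000000 in
/-- **Proposition (stability of `R^D_p` under deletion of vertices of small total degree).**
If `R^D_p ≥ μn`, `Σ_{v∈S} d(v) ≤ νn` with `400ν ≤ μ ≤ 1`, `G` realises `D`, and `D'` (of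
length `n'`) is the degree sequence of the graph `G'` obtained from `G` by deleting the
vertices of `S` and then all isolated vertices, then `n' ≥ (1-2ν)n` and
`R^{D'}_p ≥ (μ/50)·n'`. -/
theorem RDp_stable_under_deletion :
    ∀ ν : ℝ, 0 < ν → ν ≤ 1 →
    ∃ n₀ : ℕ, ∀ n : ℕ, n₀ ≤ n →
    ∀ μ : ℝ, 400 * ν ≤ μ → μ ≤ 1 →
    ∀ p : ℝ, 0 < p → p ≤ 1 →
    ∀ D : Fin n → ℕ, Monotone D → (∀ i, 1 ≤ D i) →
    μ * n ≤ RDp n D p →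
    ∀ S : Finset (Fin n), (∑ v ∈ S, (D v : ℝ)) ≤ ν * n →
    ∀ G : SimpleGraph (Fin n), (∀ v, G.degree v = D v) →
    -- `D'`, of length `n'`, is the (sorted) degree sequence of the graph `G'` obtained
    -- from `G` by deleting the vertices of `S` and then all vertices of degree `0`:
    -- its entries are the degrees (in `G - S`) of the surviving vertices.
    ∀ (n' : ℕ) (D' : Fin n' → ℕ), Monotone D' →
    ∀ σ : Fin n' ≃ {v : Fin n // v ∉ S ∧ degDel G S v ≠ 0},
    (∀ i, D' i = degDel G S (σ i)) →
    (1 - 2 * ν) * n ≤ n' ∧ μ / 50 * n' ≤ RDp n' D' p := by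
  intro ν hν0 hν1
  refine ⟨1, ?_⟩
  intro n hn μ hμl hμu p hp0 hp1 D hDmono hD1 hRD S hSsum G hGdeg n' D' hD'mono σ hD'
  -- ==================== basic numerics ====================
  have hn1 : (1:ℝ) ≤ (n:ℝ) := by exact_mod_cast hn
  have hμ0 : 0 < μ := by linarith
  have hν400 : ν ≤ 1/400 := by linarith
  have hνn0 : 0 < ν * n := by positivity
  -- ==================== graph counting ====================
  set lN : Fin n → ℕ := fun v => (univ.filter (fun w => G.Adj v w ∧ w ∈ S)).card with hlN
  have hdegfilter : ∀ v, D v = (univ.filter (fun w => G.Adj v w)).card := by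
    intro v
    rw [← hGdeg v]
    rw [← SimpleGraph.neighborFinset_eq_filter]
    rfl
  have hB1 : ∀ v, degDel G S v + lN v = D v := by
    intro v
    have e1 := Finset.card_filter_add_card_filter_not
      (s := univ.filter (fun w => G.Adj v w)) (p := fun w => w ∉ S)
    rw [Finset.filter_filter, Finset.filter_filter] at e1
    simp only [not_not] at e1
    rw [hdegfilter v, hlN]
    unfold degDel
    exact e1
  have hB0 : ∀ v, degDel G S v ≤ D v := fun v => by
    have := hB1 v; omega
  -- double counting : total degree loss of the survivors is at most Σ_{s∈S} D s
  have hDC : ∑ v ∈ univ.filter (fun v : Fin n => v ∉ S), lN v ≤ ∑ s ∈ S, D s := by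
    have e1 : ∀ v, lN v = ∑ w : Fin n, (if G.Adj v w ∧ w ∈ S then 1 else 0) := by
      intro v; simp only [hlN]; rw [Finset.card_filter]
    calc ∑ v ∈ univ.filter (fun v : Fin n => v ∉ S), lN v
        = ∑ v ∈ univ.filter (fun v : Fin n => v ∉ S), ∑ w : Fin n,
            (if G.Adj v w ∧ w ∈ S then 1 else 0) := by
          exact Finset.sum_congr rfl (fun v _ => e1 v)
      _ = ∑ w : Fin n, ∑ v ∈ univ.filter (fun v : Fin n => v ∉ S),
            (if G.Adj v w ∧ w ∈ S then 1 else 0) := Finset.sum_comm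
      _ ≤ ∑ w : Fin n, (if w ∈ S then D w else 0) := by
          apply Finset.sum_le_sum
          intro w _
          by_cases hw : w ∈ S
          · rw [if_pos hw]
            have e2 : ∑ v ∈ univ.filter (fun v : Fin n => v ∉ S),
                (if G.Adj v w ∧ w ∈ S then 1 else 0)
                = ((univ.filter (fun v : Fin n => v ∉ S)).filter (fun v => G.Adj v w ∧ w ∈ S)).card := by
              rw [Finset.card_filter]
            rw [e2, hdegfilter w]
            apply Finset.card_le_card
            intro v hv
            rw [Finset.mem_filter] at hv ⊢
            exact ⟨Finset.mem_univ _, (hv.2.1).symm⟩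
          · have : ∀ v ∈ univ.filter (fun v : Fin n => v ∉ S),
                (if G.Adj v w ∧ w ∈ S then 1 else 0) = 0 := by
              intro v _; rw [if_neg (fun hc => hw hc.2)]
            rw [Finset.sum_congr rfl this, if_neg hw]
            simp
      _ = ∑ w ∈ S, D w := by rw [Finset.sum_ite_mem, Finset.univ_inter]
  -- ==================== real abbreviations ====================
  set dR : Fin n → ℝ := fun v => ((D v : ℕ) : ℝ) with hdR
  set d'R : Fin n → ℝ := fun v => ((degDel G S v : ℕ) : ℝ) with hd'R
  set lo : Fin n → ℝ := fun v => dR v - d'R v with hlo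
  have hd1 : ∀ v, (1:ℝ) ≤ dR v := fun v => by simp only [hdR]; exact_mod_cast hD1 v
  have hdd : ∀ v, d'R v ≤ dR v := fun v => by
    simp only [hdR, hd'R]; exact_mod_cast hB0 v
  have hlo0 : ∀ v, 0 ≤ lo v := fun v => by simp only [hlo]; linarith [hdd v]
  have hd'0 : ∀ v, 0 ≤ d'R v := fun v => by simp only [hd'R]; positivity
  have hloN : ∀ v, lo v = ((lN v : ℕ) : ℝ) := by
    intro v
    have := hB1 v
    simp only [hlo, hdR, hd'R]
    have e : (D v : ℝ) = (degDel G S v : ℝ) + (lN v : ℝ) := by exact_mod_cast this.symm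
    linarith
  have hfilterS : univ.filter (fun v : Fin n => v ∈ S) = S := by ext v; simp
  have hbS : ∑ v ∈ univ.filter (fun v : Fin n => v ∈ S), dR v ≤ ν * n := by
    rw [hfilterS]; simp only [hdR]; exact hSsum
  have hbL : ∑ v ∈ univ.filter (fun v : Fin n => v ∉ S), lo v ≤ ν * n := by
    have e1 : ∑ v ∈ univ.filter (fun v : Fin n => v ∉ S), lo v
        = ((∑ v ∈ univ.filter (fun v : Fin n => v ∉ S), lN v : ℕ) : ℝ) := by
      rw [Nat.cast_sum]
      exact Finset.sum_congr rfl (fun v _ => hloN v)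
    rw [e1]
    calc ((∑ v ∈ univ.filter (fun v : Fin n => v ∉ S), lN v : ℕ) : ℝ)
        ≤ ((∑ s ∈ S, D s : ℕ) : ℝ) := by exact_mod_cast hDC
      _ = ∑ s ∈ S, ((D s : ℕ) : ℝ) := by rw [Nat.cast_sum]
      _ ≤ ν * n := hSsum
  -- ==================== part 1 ====================
  have hn'card : (univ.filter (fun v : Fin n => v ∉ S ∧ degDel G S v ≠ 0)).card = n' := by
    rw [← Fintype.card_subtype, ← Fintype.card_congr σ, Fintype.card_fin]
  have hcard1 : n ≤ (univ.filter (fun v : Fin n => v ∉ S ∧ degDel G S v ≠ 0)).card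
      + (S.card + (univ.filter (fun v : Fin n => v ∉ S ∧ degDel G S v = 0)).card) := by
    have hsub : (univ : Finset (Fin n)) ⊆
        (univ.filter (fun v : Fin n => v ∉ S ∧ degDel G S v ≠ 0))
        ∪ (S ∪ univ.filter (fun v : Fin n => v ∉ S ∧ degDel G S v = 0)) := by
      intro v _
      rw [Finset.mem_union, Finset.mem_union, Finset.mem_filter, Finset.mem_filter]
      by_cases h1 : v ∈ S
      · exact Or.inr (Or.inl h1)
      · by_cases h2 : degDel G S v = 0
        · exact Or.inr (Or.inr ⟨Finset.mem_univ _, h1, h2⟩)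
        · exact Or.inl ⟨Finset.mem_univ _, h1, h2⟩
    calc n = (univ : Finset (Fin n)).card := by rw [Finset.card_univ, Fintype.card_fin]
      _ ≤ _ := Finset.card_le_card hsub
      _ ≤ _ := by
          refine (Finset.card_union_le _ _).trans ?_
          exact Nat.add_le_add_left (Finset.card_union_le _ _) _
  have hScard : (S.card : ℝ) ≤ ν * n := by
    calc (S.card : ℝ) = ∑ _v ∈ S, (1:ℝ) := by rw [Finset.sum_const]; simp
      _ ≤ ∑ v ∈ S, ((D v : ℕ) : ℝ) := Finset.sum_le_sum (fun v _ => by exact_mod_cast hD1 v)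
      _ ≤ ν * n := hSsum
  have hIcard : ((univ.filter (fun v : Fin n => v ∉ S ∧ degDel G S v = 0)).card : ℝ) ≤ ν * n := by
    calc ((univ.filter (fun v : Fin n => v ∉ S ∧ degDel G S v = 0)).card : ℝ)
        = ∑ _v ∈ univ.filter (fun v : Fin n => v ∉ S ∧ degDel G S v = 0), (1:ℝ) := by
          rw [Finset.sum_const]; simp
      _ ≤ ∑ v ∈ univ.filter (fun v : Fin n => v ∉ S ∧ degDel G S v = 0), lo v := by
          apply Finset.sum_le_sum
          intro v hv
          rw [Finset.mem_filter] at hv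
          have h0 : d'R v = 0 := by simp only [hd'R, hv.2.2]; simp
          have := hd1 v
          simp only [hlo]; linarith
      _ ≤ ∑ v ∈ univ.filter (fun v : Fin n => v ∉ S), lo v := by
          apply Finset.sum_le_sum_of_subset_of_nonneg
          · intro v hv
            rw [Finset.mem_filter] at hv ⊢
            exact ⟨hv.1, hv.2.1⟩
          · intro v _ _; exact hlo0 v
      _ ≤ ν * n := hbL
  have hpart1 : (1 - 2*ν) * n ≤ (n' : ℝ) := by
    have e1 : (n:ℝ) ≤ (n':ℝ) + ((S.card:ℝ)
        + ((univ.filter (fun v : Fin n => v ∉ S ∧ degDel G S v = 0)).card : ℝ)) := by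
      have := hcard1
      rw [hn'card] at this
      exact_mod_cast this
    nlinarith
  have hn'n : (n':ℝ) ≤ (n:ℝ) := by
    have : n' ≤ n := by
      rw [← hn'card]
      calc (univ.filter (fun v : Fin n => v ∉ S ∧ degDel G S v ≠ 0)).card
          ≤ (univ : Finset (Fin n)).card := Finset.card_filter_le _ _
        _ = n := by rw [Finset.card_univ, Fintype.card_fin]
    exact_mod_cast this
  have hn'pos : (0:ℝ) < (n':ℝ) := by nlinarith
  have hn'1 : 1 ≤ n' := by
    by_contra hc
    push_neg at hc
    interval_cases n'
    · simp at hn'pos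
  -- ==================== predicates and interfaces ====================
  set j : ℕ := jDp n D p with hj
  set j' : ℕ := jDp n' D' p with hj'
  set PT : Fin n → Prop := fun v => j ≤ (v:ℕ) + 1 with hPT
  set PA : Fin n → Prop :=
    fun v => ∃ i : Fin n', ((i:ℕ) + 1 < j') ∧ ((σ i : Fin n) = v) with hPA
  set PO : Fin n → Prop :=
    fun v => ∃ i : Fin n', (j' ≤ (i:ℕ) + 1) ∧ ((σ i : Fin n) = v) with hPO
  have hjn : j ≤ n := jDp_le n D p
  have hj1 : 1 ≤ j := jDp_one_le D p hn
  have hj'1 : 1 ≤ j' := jDp_one_le D' p hn'1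
  have hj'n' : j' ≤ n' := jDp_le n' D' p
  have hPAsrv : ∀ v, PA v → (v ∉ S ∧ degDel G S v ≠ 0) := by
    rintro v ⟨i, _, rfl⟩; exact (σ i).2
  have hPOsrv : ∀ v, PO v → (v ∉ S ∧ degDel G S v ≠ 0) := by
    rintro v ⟨i, _, rfl⟩; exact (σ i).2
  have hcoverAO : ∀ v, v ∉ S → degDel G S v ≠ 0 → PA v ∨ PO v := by
    intro v h1 h2
    have he : (σ (σ.symm ⟨v, h1, h2⟩) : Fin n) = v := by rw [Equiv.apply_symm_apply]
    rcases lt_or_ge ((σ.symm ⟨v, h1, h2⟩ : Fin n').1 + 1) j' with h | h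
    · exact Or.inl ⟨_, h, he⟩
    · exact Or.inr ⟨_, h, he⟩
  have hnotboth : ∀ v, PA v → PO v → False := by
    rintro v ⟨i1, h1, e1⟩ ⟨i2, h2, e2⟩
    have : i1 = i2 := σ.injective (Subtype.ext (e1.trans e2.symm))
    subst this
    omega
  have hsurv1 : ∀ v : Fin n, degDel G S v ≠ 0 → (1:ℝ) ≤ d'R v := by
    intro v h
    simp only [hd'R]
    exact_mod_cast Nat.one_le_iff_ne_zero.mpr h
  have hD'1 : ∀ i : Fin n', (1:ℝ) ≤ ((D' i : ℕ):ℝ) := by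
    intro i
    have : (1:ℕ) ≤ D' i := by rw [hD' i]; exact Nat.one_le_iff_ne_zero.mpr (σ i).2.2
    exact_mod_cast this
  have hd'D' : ∀ i : Fin n', d'R ((σ i : Fin n)) = ((D' i : ℕ):ℝ) := by
    intro i; simp only [hd'R, hD' i]
  -- R as a tail sum over vertices
  have hRr : μ * n ≤ ∑ v : Fin n, (if PT v then fR p (dR v) else 0) := by
    refine le_trans hRD (le_of_eq ?_)
    unfold RDp
    rw [Finset.sum_filter]
    apply Finset.sum_congr rfl
    intro v _
    rw [← hj]
    simp only [hPT, fR, hdR]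
  -- R' as a sum over vertices
  have hR'eq : RDp n' D' p = ∑ v : Fin n, (if PO v then fR p (d'R v) else 0) := by
    unfold RDp
    rw [Finset.sum_filter]
    have e1 : ∀ i : Fin n', (if jDp n' D' p ≤ (i:ℕ)+1 then (p * ((D' i : ℝ) - 1) - 1) else 0)
        = (if j' ≤ (i:ℕ)+1 then fR p (d'R (σ i)) else 0) := by
      intro i
      rw [← hj', hd'D' i]
      simp only [fR]
    rw [Finset.sum_congr rfl (fun i _ => e1 i)]
    rw [trans_ite σ (fun i : Fin n' => j' ≤ (i:ℕ)+1) (fun v => fR p (d'R v))]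
  -- prefix of D' at j'-1, as a vertex sum
  have hdps' : driftPartialSum n' D' p (j' - 1) = ∑ v : Fin n, (if PA v then gR p (d'R v) else 0) := by
    unfold driftPartialSum
    rw [Finset.sum_filter]
    have e1 : ∀ i : Fin n', (if (i:ℕ) < j' - 1 then ((D' i : ℝ) * (p * ((D' i : ℝ) - 1) - 1)) else 0)
        = (if (i:ℕ)+1 < j' then gR p (d'R (σ i)) else 0) := by
      intro i
      have hc : ((i:ℕ) < j' - 1) ↔ ((i:ℕ)+1 < j') := by omega
      rw [hd'D' i]
      simp only [gR, fR]
      by_cases h : (i:ℕ)+1 < j'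
      · rw [if_pos (hc.mpr h), if_pos h]
      · rw [if_neg (fun hh => h (hc.mp hh)), if_neg h]
    rw [Finset.sum_congr rfl (fun i _ => e1 i)]
    rw [trans_ite σ (fun i : Fin n' => (i:ℕ)+1 < j') (fun v => gR p (d'R v))]
  have hprefix' : ∑ v : Fin n, (if PA v then gR p (d'R v) else 0) ≤ 0 := by
    rw [← hdps']
    exact jDp_prefix_nonpos (by omega)
  -- ==================== F3 : positivity on the new tail ====================
  have hex : ∃ w : Fin n, (w ∉ S ∧ degDel G S w ≠ 0) ∧ 0 < fR p (d'R w) := by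
    by_contra hall
    push_neg at hall
    have hb : ∑ v : Fin n, (if PT v then fR p (dR v) else 0)
        ≤ (∑ v : Fin n, (if v ∈ S then p * dR v else 0))
          + (∑ v : Fin n, (if v ∉ S then p * lo v else 0)) := by
      rw [← Finset.sum_add_distrib]
      apply Finset.sum_le_sum
      intro v _
      have hpd : (0:ℝ) ≤ p * dR v := mul_nonneg hp0.le (by linarith [hd1 v])
      have hpl : (0:ℝ) ≤ p * lo v := mul_nonneg hp0.le (hlo0 v)
      by_cases hS : v ∈ S
      · rw [if_pos hS, if_neg (not_not_intro hS)]
        by_cases hPTv : PT v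
        · rw [if_pos hPTv]
          have := fR_le p (dR v) hp0.le
          linarith
        · rw [if_neg hPTv]; linarith
      · rw [if_neg hS, if_pos hS]
        have hkey : fR p (dR v) ≤ p * lo v := by
          by_cases h0 : degDel G S v = 0
          · have h1 : d'R v = 0 := by simp only [hd'R, h0]; simp
            have h2 : lo v = dR v := by simp only [hlo]; linarith
            have := fR_le p (dR v) hp0.le
            rw [h2]; linarith
          · have h3 : fR p (d'R v) ≤ 0 := hall v ⟨hS, h0⟩
            have h4 : fR p (dR v) - fR p (d'R v) = p * (dR v - d'R v) := fR_diff p _ _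
            simp only [hlo]
            linarith
        by_cases hPTv : PT v
        · rw [if_pos hPTv]; linarith
        · rw [if_neg hPTv]; linarith
    have hb1 : ∑ v : Fin n, (if v ∈ S then p * dR v else 0) ≤ ν * n := by
      rw [← Finset.sum_filter, ← Finset.mul_sum]
      calc p * ∑ v ∈ univ.filter (fun v : Fin n => v ∈ S), dR v
          ≤ 1 * (ν * n) := by
            apply mul_le_mul hp1 hbS ?_ (by norm_num)
            apply Finset.sum_nonneg
            intro v _; linarith [hd1 v]
        _ = ν * n := by ring
    have hb2 : ∑ v : Fin n, (if v ∉ S then p * lo v else 0) ≤ ν * n := by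
      rw [← Finset.sum_filter, ← Finset.mul_sum]
      calc p * ∑ v ∈ univ.filter (fun v : Fin n => v ∉ S), lo v
          ≤ 1 * (ν * n) := by
            apply mul_le_mul hp1 hbL ?_ (by norm_num)
            apply Finset.sum_nonneg
            intro v _; exact hlo0 v
        _ = ν * n := by ring
    have h400 : 400 * (ν * n) ≤ μ * n := by
      rw [← mul_assoc]
      exact mul_le_mul_of_nonneg_right hμl (by positivity)
    linarith only [hRr, hb, hb1, hb2, h400, hνn0]
  have hF3 : ∀ i : Fin n', j' ≤ (i:ℕ)+1 → 0 < fR p ((D' i : ℕ):ℝ) := by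
    by_cases hq : 0 < driftPartialSum n' D' p j'
    · have hj'lt : j' - 1 < n' := by omega
      have hsucc := driftPartialSum_succ D' p (m := j'-1) hj'lt
      rw [show (j' - 1 + 1) = j' by omega] at hsucc
      have hpre : driftPartialSum n' D' p (j'-1) ≤ 0 := jDp_prefix_nonpos (by omega)
      have hg : 0 < gR p ((D' ⟨j'-1, hj'lt⟩ : ℕ):ℝ) := by
        rw [hsucc] at hq
        linarith only [hq, hpre]
      have hf : 0 < fR p ((D' ⟨j'-1,hj'lt⟩ : ℕ):ℝ) := by
        by_contra hc
        push_neg at hc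
        have h1 := hD'1 ⟨j'-1,hj'lt⟩
        have h2 : ((D' ⟨j'-1,hj'lt⟩ : ℕ):ℝ) * fR p ((D' ⟨j'-1,hj'lt⟩ : ℕ):ℝ)
            ≤ ((D' ⟨j'-1,hj'lt⟩ : ℕ):ℝ) * 0 :=
          mul_le_mul_of_nonneg_left hc (by linarith only [h1])
        rw [mul_zero] at h2
        unfold gR at hg
        linarith only [hg, h2]
      intro i hi
      have hle : (⟨j'-1, hj'lt⟩ : Fin n') ≤ i := by
        rw [Fin.le_def]
        simp only [Fin.val_mk]
        omega
      have hmono : D' ⟨j'-1,hj'lt⟩ ≤ D' i := hD'mono hle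
      have h3 : fR p ((D' ⟨j'-1,hj'lt⟩:ℕ):ℝ) ≤ fR p ((D' i : ℕ):ℝ) :=
        fR_mono hp0.le (by exact_mod_cast hmono)
      linarith only [hf, h3]
    · have hj'eq : j' = n' := by
        rcases lt_or_eq_of_le hj'n' with h | h
        · have h4 := jDp_pos_dps (n := n') (D := D') (p := p) (by rw [← hj']; exact h)
          rw [← hj'] at h4
          exact absurd h4 hq
        · exact h
      obtain ⟨w, hw, hwpos⟩ := hex
      intro i hi
      have hieq : (i:ℕ) = n' - 1 := by have := i.isLt; omega
      have hle : σ.symm ⟨w, hw⟩ ≤ i := by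
        rw [Fin.le_def]
        have h2 := (σ.symm ⟨w, hw⟩).isLt
        omega
      have hmono : D' (σ.symm ⟨w, hw⟩) ≤ D' i := hD'mono hle
      have he : ((D' (σ.symm ⟨w, hw⟩) : ℕ):ℝ) = d'R w := by
        rw [hD' (σ.symm ⟨w, hw⟩)]
        simp only [Equiv.apply_symm_apply]
        rfl
      have h3 : ((D' (σ.symm ⟨w,hw⟩):ℕ):ℝ) ≤ ((D' i:ℕ):ℝ) := by exact_mod_cast hmono
      have h4 : fR p (d'R w) ≤ fR p ((D' i:ℕ):ℝ) := by
        rw [← he]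
        exact fR_mono hp0.le h3
      linarith only [hwpos, h4]
  have hF3v : ∀ v, PO v → 0 < fR p (d'R v) := by
    rintro v ⟨i, hi, rfl⟩
    rw [hd'D' i]
    exact hF3 i hi
  refine ⟨hpart1, ?_⟩
  have h400 : 400 * (ν * n) ≤ μ * n := by
    rw [← mul_assoc]
    exact mul_le_mul_of_nonneg_right hμl (by positivity)
  have h50 : μ/50 * (n':ℝ) ≤ μ/50 * n :=
    mul_le_mul_of_nonneg_left hn'n (by positivity)
  by_cases hT : j + 15 ≤ n
  · -- ============ many tail vertices: the main chain ============
    have hjlt : j - 1 < n := by omega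
    set VJ : Fin n := ⟨j-1, hjlt⟩ with hVJ
    set dj : ℝ := dR VJ with hdj
    set fj : ℝ := fR p dj with hfjdef
    set gjq : ℝ := gR p dj with hgjdef
    have hgjq : gjq = dj * fj := rfl
    have hdj1 : (1:ℝ) ≤ dj := hd1 VJ
    have hdj0 : (0:ℝ) < dj := by linarith only [hdj1]
    have hdps_succ := driftPartialSum_succ D p (m := j-1) hjlt
    rw [show (j - 1 + 1) = j by omega] at hdps_succ
    have hdps_succ' : driftPartialSum n D p j = driftPartialSum n D p (j-1) + gjq := by
      rw [hdps_succ, hgjdef, hdj, hdR]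
    have hjfind : 0 < driftPartialSum n D p j := by
      have h1 := jDp_pos_dps (n := n) (D := D) (p := p) (by rw [← hj]; omega)
      rw [← hj] at h1
      exact h1
    have hpre : driftPartialSum n D p (j-1) ≤ 0 := jDp_prefix_nonpos (by rw [← hj]; omega)
    have hgjpos : 0 < gjq := by
      rw [hdps_succ'] at hjfind
      linarith only [hjfind, hpre]
    have hfjpos : 0 < fj := by
      by_contra hc
      push_neg at hc
      have := gR_nonpos (p := p) (x := dj) (by linarith only [hdj1]) hc
      rw [← hgjdef] at this
      linarith only [this, hgjpos]
    have htailf : ∀ v, PT v → fj ≤ fR p (dR v) := by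
      intro v hv
      apply fR_mono hp0.le
      rw [hdj, hdR]
      simp only [hdR]
      have : D VJ ≤ D v := by
        apply hDmono
        rw [Fin.le_def]
        simp only [hVJ, Fin.val_mk]
        simp only [hPT] at hv
        omega
      exact_mod_cast this
    have htailpos : ∀ v, PT v → 0 < fR p (dR v) := fun v hv =>
      lt_of_lt_of_le hfjpos (htailf v hv)
    have htaild : ∀ v, PT v → dj ≤ dR v := by
      intro v hv
      rw [hdj]
      simp only [hdR]
      have : D VJ ≤ D v := by
        apply hDmono
        rw [Fin.le_def]
        simp only [hVJ, Fin.val_mk]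
        simp only [hPT] at hv
        omega
      exact_mod_cast this
    have hmidd : ∀ v, ¬ PT v → dR v ≤ dj := by
      intro v hv
      rw [hdj]
      simp only [hdR]
      have : D v ≤ D VJ := by
        apply hDmono
        rw [Fin.le_def]
        simp only [hVJ, Fin.val_mk]
        simp only [hPT] at hv
        omega
      exact_mod_cast this
    have hlowmid : ∀ v, fR p (dR v) ≤ 0 → ¬ PT v := by
      intro v hv hPTv
      linarith only [htailpos v hPTv, hv]
    -- prefix of D at j-1 as a vertex sum
    have hdpsj1 : driftPartialSum n D p (j-1)
        = ∑ v : Fin n, (if ¬ PT v then gR p (dR v) else 0) := by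
      unfold driftPartialSum
      rw [Finset.sum_filter]
      apply Finset.sum_congr rfl
      intro v _
      have hc : ((v:ℕ) < j - 1) ↔ ¬ PT v := by simp only [hPT]; omega
      by_cases h : ¬ PT v
      · rw [if_pos (hc.mpr h), if_pos h]
        simp only [gR, fR, hdR]
      · rw [if_neg (fun hh => h (hc.mp hh)), if_neg h]
    -- named quantities
    set Call : ℝ := ∑ v : Fin n, (if ¬ (0 < fR p (dR v)) then -gR p (dR v) else 0) with hCalldef
    set Gm : ℝ := ∑ v : Fin n, (if (¬ PT v ∧ 0 < fR p (dR v)) then gR p (dR v) else 0) with hGmdef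
    set T1 : ℝ := ∑ v : Fin n, (if (PA v ∧ PT v) then gR p (d'R v) else 0) with hT1def
    set T2 : ℝ := ∑ v : Fin n,
      (if (((PA v ∧ ¬ PT v) ∧ 0 < fR p (dR v)) ∧ 0 < fR p (d'R v)) then gR p (d'R v) else 0) with hT2def
    set Yq : ℝ := ∑ v : Fin n, (if (PO v ∧ ¬ PT v) then fR p (d'R v) else 0) with hYdef
    set Zq : ℝ := ∑ v : Fin n,
      (if ((PA v ∧ PT v) ∧ 0 < fR p (d'R v)) then fR p (d'R v) else 0) with hZdef
    set Xq : ℝ := ∑ v : Fin n, (if (PT v ∧ ¬ PO v) then fR p (dR v) else 0) with hXdef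
    set Rr : ℝ := ∑ v : Fin n, (if PT v then fR p (dR v) else 0) with hRrdef
    -- (W1) split the new prefix sum
    have hsplitA : ∑ v : Fin n, (if PA v then gR p (d'R v) else 0)
        = (T1 + T2)
          + ((∑ v : Fin n, (if (((PA v ∧ ¬ PT v) ∧ 0 < fR p (dR v)) ∧ ¬ 0 < fR p (d'R v))
              then gR p (d'R v) else 0))
            + (∑ v : Fin n, (if ((PA v ∧ ¬ PT v) ∧ ¬ 0 < fR p (dR v))
              then gR p (d'R v) else 0))) := by
      rw [hT1def, hT2def, ← Finset.sum_add_distrib, ← Finset.sum_add_distrib,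
        ← Finset.sum_add_distrib]
      apply Finset.sum_congr rfl
      intro v _
      by_cases h1 : PA v <;> by_cases h2 : PT v <;> by_cases h3 : 0 < fR p (dR v) <;>
        by_cases h4 : 0 < fR p (d'R v) <;> simp [h1, h2, h3, h4]
    have hbudget : ∑ v : Fin n, (if v ∉ S then 2 * lo v else 0) ≤ 2*(ν*n) := by
      rw [← Finset.sum_filter, ← Finset.mul_sum]
      linarith only [hbL]
    -- (W2) crossed mid vertices
    have hB3 : -(2*(ν*n)) ≤ ∑ v : Fin n,
        (if (((PA v ∧ ¬ PT v) ∧ 0 < fR p (dR v)) ∧ ¬ 0 < fR p (d'R v))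
          then gR p (d'R v) else 0) := by
      have h1 : ∑ v : Fin n,
          (if (((PA v ∧ ¬ PT v) ∧ 0 < fR p (dR v)) ∧ ¬ 0 < fR p (d'R v))
            then -gR p (d'R v) else 0)
          ≤ ∑ v : Fin n, (if v ∉ S then 2 * lo v else 0) := by
        apply Finset.sum_le_sum
        intro v _
        apply ite_le_ite
        · intro h; exact (hPAsrv v h.1.1.1).1
        · intro h
          have hcross := neg_gR_cross hp0 hp1 (hsurv1 v (hPAsrv v h.1.1.1).2) (hdd v)
            (not_lt.mp h.2) h.1.2
          simp only [hlo]
          linarith only [hcross]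
        · intro _ _
          linarith only [hlo0 v]
      rw [sum_ite_neg] at h1
      linarith only [h1, hbudget]
    -- (W3) low vertices
    have hB4 : -(Call + 2*(ν*n)) ≤ ∑ v : Fin n,
        (if ((PA v ∧ ¬ PT v) ∧ ¬ 0 < fR p (dR v)) then gR p (d'R v) else 0) := by
      have h1 : ∑ v : Fin n,
          (if ((PA v ∧ ¬ PT v) ∧ ¬ 0 < fR p (dR v)) then -gR p (d'R v) else 0)
          ≤ ∑ v : Fin n, ((if ¬ 0 < fR p (dR v) then -gR p (dR v) else 0)
            + (if v ∉ S then 2 * lo v else 0)) := by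
        apply Finset.sum_le_sum
        intro v _
        by_cases hc : (PA v ∧ ¬ PT v) ∧ ¬ 0 < fR p (dR v)
        · rw [if_pos hc, if_pos hc.2, if_pos (hPAsrv v hc.1.1).1]
          have hdrop := neg_gR_drop hp0 hp1 (hsurv1 v (hPAsrv v hc.1.1).2) (hdd v)
            (not_lt.mp hc.2)
          simp only [hlo]
          linarith only [hdrop]
        · rw [if_neg hc]
          have e1 : (0:ℝ) ≤ (if ¬ 0 < fR p (dR v) then -gR p (dR v) else 0) := by
            by_cases h3 : ¬ 0 < fR p (dR v)
            · rw [if_pos h3]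
              have := gR_nonpos (p := p) (x := dR v) (by linarith only [hd1 v]) (not_lt.mp h3)
              linarith only [this]
            · rw [if_neg h3]
          have e2 : (0:ℝ) ≤ (if v ∉ S then 2 * lo v else 0) := by
            by_cases h3 : v ∉ S
            · rw [if_pos h3]; linarith only [hlo0 v]
            · rw [if_neg h3]
          linarith only [e1, e2]
      rw [sum_ite_neg] at h1
      rw [Finset.sum_add_distrib] at h1
      rw [← hCalldef] at h1
      linarith only [h1, hbudget]
    -- (W4)
    have hT12 : T1 + T2 ≤ Call + 4*(ν*n) := by
      have h0 := hprefix'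
      rw [hsplitA] at h0
      linarith only [h0, hB3, hB4]
    -- (W5)
    have hCallGm : Call ≤ Gm + gjq := by
      have hsplitPre : driftPartialSum n D p (j-1)
          = Gm + ∑ v : Fin n, (if (¬ PT v ∧ ¬ 0 < fR p (dR v)) then gR p (dR v) else 0) := by
        rw [hdpsj1, hGmdef, ← Finset.sum_add_distrib]
        apply Finset.sum_congr rfl
        intro v _
        by_cases h2 : PT v <;> by_cases h3 : 0 < fR p (dR v) <;> simp [h2, h3]
      have hCeq0 : Call = -∑ v : Fin n,
          (if (¬ PT v ∧ ¬ 0 < fR p (dR v)) then gR p (dR v) else 0) := by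
        rw [hCalldef, ← Finset.sum_neg_distrib]
        apply Finset.sum_congr rfl
        intro v _
        by_cases h3 : 0 < fR p (dR v)
        · simp [h3]
        · have hnPT := hlowmid v (not_lt.mp h3)
          simp [h3, hnPT]
      have hCeq : ∑ v : Fin n, (if (¬ PT v ∧ ¬ 0 < fR p (dR v)) then gR p (dR v) else 0)
          = -Call := by rw [hCeq0]; ring
      rw [hCeq] at hsplitPre
      linarith only [hsplitPre, hjfind, hdps_succ']
    -- (W6) bound G from above
    have hfd : ∀ v, fR p (dR v) - fR p (d'R v) = p * lo v := by
      intro v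
      have := fR_diff p (dR v) (d'R v)
      simp only [hlo]
      linarith only [this]
    have hiso : ∀ v, degDel G S v = 0 → lo v = dR v := by
      intro v h0
      have hd'v0 : d'R v = 0 := by simp only [hd'R, h0]; simp
      simp only [hlo]
      linarith only [hd'v0]
    have hGmb : Gm ≤ T2 + dj * Yq + 3*(p*dj*(ν*n)) := by
      have hpoint : ∀ v : Fin n, (if (¬ PT v ∧ 0 < fR p (dR v)) then gR p (dR v) else 0)
          ≤ (if (((PA v ∧ ¬ PT v) ∧ 0 < fR p (dR v)) ∧ 0 < fR p (d'R v))
              then gR p (d'R v) else 0)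
            + ((if (PO v ∧ ¬ PT v) then dj * fR p (d'R v) else 0)
            + ((if v ∈ S then p*dj*dR v else 0)
            + (if v ∉ S then 2*p*dj*lo v else 0))) := by
        intro v
        have hr1 : (0:ℝ) ≤ (if (((PA v ∧ ¬ PT v) ∧ 0 < fR p (dR v)) ∧ 0 < fR p (d'R v))
            then gR p (d'R v) else 0) := by
          by_cases h : ((PA v ∧ ¬ PT v) ∧ 0 < fR p (dR v)) ∧ 0 < fR p (d'R v)
          · rw [if_pos h]; exact gR_nonneg (hd'0 v) h.2.le
          · rw [if_neg h]
        have hr2 : (0:ℝ) ≤ (if (PO v ∧ ¬ PT v) then dj * fR p (d'R v) else 0) := by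
          by_cases h : PO v ∧ ¬ PT v
          · rw [if_pos h]; exact mul_nonneg hdj0.le (hF3v v h.1).le
          · rw [if_neg h]
        have hr3 : (0:ℝ) ≤ (if v ∈ S then p*dj*dR v else 0) := by
          by_cases h : v ∈ S
          · rw [if_pos h]
            exact mul_nonneg (mul_nonneg hp0.le hdj0.le) (by linarith only [hd1 v])
          · rw [if_neg h]
        have hr4 : (0:ℝ) ≤ (if v ∉ S then 2*p*dj*lo v else 0) := by
          by_cases h : v ∉ S
          · rw [if_pos h]
            have h5 : (0:ℝ) ≤ 2*p*dj := by positivity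
            exact mul_nonneg h5 (hlo0 v)
          · rw [if_neg h]
        by_cases hc : ¬ PT v ∧ 0 < fR p (dR v)
        · rw [if_pos hc]
          have hdvdj : dR v ≤ dj := hmidd v hc.1
          have hgd : gR p (dR v) ≤ dj * fR p (dR v) := by
            unfold gR
            exact mul_le_mul_of_nonneg_right hdvdj hc.2.le
          have hfle : fR p (dR v) ≤ p * dR v := fR_le p _ hp0.le
          have hdjf : dj * fR p (dR v) ≤ dj * (p * dR v) :=
            mul_le_mul_of_nonneg_left hfle hdj0.le
          by_cases hS : v ∈ S
          · rw [if_pos hS]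
            have hre : dj * (p * dR v) = p*dj*dR v := by ring
            linarith only [hgd, hdjf, hre, hr1, hr2, hr4]
          · rw [if_neg hS, if_pos hS]
            by_cases h0 : degDel G S v = 0
            · have hlov := hiso v h0
              have hre : dj * (p * dR v) = p*dj*(dR v) := by ring
              have hnn : 0 ≤ p*dj*dR v :=
                mul_nonneg (mul_nonneg hp0.le hdj0.le) (by linarith only [hd1 v])
              have hre2 : 2*p*dj*lo v = 2*(p*dj*dR v) := by rw [hlov]; ring
              linarith only [hgd, hdjf, hre, hnn, hre2, hr1, hr2]
            · by_cases hpos' : 0 < fR p (d'R v)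
              · rcases hcoverAO v hS h0 with hPAv | hPOv
                · rw [if_pos (show ((PA v ∧ ¬ PT v) ∧ 0 < fR p (dR v)) ∧ 0 < fR p (d'R v)
                    from ⟨⟨⟨hPAv, hc.1⟩, hc.2⟩, hpos'⟩)]
                  have hdropg := gR_drop (p := p) hp0 (hd'0 v) (hdd v) hdvdj
                  have hre : 2*p*dj*(dR v - d'R v) = 2*p*dj*lo v := by
                    simp only [hlo]
                  linarith only [hdropg, hre, hr2, hr3]
                · rw [if_pos (show PO v ∧ ¬ PT v from ⟨hPOv, hc.1⟩)]
                  have h7 := hfd v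
                  have h8 : dj * fR p (dR v) - dj * fR p (d'R v) = dj*(p*lo v) := by
                    rw [← mul_sub, h7]
                  have h9 : 0 ≤ p*dj*lo v := by
                    exact mul_nonneg (mul_nonneg hp0.le hdj0.le) (hlo0 v)
                  have h10 : dj*(p*lo v) = p*dj*lo v := by ring
                  have h11 : 2*p*dj*lo v = 2*(p*dj*lo v) := by ring
                  linarith only [hgd, h8, h9, h10, h11, hr1, hr3]
              · -- crossed
                have h7 := hfd v
                have h8 : dj * fR p (dR v) - dj * fR p (d'R v) = dj*(p*lo v) := by
                  rw [← mul_sub, h7]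
                have hf'le : fR p (d'R v) ≤ 0 := not_lt.mp hpos'
                have h12 : dj * fR p (d'R v) ≤ 0 := by
                  exact mul_nonpos_iff.mpr (Or.inl ⟨hdj0.le, hf'le⟩)
                have h9 : 0 ≤ p*dj*lo v :=
                  mul_nonneg (mul_nonneg hp0.le hdj0.le) (hlo0 v)
                have h10 : dj*(p*lo v) = p*dj*lo v := by ring
                have h11 : 2*p*dj*lo v = 2*(p*dj*lo v) := by ring
                linarith only [hgd, h8, h12, h9, h10, h11, hr1, hr2, hr3]
        · rw [if_neg hc]
          linarith only [hr1, hr2, hr3, hr4]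
      have hsum := Finset.sum_le_sum (fun v (_ : v ∈ (univ : Finset (Fin n))) => hpoint v)
      rw [Finset.sum_add_distrib, Finset.sum_add_distrib, Finset.sum_add_distrib] at hsum
      have hp2 : ∑ v : Fin n, (if (PO v ∧ ¬ PT v) then dj * fR p (d'R v) else 0)
          = dj * Yq := by
        rw [hYdef, Finset.mul_sum]
        apply Finset.sum_congr rfl
        intro v _
        by_cases h : PO v ∧ ¬ PT v <;> simp [h]
      have hp3 : ∑ v : Fin n, (if v ∈ S then p*dj*dR v else 0) ≤ p*dj*(ν*n) := by
        rw [← Finset.sum_filter]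
        have : ∑ v ∈ univ.filter (fun v : Fin n => v ∈ S), p*dj*dR v
            = p*dj * ∑ v ∈ univ.filter (fun v : Fin n => v ∈ S), dR v := by
          rw [Finset.mul_sum]
        rw [this]
        exact mul_le_mul_of_nonneg_left hbS (mul_nonneg hp0.le hdj0.le)
      have hp4 : ∑ v : Fin n, (if v ∉ S then 2*p*dj*lo v else 0) ≤ 2*(p*dj*(ν*n)) := by
        rw [← Finset.sum_filter]
        have : ∑ v ∈ univ.filter (fun v : Fin n => v ∉ S), 2*p*dj*lo v
            = 2*p*dj * ∑ v ∈ univ.filter (fun v : Fin n => v ∉ S), lo v := by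
          rw [Finset.mul_sum]
        rw [this]
        have h5 : 2*p*dj * ∑ v ∈ univ.filter (fun v : Fin n => v ∉ S), lo v
            ≤ 2*p*dj * (ν*n) := by
          apply mul_le_mul_of_nonneg_left hbL (by positivity)
        linarith only [h5]
      rw [← hGmdef, ← hT2def, hp2] at hsum
      linarith only [hsum, hp3, hp4]
    -- (W7)
    have hT1b : T1 ≤ dj*Yq + 3*(p*dj*(ν*n)) + gjq + 4*(ν*n) := by
      linarith only [hT12, hCallGm, hGmb]
    -- (W8) bound the lost tail mass, crossed tail vertices first
    have hT1pos : ∑ v : Fin n, (if ((PA v ∧ PT v) ∧ 0 < fR p (d'R v)) then gR p (d'R v) else 0)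
        ≤ T1 + 2*(ν*n) := by
      have hsplitT1 : T1 = (∑ v : Fin n,
            (if ((PA v ∧ PT v) ∧ 0 < fR p (d'R v)) then gR p (d'R v) else 0))
          + (∑ v : Fin n,
            (if ((PA v ∧ PT v) ∧ ¬ 0 < fR p (d'R v)) then gR p (d'R v) else 0)) := by
        rw [hT1def, ← Finset.sum_add_distrib]
        apply Finset.sum_congr rfl
        intro v _
        by_cases h1 : PA v ∧ PT v <;> by_cases h4 : 0 < fR p (d'R v) <;> simp [h1, h4]
      have hcross2 : -(2*(ν*n)) ≤ ∑ v : Fin n,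
          (if ((PA v ∧ PT v) ∧ ¬ 0 < fR p (d'R v)) then gR p (d'R v) else 0) := by
        have h1 : ∑ v : Fin n,
            (if ((PA v ∧ PT v) ∧ ¬ 0 < fR p (d'R v)) then -gR p (d'R v) else 0)
            ≤ ∑ v : Fin n, (if v ∉ S then 2 * lo v else 0) := by
          apply Finset.sum_le_sum
          intro v _
          apply ite_le_ite
          · intro h; exact (hPAsrv v h.1.1).1
          · intro h
            have hcross := neg_gR_cross hp0 hp1 (hsurv1 v (hPAsrv v h.1.1).2) (hdd v)
              (not_lt.mp h.2) (htailpos v h.1.2)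
            simp only [hlo]
            linarith only [hcross]
          · intro _ _
            linarith only [hlo0 v]
        rw [sum_ite_neg] at h1
        linarith only [h1, hbudget]
      linarith only [hsplitT1, hcross2]
    have hZb : dj * Zq ≤ 2*(T1 + 2*(ν*n)) + 2*(p*dj*(ν*n)) := by
      have hptZ : ∀ v : Fin n, (if ((PA v ∧ PT v) ∧ 0 < fR p (d'R v)) then dj * fR p (d'R v) else 0)
          ≤ (if (((PA v ∧ PT v) ∧ 0 < fR p (d'R v)) ∧ dR v ≤ 2*d'R v)
              then 2 * gR p (d'R v) else 0)
            + (if v ∉ S then 2*p*dj*lo v else 0) := by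
        intro v
        have hr4 : (0:ℝ) ≤ (if v ∉ S then 2*p*dj*lo v else 0) := by
          by_cases h : v ∉ S
          · rw [if_pos h]
            exact mul_nonneg (by positivity) (hlo0 v)
          · rw [if_neg h]
        have hr5 : (0:ℝ) ≤ (if (((PA v ∧ PT v) ∧ 0 < fR p (d'R v)) ∧ dR v ≤ 2*d'R v)
            then 2 * gR p (d'R v) else 0) := by
          by_cases h : ((PA v ∧ PT v) ∧ 0 < fR p (d'R v)) ∧ dR v ≤ 2*d'R v
          · rw [if_pos h]
            have := gR_nonneg (hd'0 v) h.1.2.le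
            linarith only [this]
          · rw [if_neg h]
        by_cases hc : (PA v ∧ PT v) ∧ 0 < fR p (d'R v)
        · rw [if_pos hc]
          by_cases hnear : dR v ≤ 2*d'R v
          · rw [if_pos ⟨hc, hnear⟩]
            have h1 : dj ≤ 2*d'R v := le_trans (htaild v hc.1.2) hnear
            have h2 : dj * fR p (d'R v) ≤ (2*d'R v) * fR p (d'R v) :=
              mul_le_mul_of_nonneg_right h1 hc.2.le
            have h3 : (2*d'R v) * fR p (d'R v) = 2 * gR p (d'R v) := by
              unfold gR; ring
            linarith only [h2, h3, hr4]
          · rw [if_neg (fun hh => hnear hh.2), if_pos (hPAsrv v hc.1.1).1]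
            have h1 : d'R v ≤ lo v := by
              simp only [hlo]
              push_neg at hnear
              linarith only [hnear]
            have h2 : fR p (d'R v) ≤ p * d'R v := fR_le p _ hp0.le
            have h3 : p * d'R v ≤ p * lo v := mul_le_mul_of_nonneg_left h1 hp0.le
            have h4 : dj * fR p (d'R v) ≤ dj * (p * lo v) :=
              mul_le_mul_of_nonneg_left (by linarith only [h2, h3]) hdj0.le
            have h5 : dj * (p*lo v) = p*dj*lo v := by ring
            have h6 : 0 ≤ p*dj*lo v := mul_nonneg (mul_nonneg hp0.le hdj0.le) (hlo0 v)
            have h7 : 2*p*dj*lo v = 2*(p*dj*lo v) := by ring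
            linarith only [h4, h5, h6, h7]
        · rw [if_neg hc]
          linarith only [hr4, hr5]
      have hZmul : dj * Zq = ∑ v : Fin n,
          (if ((PA v ∧ PT v) ∧ 0 < fR p (d'R v)) then dj * fR p (d'R v) else 0) := by
        rw [hZdef, Finset.mul_sum]
        apply Finset.sum_congr rfl
        intro v _
        by_cases h : (PA v ∧ PT v) ∧ 0 < fR p (d'R v) <;> simp [h]
      have hsumZ := Finset.sum_le_sum (fun v (_ : v ∈ (univ : Finset (Fin n))) => hptZ v)
      rw [Finset.sum_add_distrib] at hsumZ
      have hnearle : ∑ v : Fin n,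
          (if (((PA v ∧ PT v) ∧ 0 < fR p (d'R v)) ∧ dR v ≤ 2*d'R v)
            then 2 * gR p (d'R v) else 0)
          ≤ 2 * ∑ v : Fin n, (if ((PA v ∧ PT v) ∧ 0 < fR p (d'R v)) then gR p (d'R v) else 0) := by
        rw [Finset.mul_sum]
        apply Finset.sum_le_sum
        intro v _
        have e1 : 2 * (if ((PA v ∧ PT v) ∧ 0 < fR p (d'R v)) then gR p (d'R v) else 0)
            = (if ((PA v ∧ PT v) ∧ 0 < fR p (d'R v)) then 2 * gR p (d'R v) else 0) := by
          by_cases h : (PA v ∧ PT v) ∧ 0 < fR p (d'R v) <;> simp [h]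
        rw [e1]
        apply ite_le_ite
        · exact fun h => h.1
        · exact fun _ => le_refl _
        · intro h _
          have := gR_nonneg (hd'0 v) h.2.le
          linarith only [this]
      have hlobound2 : ∑ v : Fin n, (if v ∉ S then 2*p*dj*lo v else 0) ≤ 2*(p*dj*(ν*n)) := by
        rw [← Finset.sum_filter]
        have e2 : ∑ v ∈ univ.filter (fun v : Fin n => v ∉ S), 2*p*dj*lo v
            = 2*p*dj * ∑ v ∈ univ.filter (fun v : Fin n => v ∉ S), lo v := by
          rw [Finset.mul_sum]
        rw [e2]
        have h5 : 2*p*dj * ∑ v ∈ univ.filter (fun v : Fin n => v ∉ S), lo v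
            ≤ 2*p*dj * (ν*n) := mul_le_mul_of_nonneg_left hbL (by positivity)
        linarith only [h5]
      rw [hZmul]
      calc ∑ v : Fin n, (if ((PA v ∧ PT v) ∧ 0 < fR p (d'R v)) then dj * fR p (d'R v) else 0)
          ≤ _ := hsumZ
        _ ≤ 2 * (T1 + 2*(ν*n)) + 2*(p*dj*(ν*n)) := by
            have h8 := le_trans hnearle (by linarith only [hT1pos] :
              2 * ∑ v : Fin n, (if ((PA v ∧ PT v) ∧ 0 < fR p (d'R v)) then gR p (d'R v) else 0)
                ≤ 2 * (T1 + 2*(ν*n)))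
            linarith only [h8, hlobound2]
    -- cancel dj
    have hmul1 : p*dj*(ν*n) ≤ dj*(ν*n) := by
      have h1 : p*dj ≤ 1*dj := mul_le_mul_of_nonneg_right hp1 hdj0.le
      calc p*dj*(ν*n) ≤ 1*dj*(ν*n) := mul_le_mul_of_nonneg_right h1 hνn0.le
        _ = dj*(ν*n) := by ring
    have hmul2 : ν*n ≤ dj*(ν*n) := by
      calc ν*n = 1*(ν*n) := by ring
        _ ≤ dj*(ν*n) := mul_le_mul_of_nonneg_right hdj1 hνn0.le
    have hZq : Zq ≤ 2*Yq + 2*fj + 20*(ν*n) := by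
      have hexp : dj*(2*Yq + 2*fj + 20*(ν*n)) = 2*(dj*Yq) + 2*(dj*fj) + 20*(dj*(ν*n)) := by
        ring
      have hZdj : dj * Zq ≤ dj*(2*Yq + 2*fj + 20*(ν*n)) := by
        rw [hexp]
        linarith only [hZb, hT1b, hmul1, hmul2, hgjq]
      exact le_of_mul_le_mul_left hZdj hdj0
    -- (W9)
    have hXb : Xq ≤ Zq + 2*(ν*n) := by
      have hptX : ∀ v : Fin n, (if (PT v ∧ ¬ PO v) then fR p (dR v) else 0)
          ≤ (if ((PA v ∧ PT v) ∧ 0 < fR p (d'R v)) then fR p (d'R v) else 0)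
            + ((if v ∈ S then p * dR v else 0) + (if v ∉ S then p * lo v else 0)) := by
        intro v
        have hr1 : (0:ℝ) ≤ (if ((PA v ∧ PT v) ∧ 0 < fR p (d'R v)) then fR p (d'R v) else 0) := by
          by_cases h : (PA v ∧ PT v) ∧ 0 < fR p (d'R v)
          · rw [if_pos h]; exact h.2.le
          · rw [if_neg h]
        have hr3 : (0:ℝ) ≤ (if v ∈ S then p * dR v else 0) := by
          by_cases h : v ∈ S
          · rw [if_pos h]; exact mul_nonneg hp0.le (by linarith only [hd1 v])
          · rw [if_neg h]
        have hr4 : (0:ℝ) ≤ (if v ∉ S then p * lo v else 0) := by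
          by_cases h : v ∉ S
          · rw [if_pos h]; exact mul_nonneg hp0.le (hlo0 v)
          · rw [if_neg h]
        by_cases hc : PT v ∧ ¬ PO v
        · rw [if_pos hc]
          by_cases hS : v ∈ S
          · rw [if_pos hS]
            have := fR_le p (dR v) hp0.le
            linarith only [this, hr1, hr4]
          · rw [if_neg hS, if_pos hS]
            by_cases h0 : degDel G S v = 0
            · have hlov := hiso v h0
              have := fR_le p (dR v) hp0.le
              rw [hlov]
              linarith only [this, hr1, hr3]
            · have hPAv : PA v := by
                rcases hcoverAO v hS h0 with h | h
                · exact h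
                · exact absurd h hc.2
              have h7 := hfd v
              by_cases hpos' : 0 < fR p (d'R v)
              · rw [if_pos ⟨⟨hPAv, hc.1⟩, hpos'⟩]
                have h9 : 0 ≤ p * lo v := mul_nonneg hp0.le (hlo0 v)
                linarith only [h7, hr3]
              · rw [if_neg (fun hh : (PA v ∧ PT v) ∧ 0 < fR p (d'R v) => hpos' hh.2)]
                have hf'le : fR p (d'R v) ≤ 0 := not_lt.mp hpos'
                linarith only [h7, hf'le, hr3]
        · rw [if_neg hc]
          linarith only [hr1, hr3, hr4]
      have hsumX := Finset.sum_le_sum (fun v (_ : v ∈ (univ : Finset (Fin n))) => hptX v)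
      rw [Finset.sum_add_distrib] at hsumX
      have hb1' : ∑ v : Fin n, (if v ∈ S then p * dR v else 0) ≤ ν * n := by
        rw [← Finset.sum_filter, ← Finset.mul_sum]
        calc p * ∑ v ∈ univ.filter (fun v : Fin n => v ∈ S), dR v ≤ 1 * (ν * n) := by
              apply mul_le_mul hp1 hbS ?_ (by norm_num)
              exact Finset.sum_nonneg (fun v _ => by linarith only [hd1 v])
          _ = ν * n := by ring
      have hb2' : ∑ v : Fin n, (if v ∉ S then p * lo v else 0) ≤ ν * n := by
        rw [← Finset.sum_filter, ← Finset.mul_sum]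
        calc p * ∑ v ∈ univ.filter (fun v : Fin n => v ∉ S), lo v ≤ 1 * (ν * n) := by
              apply mul_le_mul hp1 hbL ?_ (by norm_num)
              exact Finset.sum_nonneg (fun v _ => hlo0 v)
          _ = ν * n := by ring
      have hsum2 : ∑ v : Fin n, ((if v ∈ S then p * dR v else 0) + (if v ∉ S then p * lo v else 0))
          = (∑ v : Fin n, (if v ∈ S then p * dR v else 0))
            + ∑ v : Fin n, (if v ∉ S then p * lo v else 0) := Finset.sum_add_distrib
      rw [← hXdef, ← hZdef] at hsumX
      rw [hsum2] at hsumX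
      linarith only [hsumX, hb1', hb2']
    -- (W11) X ≤ R
    have hXR : Xq ≤ Rr := by
      rw [hXdef, hRrdef]
      apply Finset.sum_le_sum
      intro v _
      apply ite_le_ite
      · exact fun h => h.1
      · exact fun _ => le_refl _
      · intro h _; exact (htailpos v h).le
    -- (W12)
    have hY0 : 0 ≤ Yq := by
      rw [hYdef]
      apply Finset.sum_nonneg
      intro v _
      by_cases h : PO v ∧ ¬ PT v
      · rw [if_pos h]; exact (hF3v v h.1).le
      · rw [if_neg h]
    -- (W10) lower bound for R'
    have hR'low : Rr - Xq - (ν*n) + Yq ≤ RDp n' D' p := by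
      rw [hR'eq]
      have hsplitPO : ∑ v : Fin n, (if PO v then fR p (d'R v) else 0)
          = (∑ v : Fin n, (if (PO v ∧ PT v) then fR p (d'R v) else 0)) + Yq := by
        rw [hYdef, ← Finset.sum_add_distrib]
        apply Finset.sum_congr rfl
        intro v _
        by_cases h1 : PO v <;> by_cases h2 : PT v <;> simp [h1, h2]
      have hident : ∑ v : Fin n, (if (PO v ∧ PT v) then fR p (d'R v) else 0)
          = (∑ v : Fin n, (if (PO v ∧ PT v) then fR p (dR v) else 0))
            - (∑ v : Fin n, (if (PO v ∧ PT v) then p * lo v else 0)) := by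
        rw [← Finset.sum_sub_distrib]
        apply Finset.sum_congr rfl
        intro v _
        by_cases h : PO v ∧ PT v
        · rw [if_pos h, if_pos h, if_pos h]
          linarith only [hfd v]
        · rw [if_neg h, if_neg h, if_neg h]
          ring
      have hsplitT : Rr = (∑ v : Fin n, (if (PO v ∧ PT v) then fR p (dR v) else 0)) + Xq := by
        rw [hRrdef, hXdef, ← Finset.sum_add_distrib]
        apply Finset.sum_congr rfl
        intro v _
        by_cases h1 : PO v <;> by_cases h2 : PT v <;> simp [h1, h2]
      have hplo : ∑ v : Fin n, (if (PO v ∧ PT v) then p * lo v else 0) ≤ ν*n := by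
        have h1 : ∑ v : Fin n, (if (PO v ∧ PT v) then p * lo v else 0)
            ≤ ∑ v : Fin n, (if v ∉ S then p * lo v else 0) := by
          apply Finset.sum_le_sum
          intro v _
          apply ite_le_ite
          · exact fun h => (hPOsrv v h.1).1
          · exact fun _ => le_refl _
          · intro _ _; exact mul_nonneg hp0.le (hlo0 v)
        have h2 : ∑ v : Fin n, (if v ∉ S then p * lo v else 0) ≤ ν * n := by
          rw [← Finset.sum_filter, ← Finset.mul_sum]
          calc p * ∑ v ∈ univ.filter (fun v : Fin n => v ∉ S), lo v ≤ 1 * (ν * n) := by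
                apply mul_le_mul hp1 hbL ?_ (by norm_num)
                exact Finset.sum_nonneg (fun v _ => hlo0 v)
            _ = ν * n := by ring
        linarith only [h1, h2]
      linarith only [hsplitPO, hident, hsplitT, hplo]
    -- (W13) 16 fj ≤ R
    have hfjR : 16*fj ≤ Rr := by
      have h1 : ∑ v : Fin n, (if (j ≤ (v:ℕ)+1 ∧ (v:ℕ) < j+15) then fj else 0) ≤ Rr := by
        rw [hRrdef]
        apply Finset.sum_le_sum
        intro v _
        apply ite_le_ite
        · intro h
          simp only [hPT]
          exact h.1
        · intro h
          exact htailf v (by simp only [hPT]; exact h.1)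
        · intro h _
          exact (htailpos v h).le
      have h2 : ∑ v : Fin n, (if (j ≤ (v:ℕ)+1 ∧ (v:ℕ) < j+15) then fj else 0) = 16 * fj := by
        rw [Fin.sum_univ_eq_sum_range (fun a => if (j ≤ a+1 ∧ a < j+15) then fj else 0) n]
        rw [← Finset.sum_filter]
        have e3 : (Finset.range n).filter (fun a => j ≤ a+1 ∧ a < j+15)
            = Finset.Ico (j-1) (j+15) := by
          ext a
          simp only [Finset.mem_filter, Finset.mem_range, Finset.mem_Ico]
          omega
        rw [e3, Finset.sum_const, Nat.card_Ico]
        have e4 : j + 15 - (j-1) = 16 := by omega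
        rw [e4, nsmul_eq_mul]
        norm_num
      linarith only [h1, h2]
    -- (W14) conclusion
    rcases le_or_gt Yq (Rr/8) with hYcase | hYcase
    · linarith only [hR'low, hXb, hZq, hfjR, hRr, h400, h50, hY0, hYcase, hνn0]
    · linarith only [hR'low, hXR, hYcase, h400, h50, hRr, hνn0]
  · -- ============ few tail vertices: use the top vertex ============
    set u : Fin n := ⟨n-1, by omega⟩ with hu
    have hmax : ∀ v, PT v → fR p (dR v) ≤ fR p (dR u) := by
      intro v _
      apply fR_mono hp0.le
      simp only [hdR]
      have : D v ≤ D u := hDmono (by rw [Fin.le_def]; have := v.isLt; simp only [hu, Fin.val_mk]; omega)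
      exact_mod_cast this
    have hcard16 : ((univ.filter (fun v : Fin n => PT v)).card : ℝ) ≤ 16 := by
      have h1 : (univ.filter (fun v : Fin n => PT v)).card ≤ (Finset.Ico (j-1) n).card := by
        apply Finset.card_le_card_of_injOn Fin.val
        · intro v hv
          rw [Finset.mem_coe, Finset.mem_filter] at hv
          rw [Finset.mem_coe, Finset.mem_Ico]
          have h2 := hv.2
          simp only [hPT] at h2
          have := v.isLt
          omega
        · intro a _ b _ hab
          exact Fin.val_injective hab
      rw [Nat.card_Ico] at h1
      have h3 : (univ.filter (fun v : Fin n => PT v)).card ≤ 16 := by omega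
      exact_mod_cast h3
    have hfu : 0 < fR p (dR u) := by
      by_contra hc
      push_neg at hc
      have hnp : ∑ v : Fin n, (if PT v then fR p (dR v) else 0) ≤ 0 := by
        apply Finset.sum_nonpos
        intro v _
        by_cases hPTv : PT v
        · rw [if_pos hPTv]; exact le_trans (hmax v hPTv) hc
        · rw [if_neg hPTv]
      have hμn : 0 < μ * n := by positivity
      linarith only [hRr, hnp, hμn]
    have hR16 : μ * n ≤ 16 * fR p (dR u) := by
      have h1 : ∑ v : Fin n, (if PT v then fR p (dR v) else 0)
          ≤ (univ.filter (fun v : Fin n => PT v)).card • fR p (dR u) := by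
        rw [← Finset.sum_filter]
        apply Finset.sum_le_card_nsmul
        intro v hv; exact hmax v (Finset.mem_filter.mp hv).2
      rw [nsmul_eq_mul] at h1
      have h2 : ((univ.filter (fun v : Fin n => PT v)).card : ℝ) * fR p (dR u)
          ≤ 16 * fR p (dR u) := mul_le_mul_of_nonneg_right hcard16 hfu.le
      linarith only [hRr, h1, h2]
    have hpdu : fR p (dR u) ≤ p * dR u := fR_le p _ hp0.le
    have hpduu : p * dR u ≤ dR u := by
      have h0 : 0 ≤ dR u := by linarith only [hd1 u]
      calc p * dR u ≤ 1 * dR u := mul_le_mul_of_nonneg_right hp1 h0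
        _ = dR u := one_mul _
    by_cases huS : u ∈ S
    · exfalso
      have h1 : dR u ≤ ∑ v ∈ S, ((D v:ℕ):ℝ) := by
        have := Finset.single_le_sum (f := fun v : Fin n => ((D v:ℕ):ℝ))
          (fun v _ => by positivity) huS
        simpa only [hdR] using this
      linarith only [hR16, hpdu, hpduu, h1, hSsum, h400, hνn0]
    · by_cases hu0 : degDel G S u = 0
      · exfalso
        have hd'u : d'R u = 0 := by simp only [hd'R, hu0]; simp
        have h1 : lo u ≤ ∑ v ∈ univ.filter (fun v : Fin n => v ∉ S), lo v := by
          apply Finset.single_le_sum (fun v _ => hlo0 v)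
          rw [Finset.mem_filter]; exact ⟨Finset.mem_univ _, huS⟩
        have h2 : lo u = dR u := by simp only [hlo]; linarith only [hd'u]
        linarith only [hR16, hpdu, hpduu, h1, h2, hbL, h400, hνn0]
      · -- u survives
        have hfu' : fR p (dR u) - fR p (d'R u) = p * lo u := by
          have := fR_diff p (dR u) (d'R u)
          simp only [hlo]
          linarith only [this]
        have hlou : lo u ≤ ν * n := by
          refine le_trans ?_ hbL
          apply Finset.single_le_sum (fun v _ => hlo0 v)
          rw [Finset.mem_filter]; exact ⟨Finset.mem_univ _, huS⟩
        have hplou : p * lo u ≤ lo u := by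
          calc p * lo u ≤ 1 * lo u := mul_le_mul_of_nonneg_right hp1 (hlo0 u)
            _ = lo u := one_mul _
        set i0 : Fin n' := ⟨n'-1, by omega⟩ with hi0def
        have hi0 : j' ≤ (i0:ℕ)+1 := by simp only [hi0def, Fin.val_mk]; omega
        have hR'ge : fR p ((D' i0 : ℕ):ℝ) ≤ RDp n' D' p := by
          unfold RDp
          rw [← hj']
          have hmem : i0 ∈ univ.filter (fun i : Fin n' => j' ≤ (i:ℕ)+1) := by
            rw [Finset.mem_filter]; exact ⟨Finset.mem_univ _, hi0⟩
          have h5 := Finset.single_le_sum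
            (f := fun i : Fin n' => p * ((D' i:ℝ) - 1) - 1) ?_ hmem
          · exact h5
          · intro i hi
            have h6 := hF3 i (Finset.mem_filter.mp hi).2
            simp only [fR] at h6
            show (0:ℝ) ≤ p * ((D' i:ℝ) - 1) - 1
            linarith only [h6]
        have hDu' : d'R u ≤ ((D' i0:ℕ):ℝ) := by
          have h1 : D' (σ.symm ⟨u, huS, hu0⟩) ≤ D' i0 := by
            apply hD'mono
            rw [Fin.le_def]
            have := (σ.symm ⟨u, huS, hu0⟩).isLt
            simp only [hi0def, Fin.val_mk]
            omega
          have h2 : ((D' (σ.symm ⟨u, huS, hu0⟩) : ℕ):ℝ) = d'R u := by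
            rw [hD' (σ.symm ⟨u, huS, hu0⟩)]
            simp only [Equiv.apply_symm_apply]
            rfl
          rw [← h2]
          exact_mod_cast h1
        have h5 : fR p (d'R u) ≤ fR p ((D' i0:ℕ):ℝ) := fR_mono hp0.le hDu'
        linarith only [hR'ge, h5, hfu', hR16, hlou, hplou, h400, h50, hνn0]
end
end

section
/- There exists n₀ ∈ ℕ such that the following holds for every n ≥ n₀. Let V = [n], let Z′ ⊆ V, let H′ be a graph with vertex set Z′, and let F′ be a bipartite graph with vertex partition (Z′, V∖Z′). Let u ∈ V and v ∈ V∖Z′ with uv ∉ E(F′). Let D be a feasible degree sequence on V such that (E1) d(u) ≤ n^{1/4}; (E2) every w ∈ V with d(w) > n^{1/4} satisfies w ∈ Z′ and d(w) = d_{H′}(w); and (E3) Σ_{w∈V∖Z′} (d(w) − d_{F′}(w)) ≥ n/20. If the event {G^D[Z′] = H′ and F′ ⊆ G^D} has positive probability, then P[uv ∈ E(G^D) | G^D[Z′] = H′, F′ ⊆ G^D] ≤ 40·n^{−1/2}. -/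
open Finset

noncomputable section
open scoped Classical

/-- The finset of all simple graphs on `Fin n` realising the degree sequence `D`
(vertex `v` has degree `D v`). -/
def graphsWithDegreeSeq (n : ℕ) (D : Fin n → ℕ) : Finset (SimpleGraph (Fin n)) :=
  Finset.univ.filter (fun G => ∀ v, G.degree v = D v)

/-- Conditional probability `P[A | B]` under the uniform distribution on simple graphs
with degree sequence `D`. -/
def uniformCondProb (n : ℕ) (D : Fin n → ℕ) (A B : SimpleGraph (Fin n) → Prop) : ℝ :=
  (((graphsWithDegreeSeq n D).filter (fun G => A G ∧ B G)).card : ℝ) /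
    (((graphsWithDegreeSeq n D).filter B).card : ℝ)

variable {n : ℕ}

/-- pair `{a,b}` equals pair `{c,d}` -/
def pEq (a b c d : Fin n) : Prop := (a = c ∧ b = d) ∨ (a = d ∧ b = c)

lemma pEq_symm {a b c d : Fin n} (h : pEq b a c d) : pEq a b c d :=
  h.elim (fun h => Or.inr ⟨h.2, h.1⟩) (fun h => Or.inl ⟨h.2, h.1⟩)

def swapG (G : SimpleGraph (Fin n)) (u v x y : Fin n) : SimpleGraph (Fin n) where
  Adj a b := a ≠ b ∧ ((G.Adj a b ∧ ¬ pEq a b u v ∧ ¬ pEq a b x y) ∨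
      pEq a b u x ∨ pEq a b v y)
  symm := ⟨fun a b h =>
    ⟨h.1.symm, h.2.imp
      (fun hh => ⟨hh.1.symm, fun c => hh.2.1 (pEq_symm c), fun c => hh.2.2 (pEq_symm c)⟩)
      (fun hh => hh.imp pEq_symm pEq_symm)⟩⟩
  loopless := ⟨by intro a h; exact h.1 rfl⟩

lemma swapG_adj (G : SimpleGraph (Fin n)) (u v x y a b : Fin n) :
    (swapG G u v x y).Adj a b ↔ a ≠ b ∧ ((G.Adj a b ∧ ¬ pEq a b u v ∧ ¬ pEq a b x y) ∨
      pEq a b u x ∨ pEq a b v y) := Iff.rfl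

section lemmas
variable {G : SimpleGraph (Fin n)} {u v x y : Fin n}
  (huv : G.Adj u v) (hxy : G.Adj x y) (hux : ¬ G.Adj u x) (hvy : ¬ G.Adj v y)
  (hux' : u ≠ x) (huy' : u ≠ y) (hvx' : v ≠ x) (hvy' : v ≠ y)

include huv hxy hux hvy hux' huy' hvx' hvy'

lemma swapG_nbr_of_ne (w : Fin n) (h1 : w ≠ u) (h2 : w ≠ v) (h3 : w ≠ x) (h4 : w ≠ y) :
    (swapG G u v x y).neighborFinset w = G.neighborFinset w := by
  ext b
  have hb : G.Adj w b → w ≠ b := fun h => G.ne_of_adj h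
  simp only [SimpleGraph.mem_neighborFinset, swapG_adj, pEq]
  tauto

lemma swapG_nbr_u :
    (swapG G u v x y).neighborFinset u = insert x ((G.neighborFinset u).erase v) := by
  ext b
  have hb : G.Adj u b → u ≠ b := fun h => G.ne_of_adj h
  have h0 : u ≠ v := G.ne_of_adj huv
  simp only [SimpleGraph.mem_neighborFinset, swapG_adj, pEq, mem_insert, mem_erase]
  constructor
  · rintro ⟨hne, ⟨hA, h1, h2⟩ | (⟨e1, e2⟩ | ⟨e1, e2⟩) | (⟨e1, e2⟩ | ⟨e1, e2⟩)⟩ <;>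
      subst_vars <;> tauto
  · intro h
    rcases h with rfl | ⟨hne2, hA⟩ <;> constructor <;> tauto

lemma swapG_nbr_v :
    (swapG G u v x y).neighborFinset v = insert y ((G.neighborFinset v).erase u) := by
  ext b
  have hb : G.Adj v b → v ≠ b := fun h => G.ne_of_adj h
  have h0 : u ≠ v := G.ne_of_adj huv
  have h0' : v ≠ u := h0.symm
  have hadj : G.Adj v u := huv.symm
  simp only [SimpleGraph.mem_neighborFinset, swapG_adj, pEq, mem_insert, mem_erase]
  constructor
  · rintro ⟨hne, ⟨hA, h1, h2⟩ | (⟨e1, e2⟩ | ⟨e1, e2⟩) | (⟨e1, e2⟩ | ⟨e1, e2⟩)⟩ <;>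
      subst_vars <;> tauto
  · intro h
    rcases h with rfl | ⟨hne2, hA⟩ <;> constructor <;> tauto

lemma swapG_nbr_x :
    (swapG G u v x y).neighborFinset x = insert u ((G.neighborFinset x).erase y) := by
  ext b
  have hb : G.Adj x b → x ≠ b := fun h => G.ne_of_adj h
  have h0 : x ≠ y := G.ne_of_adj hxy
  have hxu : x ≠ u := hux'.symm
  have hxv : x ≠ v := hvx'.symm
  simp only [SimpleGraph.mem_neighborFinset, swapG_adj, pEq, mem_insert, mem_erase]
  constructor
  · rintro ⟨hne, ⟨hA, h1, h2⟩ | (⟨e1, e2⟩ | ⟨e1, e2⟩) | (⟨e1, e2⟩ | ⟨e1, e2⟩)⟩ <;>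
      subst_vars <;> tauto
  · intro h
    rcases h with rfl | ⟨hne2, hA⟩ <;> constructor <;> tauto

lemma swapG_nbr_y :
    (swapG G u v x y).neighborFinset y = insert v ((G.neighborFinset y).erase x) := by
  ext b
  have hb : G.Adj y b → y ≠ b := fun h => G.ne_of_adj h
  have h0 : x ≠ y := G.ne_of_adj hxy
  have hyu : y ≠ u := huy'.symm
  have hyv : y ≠ v := hvy'.symm
  have hyx : y ≠ x := h0.symm
  have hadj : G.Adj y x := hxy.symm
  simp only [SimpleGraph.mem_neighborFinset, swapG_adj, pEq, mem_insert, mem_erase]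
  constructor
  · rintro ⟨hne, ⟨hA, h1, h2⟩ | (⟨e1, e2⟩ | ⟨e1, e2⟩) | (⟨e1, e2⟩ | ⟨e1, e2⟩)⟩ <;>
      subst_vars <;> tauto
  · intro h
    rcases h with rfl | ⟨hne2, hA⟩ <;> constructor <;> tauto

lemma swapG_degree (w : Fin n) : (swapG G u v x y).degree w = G.degree w := by
  classical
  rcases eq_or_ne w u with rfl | h1
  · rw [SimpleGraph.degree, SimpleGraph.degree,
      swapG_nbr_u huv hxy hux hvy hux' huy' hvx' hvy',
      card_insert_of_notMem (fun hc => hux (by simpa [SimpleGraph.mem_neighborFinset] using (mem_erase.1 hc).2)),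
      card_erase_of_mem (by simp [SimpleGraph.mem_neighborFinset, huv])]
    have : 0 < (G.neighborFinset w).card :=
      card_pos.2 ⟨v, by simp [SimpleGraph.mem_neighborFinset, huv]⟩
    omega
  rcases eq_or_ne w v with rfl | h2
  · rw [SimpleGraph.degree, SimpleGraph.degree,
      swapG_nbr_v huv hxy hux hvy hux' huy' hvx' hvy',
      card_insert_of_notMem (fun hc => hvy (by simpa [SimpleGraph.mem_neighborFinset] using (mem_erase.1 hc).2)),
      card_erase_of_mem (by simp [SimpleGraph.mem_neighborFinset, huv.symm])]
    have : 0 < (G.neighborFinset w).card :=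
      card_pos.2 ⟨u, by simp [SimpleGraph.mem_neighborFinset, huv.symm]⟩
    omega
  rcases eq_or_ne w x with rfl | h3
  · rw [SimpleGraph.degree, SimpleGraph.degree,
      swapG_nbr_x huv hxy hux hvy hux' huy' hvx' hvy',
      card_insert_of_notMem (fun hc => hux
        ((SimpleGraph.mem_neighborFinset _ _ _).1 (mem_erase.1 hc).2).symm),
      card_erase_of_mem (by simp [SimpleGraph.mem_neighborFinset, hxy])]
    have : 0 < (G.neighborFinset w).card :=
      card_pos.2 ⟨y, by simp [SimpleGraph.mem_neighborFinset, hxy]⟩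
    omega
  rcases eq_or_ne w y with rfl | h4
  · rw [SimpleGraph.degree, SimpleGraph.degree,
      swapG_nbr_y huv hxy hux hvy hux' huy' hvx' hvy',
      card_insert_of_notMem (fun hc => hvy
        ((SimpleGraph.mem_neighborFinset _ _ _).1 (mem_erase.1 hc).2).symm),
      card_erase_of_mem (by simp [SimpleGraph.mem_neighborFinset, hxy.symm])]
    have : 0 < (G.neighborFinset w).card :=
      card_pos.2 ⟨x, by simp [SimpleGraph.mem_neighborFinset, hxy.symm]⟩
    omega
  · rw [SimpleGraph.degree, SimpleGraph.degree,
      swapG_nbr_of_ne huv hxy hux hvy hux' huy' hvx' hvy' w h1 h2 h3 h4]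

lemma swapG_swapG : swapG (swapG G u v x y) u x v y = G := by
  have h0 : u ≠ v := G.ne_of_adj huv
  have h5 : x ≠ y := G.ne_of_adj hxy
  ext a b
  have hb : G.Adj a b → a ≠ b := fun h => G.ne_of_adj h
  have f1 : pEq a b u v → G.Adj a b := by
    rintro (⟨rfl, rfl⟩ | ⟨rfl, rfl⟩); exacts [huv, huv.symm]
  have f2 : pEq a b x y → G.Adj a b := by
    rintro (⟨rfl, rfl⟩ | ⟨rfl, rfl⟩); exacts [hxy, hxy.symm]
  have f3 : pEq a b u x → ¬ G.Adj a b := by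
    rintro (⟨rfl, rfl⟩ | ⟨rfl, rfl⟩) h; exacts [hux h, hux h.symm]
  have f4 : pEq a b v y → ¬ G.Adj a b := by
    rintro (⟨rfl, rfl⟩ | ⟨rfl, rfl⟩) h; exacts [hvy h, hvy h.symm]
  simp only [swapG_adj]
  constructor
  · rintro ⟨hab, h⟩
    tauto
  · intro h
    refine ⟨hb h, ?_⟩
    by_cases e1 : pEq a b u v
    · tauto
    by_cases e2 : pEq a b x y
    · tauto
    · exact Or.inl ⟨⟨hb h, Or.inl ⟨h, e1, e2⟩⟩, fun c => f3 c h, fun c => f4 c h⟩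

end lemmas

section counting
variable {Z' : Finset (Fin n)} {H' F' : SimpleGraph (Fin n)} {u v : Fin n} {D : Fin n → ℕ}
  {G : SimpleGraph (Fin n)}

/-- The good pairs for the switching. -/
def goodPairs (Z' : Finset (Fin n)) (F' G : SimpleGraph (Fin n)) (u v : Fin n) :
    Finset (Fin n × Fin n) :=
  univ.filter (fun p => p.1 ∉ Z' ∧ G.Adj p.1 p.2 ∧ ¬ F'.Adj p.1 p.2 ∧ ¬ G.Adj u p.1 ∧
    ¬ G.Adj v p.2 ∧ p.1 ≠ u ∧ p.1 ≠ v ∧ p.2 ≠ u ∧ p.2 ≠ v)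

lemma card_base (hev2 : F' ≤ G) :
    (univ.filter (fun p : Fin n × Fin n => p.1 ∉ Z' ∧ G.Adj p.1 p.2 ∧ ¬ F'.Adj p.1 p.2)).card
      = ∑ x ∈ univ.filter (fun w => w ∉ Z'), (G.degree x - F'.degree x) := by
  classical
  rw [Finset.card_eq_sum_card_fiberwise (f := Prod.fst)
    (t := univ.filter (fun w => w ∉ Z')) (fun p hp => by
      simp only [coe_filter, mem_filter, Set.mem_setOf_eq, mem_univ, true_and] at hp ⊢; exact hp.1)]
  refine Finset.sum_congr rfl (fun x hx => ?_)
  have : ((univ.filter (fun p : Fin n × Fin n => p.1 ∉ Z' ∧ G.Adj p.1 p.2 ∧ ¬ F'.Adj p.1 p.2)).filter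
      (fun p => p.1 = x)).card = (G.neighborFinset x \ F'.neighborFinset x).card := by
    refine Finset.card_bij (fun p _ => p.2) ?_ ?_ ?_
    · rintro p hp
      simp only [mem_filter, mem_univ, true_and] at hp
      obtain ⟨⟨-, h2, h3⟩, h4⟩ := hp
      subst h4
      simp [SimpleGraph.mem_neighborFinset, h2, h3]
    · rintro p hp q hq hpq
      simp only [mem_filter, mem_univ, true_and] at hp hq
      exact Prod.ext (hp.2.trans hq.2.symm) hpq
    · rintro b hb
      simp only [mem_sdiff, SimpleGraph.mem_neighborFinset] at hb
      refine ⟨(x, b), ?_, rfl⟩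
      simp only [mem_filter, mem_univ, true_and] at hx ⊢
      exact ⟨⟨hx, hb.1, hb.2⟩, trivial⟩
  rw [this, card_sdiff_of_subset (fun b hb => ?_), SimpleGraph.card_neighborFinset_eq_degree,
    SimpleGraph.card_neighborFinset_eq_degree]
  simp only [SimpleGraph.mem_neighborFinset] at hb ⊢
  exact hev2 hb

/-- vertices with a neighbour outside `Z'` have small degree. -/
lemma card_nbr_outside (hH' : ∀ a b, H'.Adj a b → a ∈ Z' ∧ b ∈ Z')
    (hdeg : ∀ w, G.degree w = D w)
    (hev1 : ∀ a b, a ∈ Z' → b ∈ Z' → (G.Adj a b ↔ H'.Adj a b))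
    (hE2 : ∀ w : Fin n, (n : ℝ) ^ ((1 : ℝ) / 4) < (D w : ℝ) → w ∈ Z' ∧ H'.degree w = D w)
    (y : Fin n) :
    (((G.neighborFinset y).filter (fun a => a ∉ Z')).card : ℝ) ≤ (n : ℝ) ^ ((1 : ℝ) / 4) := by
  classical
  by_cases hy : (n : ℝ) ^ ((1 : ℝ) / 4) < (D y : ℝ)
  · obtain ⟨hyZ, hyH⟩ := hE2 y hy
    have hsub : (G.neighborFinset y).filter (fun a => a ∈ Z') = H'.neighborFinset y := by
      ext b
      simp only [mem_filter, SimpleGraph.mem_neighborFinset]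
      constructor
      · rintro ⟨h1, h2⟩; exact (hev1 y b hyZ h2).1 h1
      · intro h; exact ⟨(hev1 y b hyZ (hH' y b h).2).2 h, (hH' y b h).2⟩
    have hcard : ((G.neighborFinset y).filter (fun a => a ∈ Z')).card = (G.neighborFinset y).card := by
      rw [hsub, SimpleGraph.card_neighborFinset_eq_degree, SimpleGraph.card_neighborFinset_eq_degree,
        hyH, hdeg y]
    have hall : (G.neighborFinset y).filter (fun a => a ∈ Z') = G.neighborFinset y :=
      Finset.eq_of_subset_of_card_le (filter_subset _ _) (le_of_eq hcard.symm)
    have : (G.neighborFinset y).filter (fun a => a ∉ Z') = ∅ := by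
      rw [Finset.filter_eq_empty_iff]
      intro b hb hbZ
      exact hbZ (by have := hall ▸ hb; exact (mem_filter.1 ((hall.symm) ▸ hb)).2)
    rw [this]
    simp only [card_empty, Nat.cast_zero]
    positivity
  · push_neg at hy
    calc (((G.neighborFinset y).filter (fun a => a ∉ Z')).card : ℝ)
        ≤ ((G.neighborFinset y).card : ℝ) := by
          exact_mod_cast Finset.card_le_card (filter_subset _ _)
      _ = (D y : ℝ) := by rw [SimpleGraph.card_neighborFinset_eq_degree, hdeg y]
      _ ≤ _ := hy

end counting

section counting2
variable {Z' : Finset (Fin n)} {H' F' : SimpleGraph (Fin n)} {u v : Fin n} {D : Fin n → ℕ}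
  {G : SimpleGraph (Fin n)}

lemma rpow_quarter_sq (hn : 1 ≤ n) :
    (n : ℝ) ^ ((1 : ℝ) / 4) * (n : ℝ) ^ ((1 : ℝ) / 4) = (n : ℝ) ^ ((1 : ℝ) / 2) := by
  rw [← Real.rpow_add (by exact_mod_cast hn : (0:ℝ) < n)]
  norm_num

lemma rpow_quarter_le_half (hn : 1 ≤ n) :
    (n : ℝ) ^ ((1 : ℝ) / 4) ≤ (n : ℝ) ^ ((1 : ℝ) / 2) := by
  apply Real.rpow_le_rpow_of_exponent_le (by exact_mod_cast hn) (by norm_num)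

lemma rpow_half_sq (hn : 1 ≤ n) :
    (n : ℝ) ^ ((1 : ℝ) / 2) * (n : ℝ) ^ ((1 : ℝ) / 2) = (n : ℝ) := by
  rw [← Real.rpow_add (by exact_mod_cast hn : (0:ℝ) < n)]
  norm_num

lemma sqrt_ge (hn : 57600 ≤ n) : (240 : ℝ) ≤ (n : ℝ) ^ ((1 : ℝ) / 2) := by
  have h1 : (1:ℕ) ≤ n := le_trans (by norm_num) hn
  have h2 : (57600 : ℝ) ≤ (n : ℝ) := by exact_mod_cast hn
  have h3 : (0:ℝ) ≤ (n : ℝ) ^ ((1 : ℝ) / 2) := Real.rpow_nonneg (by positivity) _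
  nlinarith [rpow_half_sq h1]

lemma goodPairs_card_lb (hn : 57600 ≤ n)
    (hH' : ∀ a b, H'.Adj a b → a ∈ Z' ∧ b ∈ Z')
    (hvZ : v ∉ Z')
    (hdeg : ∀ w, G.degree w = D w)
    (hev1 : ∀ a b, a ∈ Z' → b ∈ Z' → (G.Adj a b ↔ H'.Adj a b))
    (hev2 : F' ≤ G)
    (hE1 : (D u : ℝ) ≤ (n : ℝ) ^ ((1 : ℝ) / 4))
    (hE2 : ∀ w : Fin n, (n : ℝ) ^ ((1 : ℝ) / 4) < (D w : ℝ) → w ∈ Z' ∧ H'.degree w = D w)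
    (hE3 : (n : ℝ) / 20 ≤ (∑ w ∈ Finset.univ.filter (fun w => w ∉ Z'),
        ((D w : ℝ) - (F'.degree w : ℝ)))) :
    (n : ℝ) / 40 ≤ ((goodPairs Z' F' G u v).card : ℝ) := by
  classical
  set K : ℝ := (n : ℝ) ^ ((1 : ℝ) / 4) with hK
  have h1n : (1:ℕ) ≤ n := le_trans (by norm_num) hn
  have hK0 : 0 ≤ K := Real.rpow_nonneg (by positivity) _
  -- each vertex outside Z' has small degree
  have hsmall : ∀ w : Fin n, w ∉ Z' → (D w : ℝ) ≤ K := by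
    intro w hw
    by_contra hlt
    push_neg at hlt
    exact hw (hE2 w hlt).1
  have hdegF : ∀ w : Fin n, F'.degree w ≤ D w := by
    intro w
    rw [← hdeg w, SimpleGraph.degree, SimpleGraph.degree]
    refine Finset.card_le_card (fun b hb => ?_)
    rw [SimpleGraph.mem_neighborFinset] at hb ⊢
    exact hev2 hb
  set N : Finset (Fin n × Fin n) :=
    univ.filter (fun p : Fin n × Fin n => p.1 ∉ Z' ∧ G.Adj p.1 p.2 ∧ ¬ F'.Adj p.1 p.2) with hN
  -- N has many elements
  have hNcard : (n : ℝ) / 20 ≤ (N.card : ℝ) := by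
    rw [hN, card_base hev2]
    refine le_trans hE3 (le_of_eq ?_)
    rw [Nat.cast_sum]
    refine Finset.sum_congr rfl (fun x hx => ?_)
    rw [Nat.cast_sub (by rw [hdeg x] at *; exact hdegF x), hdeg x]
  -- bad sets
  set b1 : Finset (Fin n × Fin n) := N.filter (fun p => p.1 = u ∨ G.Adj u p.1) with hb1
  set b2 : Finset (Fin n × Fin n) := N.filter (fun p => p.1 = v) with hb2
  set b3 : Finset (Fin n × Fin n) := N.filter (fun p => p.2 = u) with hb3
  set b4 : Finset (Fin n × Fin n) := N.filter (fun p => p.2 = v ∨ G.Adj v p.2) with hb4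
  have hsub : N \ (b1 ∪ b2 ∪ b3 ∪ b4) ⊆ goodPairs Z' F' G u v := by
    intro p hp
    obtain ⟨hpN, hbad⟩ := mem_sdiff.1 hp
    have n1 : p ∉ b1 := fun h => hbad (mem_union_left _ (mem_union_left _ (mem_union_left _ h)))
    have n2 : p ∉ b2 := fun h => hbad (mem_union_left _ (mem_union_left _ (mem_union_right _ h)))
    have n3 : p ∉ b3 := fun h => hbad (mem_union_left _ (mem_union_right _ h))
    have n4 : p ∉ b4 := fun h => hbad (mem_union_right _ h)
    simp only [hb1, hb2, hb3, hb4, mem_filter, not_and, not_or] at n1 n2 n3 n4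
    have c1 := n1 hpN
    have c2 := n2 hpN
    have c3 := n3 hpN
    have c4 := n4 hpN
    simp only [hN, mem_filter, mem_univ, true_and] at hpN
    obtain ⟨q1, q2, q3⟩ := hpN
    simp only [goodPairs, mem_filter, mem_univ, true_and]
    exact ⟨q1, q2, q3, c1.2, c4.2, c1.1, c2, c3, c4.1⟩
  -- bounds for the bad sets
  have hcb1 : (b1.card : ℝ) ≤ (K + 1) * K := by
    have hsub1 : b1 ⊆ ((insert u (G.neighborFinset u)).filter (fun w => w ∉ Z')).biUnion
        (fun x => {x} ×ˢ G.neighborFinset x) := by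
      intro p hp
      simp only [hb1, mem_filter, hN, mem_univ, true_and] at hp
      obtain ⟨⟨q1, q2, q3⟩, h⟩ := hp
      rw [mem_biUnion]
      refine ⟨p.1, ?_, ?_⟩
      · simp only [mem_filter, mem_insert, SimpleGraph.mem_neighborFinset]
        exact ⟨h.imp id id, q1⟩
      · rw [mem_product]
        simp [SimpleGraph.mem_neighborFinset, q2]
    calc (b1.card : ℝ) ≤ ((((insert u (G.neighborFinset u)).filter (fun w => w ∉ Z')).biUnion
        (fun x => {x} ×ˢ G.neighborFinset x)).card : ℝ) := by
          exact_mod_cast Finset.card_le_card hsub1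
      _ ≤ ∑ x ∈ (insert u (G.neighborFinset u)).filter (fun w => w ∉ Z'),
            (({x} ×ˢ G.neighborFinset x).card : ℝ) := by
          exact_mod_cast Finset.card_biUnion_le
      _ ≤ ∑ x ∈ (insert u (G.neighborFinset u)).filter (fun w => w ∉ Z'), K := by
          refine Finset.sum_le_sum (fun x hx => ?_)
          simp only [mem_filter] at hx
          rw [Finset.card_product, card_singleton, one_mul,
            SimpleGraph.card_neighborFinset_eq_degree, hdeg x]
          exact hsmall x hx.2
      _ = (((insert u (G.neighborFinset u)).filter (fun w => w ∉ Z')).card : ℝ) * K := by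
          rw [Finset.sum_const, nsmul_eq_mul]
      _ ≤ (K + 1) * K := by
          refine mul_le_mul_of_nonneg_right ?_ hK0
          calc ((((insert u (G.neighborFinset u)).filter (fun w => w ∉ Z')).card : ℝ))
              ≤ ((insert u (G.neighborFinset u)).card : ℝ) := by
                exact_mod_cast Finset.card_le_card (filter_subset _ _)
            _ ≤ ((G.neighborFinset u).card : ℝ) + 1 := by
                exact_mod_cast Finset.card_insert_le _ _
            _ = (D u : ℝ) + 1 := by rw [SimpleGraph.card_neighborFinset_eq_degree, hdeg u]
            _ ≤ K + 1 := by linarith [hE1]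
  have hcb2 : (b2.card : ℝ) ≤ K := by
    have hsub2 : b2 ⊆ {v} ×ˢ G.neighborFinset v := by
      intro p hp
      simp only [hb2, mem_filter, hN, mem_univ, true_and] at hp
      obtain ⟨⟨q1, q2, q3⟩, h⟩ := hp
      rw [mem_product]
      constructor
      · simp [h]
      · rw [SimpleGraph.mem_neighborFinset, ← h]; exact q2
    calc (b2.card : ℝ) ≤ (({v} ×ˢ G.neighborFinset v).card : ℝ) := by
          exact_mod_cast Finset.card_le_card hsub2
      _ = (D v : ℝ) := by
          rw [Finset.card_product, card_singleton, one_mul,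
            SimpleGraph.card_neighborFinset_eq_degree, hdeg v]
      _ ≤ K := hsmall v hvZ
  have hcb3 : (b3.card : ℝ) ≤ K := by
    have hsub3 : b3 ⊆ G.neighborFinset u ×ˢ {u} := by
      intro p hp
      simp only [hb3, mem_filter, hN, mem_univ, true_and] at hp
      obtain ⟨⟨q1, q2, q3⟩, h⟩ := hp
      rw [mem_product]
      constructor
      · rw [SimpleGraph.mem_neighborFinset]
        exact (h ▸ q2).symm
      · simp [h]
    calc (b3.card : ℝ) ≤ ((G.neighborFinset u ×ˢ {u}).card : ℝ) := by
          exact_mod_cast Finset.card_le_card hsub3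
      _ = (D u : ℝ) := by
          rw [Finset.card_product, card_singleton, mul_one,
            SimpleGraph.card_neighborFinset_eq_degree, hdeg u]
      _ ≤ K := hE1
  have hcb4 : (b4.card : ℝ) ≤ (K + 1) * K := by
    have hsub4 : b4 ⊆ (insert v (G.neighborFinset v)).biUnion
        (fun y => ((G.neighborFinset y).filter (fun a => a ∉ Z')) ×ˢ {y}) := by
      intro p hp
      simp only [hb4, mem_filter, hN, mem_univ, true_and] at hp
      obtain ⟨⟨q1, q2, q3⟩, h⟩ := hp
      rw [mem_biUnion]
      refine ⟨p.2, ?_, ?_⟩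
      · simp only [mem_insert, SimpleGraph.mem_neighborFinset]
        exact h.imp id id
      · rw [mem_product]
        refine ⟨?_, by simp⟩
        simp only [mem_filter, SimpleGraph.mem_neighborFinset]
        exact ⟨q2.symm, q1⟩
    calc (b4.card : ℝ) ≤ (((insert v (G.neighborFinset v)).biUnion
        (fun y => ((G.neighborFinset y).filter (fun a => a ∉ Z')) ×ˢ {y})).card : ℝ) := by
          exact_mod_cast Finset.card_le_card hsub4
      _ ≤ ∑ y ∈ insert v (G.neighborFinset v),
            (((((G.neighborFinset y).filter (fun a => a ∉ Z'))) ×ˢ ({y} : Finset (Fin n))).card : ℝ) := by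
          exact_mod_cast Finset.card_biUnion_le
      _ ≤ ∑ y ∈ insert v (G.neighborFinset v), K := by
          refine Finset.sum_le_sum (fun y _ => ?_)
          rw [Finset.card_product, card_singleton, mul_one]
          exact card_nbr_outside hH' hdeg hev1 hE2 y
      _ = ((insert v (G.neighborFinset v)).card : ℝ) * K := by
          rw [Finset.sum_const, nsmul_eq_mul]
      _ ≤ (K + 1) * K := by
          refine mul_le_mul_of_nonneg_right ?_ hK0
          calc ((insert v (G.neighborFinset v)).card : ℝ)
              ≤ ((G.neighborFinset v).card : ℝ) + 1 := by
                exact_mod_cast Finset.card_insert_le _ _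
            _ = (D v : ℝ) + 1 := by rw [SimpleGraph.card_neighborFinset_eq_degree, hdeg v]
            _ ≤ K + 1 := by linarith [hsmall v hvZ]
  -- combine
  have hcard : (N.card : ℝ) ≤ ((goodPairs Z' F' G u v).card : ℝ) + ((b1 ∪ b2 ∪ b3 ∪ b4).card : ℝ) := by
    have h1 : N.card ≤ (N \ (b1 ∪ b2 ∪ b3 ∪ b4)).card + (b1 ∪ b2 ∪ b3 ∪ b4).card := by
      refine le_trans (Finset.card_le_card (fun p hp => ?_)) (Finset.card_union_le _ _)
      by_cases h : p ∈ b1 ∪ b2 ∪ b3 ∪ b4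
      · exact Finset.mem_union_right _ h
      · exact Finset.mem_union_left _ (mem_sdiff.2 ⟨hp, h⟩)
    have h2 : (N \ (b1 ∪ b2 ∪ b3 ∪ b4)).card ≤ (goodPairs Z' F' G u v).card :=
      Finset.card_le_card hsub
    exact_mod_cast le_trans h1 (by omega)
  have hU : ((b1 ∪ b2 ∪ b3 ∪ b4).card : ℝ) ≤ 2 * (K + 1) * K + 2 * K := by
    have := Finset.card_union_le (b1 ∪ b2 ∪ b3) b4
    have := Finset.card_union_le (b1 ∪ b2) b3
    have := Finset.card_union_le b1 b2
    have hle : ((b1 ∪ b2 ∪ b3 ∪ b4).card : ℝ) ≤ (b1.card : ℝ) + b2.card + b3.card + b4.card := by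
      push_cast
      have a1 : ((b1 ∪ b2 ∪ b3 ∪ b4).card : ℝ) ≤ ((b1 ∪ b2 ∪ b3).card : ℝ) + (b4.card : ℝ) := by
        exact_mod_cast Finset.card_union_le _ _
      have a2 : ((b1 ∪ b2 ∪ b3).card : ℝ) ≤ ((b1 ∪ b2).card : ℝ) + (b3.card : ℝ) := by
        exact_mod_cast Finset.card_union_le _ _
      have a3 : ((b1 ∪ b2).card : ℝ) ≤ (b1.card : ℝ) + (b2.card : ℝ) := by
        exact_mod_cast Finset.card_union_le _ _
      linarith
    linarith
  -- numeric conclusion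
  have hKsq : K * K = (n : ℝ) ^ ((1 : ℝ) / 2) := rpow_quarter_sq h1n
  have hKle : K ≤ (n : ℝ) ^ ((1 : ℝ) / 2) := rpow_quarter_le_half h1n
  have hs240 : (240 : ℝ) ≤ (n : ℝ) ^ ((1 : ℝ) / 2) := sqrt_ge hn
  have hssq : (n : ℝ) ^ ((1 : ℝ) / 2) * (n : ℝ) ^ ((1 : ℝ) / 2) = (n : ℝ) := rpow_half_sq h1n
  set s : ℝ := (n : ℝ) ^ ((1 : ℝ) / 2) with hs
  have hbad : 2 * (K + 1) * K + 2 * K ≤ 6 * s := by nlinarith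
  have h6s : 6 * s ≤ (n : ℝ) / 40 := by nlinarith
  linarith
end counting2

section main
variable {Z' : Finset (Fin n)} {H' F' : SimpleGraph (Fin n)} {u v : Fin n} {D : Fin n → ℕ}

lemma swap_closure
    (hH' : ∀ a b, H'.Adj a b → a ∈ Z' ∧ b ∈ Z')
    (hvZ : v ∉ Z') (hFuv : ¬ F'.Adj u v)
    {G : SimpleGraph (Fin n)}
    (hG : G ∈ (graphsWithDegreeSeq n D).filter
      (fun G => G.Adj u v ∧ (∀ a b, a ∈ Z' → b ∈ Z' → (G.Adj a b ↔ H'.Adj a b)) ∧ F' ≤ G))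
    {p : Fin n × Fin n} (hp : p ∈ goodPairs Z' F' G u v) :
    (swapG G u v p.1 p.2) ∈ (graphsWithDegreeSeq n D).filter
      (fun G => (∀ a b, a ∈ Z' → b ∈ Z' → (G.Adj a b ↔ H'.Adj a b)) ∧ F' ≤ G)
    ∧ (swapG G u v p.1 p.2).Adj u p.1 ∧ (swapG G u v p.1 p.2).Adj v p.2
    ∧ swapG (swapG G u v p.1 p.2) u p.1 v p.2 = G := by
  classical
  obtain ⟨x, y⟩ := p
  simp only [goodPairs, mem_filter, mem_univ, true_and] at hp
  obtain ⟨hxZ, hxy, hFxy, hux, hvy, hxu, hxv, hyu, hyv⟩ := hp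
  simp only [graphsWithDegreeSeq, mem_filter, mem_univ, true_and] at hG
  obtain ⟨hdeg, huv, hev1, hev2⟩ := hG
  have hux' : u ≠ x := hxu.symm
  have huy' : u ≠ y := hyu.symm
  have hvx' : v ≠ x := hxv.symm
  have hvy' : v ≠ y := hyv.symm
  have huv' : u ≠ v := G.ne_of_adj huv
  have hxy' : x ≠ y := G.ne_of_adj hxy
  refine ⟨?_, ⟨hux', Or.inr (Or.inl (Or.inl ⟨rfl, rfl⟩))⟩,
    ⟨hvy', Or.inr (Or.inr (Or.inl ⟨rfl, rfl⟩))⟩,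
    swapG_swapG huv hxy hux hvy hux' huy' hvx' hvy'⟩
  simp only [graphsWithDegreeSeq, mem_filter, mem_univ, true_and]
  refine ⟨fun w => by rw [swapG_degree huv hxy hux hvy hux' huy' hvx' hvy' w]; exact hdeg w,
    ?_, ?_⟩
  · -- induced subgraph on Z' unchanged
    intro a b ha hb
    rw [← hev1 a b ha hb]
    constructor
    · rintro ⟨hne, ⟨hA, -, -⟩ | hq | hq⟩
      · exact hA
      · exfalso
        rcases hq with ⟨rfl, rfl⟩ | ⟨rfl, rfl⟩
        · exact hxZ hb
        · exact hxZ ha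
      · exfalso
        rcases hq with ⟨rfl, rfl⟩ | ⟨rfl, rfl⟩
        · exact hvZ ha
        · exact hvZ hb
    · intro hA
      refine ⟨G.ne_of_adj hA, Or.inl ⟨hA, ?_, ?_⟩⟩
      · rintro (⟨rfl, rfl⟩ | ⟨rfl, rfl⟩)
        · exact hvZ hb
        · exact hvZ ha
      · rintro (⟨rfl, rfl⟩ | ⟨rfl, rfl⟩)
        · exact hxZ ha
        · exact hxZ hb
  · -- F' still contained
    intro a b hab
    refine ⟨F'.ne_of_adj hab, Or.inl ⟨hev2 hab, ?_, ?_⟩⟩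
    · rintro (⟨rfl, rfl⟩ | ⟨rfl, rfl⟩)
      · exact hFuv hab
      · exact hFuv hab.symm
    · rintro (⟨rfl, rfl⟩ | ⟨rfl, rfl⟩)
      · exact hFxy hab
      · exact hFxy hab.symm

end main

set_option maxHeartbeats 2000000 in
/-- **Lemma (an edge is unlikely, conditionally).**
Conditional on `G^D[Z'] = H'` and `F' ⊆ G^D`, the probability that a fixed non-`F'` pair
`uv` (with `v ∉ Z'`) is an edge of `G^D` is at most `40 n^{-1/2}`, provided (E1) `u` has
small degree, (E2) all large-degree vertices lie in `Z'` with all their edges in `H'`,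
and (E3) there are many free half-edges outside `Z'`. -/
theorem cond_prob_edge_small :
    ∃ n₀ : ℕ, ∀ n : ℕ, n₀ ≤ n →
    ∀ Z' : Finset (Fin n), ∀ H' F' : SimpleGraph (Fin n),
    -- `H'` is a graph on the vertex set `Z'`
    (∀ a b, H'.Adj a b → a ∈ Z' ∧ b ∈ Z') →
    -- `F'` is bipartite with parts `(Z', V \ Z')`
    (∀ a b, F'.Adj a b → ((a ∈ Z' ∧ b ∉ Z') ∨ (a ∉ Z' ∧ b ∈ Z'))) →
    ∀ u v : Fin n, v ∉ Z' → ¬ F'.Adj u v →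
    ∀ D : Fin n → ℕ, (∀ w, 1 ≤ D w) →
    -- (E1)
    (D u : ℝ) ≤ (n : ℝ) ^ ((1 : ℝ) / 4) →
    -- (E2)
    (∀ w : Fin n, (n : ℝ) ^ ((1 : ℝ) / 4) < (D w : ℝ) → w ∈ Z' ∧ H'.degree w = D w) →
    -- (E3)
    (n : ℝ) / 20 ≤ (∑ w ∈ Finset.univ.filter (fun w => w ∉ Z'),
        ((D w : ℝ) - (F'.degree w : ℝ))) →
    -- the conditioning event has positive probability
    0 < ((graphsWithDegreeSeq n D).filter
          (fun G => (∀ a b, a ∈ Z' → b ∈ Z' → (G.Adj a b ↔ H'.Adj a b)) ∧ F' ≤ G)).card →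
    uniformCondProb n D (fun G => G.Adj u v)
        (fun G => (∀ a b, a ∈ Z' → b ∈ Z' → (G.Adj a b ↔ H'.Adj a b)) ∧ F' ≤ G)
      ≤ 40 * (n : ℝ) ^ (-(1 : ℝ) / 2) := by
  classical
  refine ⟨57600, fun n hn Z' H' F' hH' hF' u v hvZ hFuv D hD1 hE1 hE2 hE3 hpos => ?_⟩
  have h1n : (1:ℕ) ≤ n := le_trans (by norm_num) hn
  set A : Finset (SimpleGraph (Fin n)) := (graphsWithDegreeSeq n D).filter
    (fun G => G.Adj u v ∧ (∀ a b, a ∈ Z' → b ∈ Z' → (G.Adj a b ↔ H'.Adj a b)) ∧ F' ≤ G) with hA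
  set B : Finset (SimpleGraph (Fin n)) := (graphsWithDegreeSeq n D).filter
    (fun G => (∀ a b, a ∈ Z' → b ∈ Z' → (G.Adj a b ↔ H'.Adj a b)) ∧ F' ≤ G) with hB
  set T : Finset (SimpleGraph (Fin n) × (Fin n × Fin n)) :=
    A.biUnion (fun G => {G} ×ˢ goodPairs Z' F' G u v) with hT
  set tgt : Finset (SimpleGraph (Fin n) × (Fin n × Fin n)) :=
    B.biUnion (fun G' => {G'} ×ˢ (G'.neighborFinset u ×ˢ G'.neighborFinset v)) with htgt
  -- step 1 : |A| * n/40 ≤ |T|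
  have hTcard : T.card = ∑ G ∈ A, (goodPairs Z' F' G u v).card := by
    rw [hT, Finset.card_biUnion]
    · refine Finset.sum_congr rfl (fun G _ => ?_)
      rw [Finset.card_product, card_singleton, one_mul]
    · intro G hG G' hG' hne
      simp only [Finset.disjoint_left]
      intro p hp hp'
      rw [mem_product, mem_singleton] at hp hp'
      exact hne (hp.1 ▸ hp'.1 ▸ rfl)
  have hstep1 : (A.card : ℝ) * ((n : ℝ) / 40) ≤ (T.card : ℝ) := by
    have h := Finset.sum_le_sum (s := A) (f := fun _ => (n:ℝ)/40)
      (g := fun G => ((goodPairs Z' F' G u v).card : ℝ)) (fun G hG => by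
        rw [hA, mem_filter, graphsWithDegreeSeq, mem_filter] at hG
        obtain ⟨⟨-, hdeg⟩, -, hev1, hev2⟩ := hG
        exact goodPairs_card_lb hn hH' hvZ hdeg hev1 hev2 hE1 hE2 hE3)
    rw [Finset.sum_const, nsmul_eq_mul] at h
    refine le_trans h (le_of_eq ?_)
    rw [hTcard]
    push_cast
    rfl
  -- step 2 : |T| ≤ |tgt| via the switching injection
  have hstep2 : T.card ≤ tgt.card := by
    refine Finset.card_le_card_of_injOn
      (fun p => (swapG p.1 u v p.2.1 p.2.2, p.2)) ?_ ?_
    · intro p hp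
      rw [hT, Finset.mem_coe, mem_biUnion] at hp
      obtain ⟨G, hGA, hpG⟩ := hp
      rw [mem_product, mem_singleton] at hpG
      obtain ⟨rfl, hpgood⟩ := hpG
      have hGA' : p.1 ∈ (graphsWithDegreeSeq n D).filter
        (fun G => G.Adj u v ∧ (∀ a b, a ∈ Z' → b ∈ Z' → (G.Adj a b ↔ H'.Adj a b)) ∧ F' ≤ G) := hGA
      obtain ⟨hmem, hadj1, hadj2, -⟩ := swap_closure hH' hvZ hFuv hGA' hpgood
      rw [htgt, Finset.mem_coe, mem_biUnion]
      refine ⟨swapG p.1 u v p.2.1 p.2.2, hmem, ?_⟩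
      rw [mem_product, mem_singleton, mem_product]
      exact ⟨rfl, (SimpleGraph.mem_neighborFinset _ _ _).2 hadj1,
        (SimpleGraph.mem_neighborFinset _ _ _).2 hadj2⟩
    · intro p hp q hq heq
      replace hp := Finset.mem_coe.1 hp
      replace hq := Finset.mem_coe.1 hq
      rw [hT, mem_biUnion] at hp hq
      obtain ⟨G, hGA, hpG⟩ := hp
      obtain ⟨G', hGA', hqG⟩ := hq
      rw [mem_product, mem_singleton] at hpG hqG
      obtain ⟨rfl, hpgood⟩ := hpG
      obtain ⟨rfl, hqgood⟩ := hqG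
      have heq' : (swapG p.1 u v p.2.1 p.2.2, p.2) = (swapG q.1 u v q.2.1 q.2.2, q.2) := heq
      have h2 : p.2 = q.2 := (Prod.ext_iff.1 heq').2
      have h1 : swapG p.1 u v p.2.1 p.2.2 = swapG q.1 u v q.2.1 q.2.2 :=
        (Prod.ext_iff.1 heq').1
      have e1 := (swap_closure hH' hvZ hFuv hGA hpgood).2.2.2
      have e2 := (swap_closure hH' hvZ hFuv hGA' hqgood).2.2.2
      have : p.1 = q.1 := by
        rw [← e1, ← e2, h1, h2]
      exact Prod.ext this h2
  -- step 3 : |tgt| = |B| * D u * D v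
  have htgtcard : tgt.card = B.card * (D u * D v) := by
    rw [htgt, Finset.card_biUnion]
    · have hcc : ∀ G' ∈ B,
          ({G'} ×ˢ (G'.neighborFinset u ×ˢ G'.neighborFinset v)).card = D u * D v := by
        intro G' hG'
        rw [hB, mem_filter, graphsWithDegreeSeq, mem_filter] at hG'
        obtain ⟨⟨-, hdeg⟩, -⟩ := hG'
        rw [Finset.card_product, card_singleton, one_mul, Finset.card_product,
          SimpleGraph.card_neighborFinset_eq_degree, SimpleGraph.card_neighborFinset_eq_degree,
          hdeg u, hdeg v]
      rw [Finset.sum_congr rfl hcc, Finset.sum_const, smul_eq_mul]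
    · intro G hG G' hG' hne
      simp only [Finset.disjoint_left]
      intro p hp hp'
      rw [mem_product, mem_singleton] at hp hp'
      exact hne (hp.1 ▸ hp'.1 ▸ rfl)
  -- numerics
  set K : ℝ := (n : ℝ) ^ ((1 : ℝ) / 4) with hKdef
  set s : ℝ := (n : ℝ) ^ ((1 : ℝ) / 2) with hsdef
  have hKsq : K * K = s := rpow_quarter_sq h1n
  have hs240 : (240 : ℝ) ≤ s := sqrt_ge hn
  have hssq : s * s = (n : ℝ) := rpow_half_sq h1n
  have hs0 : 0 < s := lt_of_lt_of_le (by norm_num) hs240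
  have hDu : (D u : ℝ) ≤ K := hE1
  have hDv : (D v : ℝ) ≤ K := by
    by_contra hlt
    push_neg at hlt
    exact hvZ (hE2 v hlt).1
  have hK0 : (0:ℝ) ≤ K := Real.rpow_nonneg (by positivity) _
  have hDuv : ((D u * D v : ℕ) : ℝ) ≤ s := by
    push_cast
    calc (D u : ℝ) * (D v : ℝ) ≤ K * K := by
          refine mul_le_mul hDu hDv (by positivity) hK0
      _ = s := hKsq
  have hfinal : (A.card : ℝ) * ((n : ℝ) / 40) ≤ (B.card : ℝ) * s := by
    calc (A.card : ℝ) * ((n : ℝ) / 40) ≤ (T.card : ℝ) := hstep1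
      _ ≤ (tgt.card : ℝ) := by exact_mod_cast hstep2
      _ = (B.card : ℝ) * ((D u * D v : ℕ) : ℝ) := by rw [htgtcard]; push_cast; ring
      _ ≤ (B.card : ℝ) * s := by
          refine mul_le_mul_of_nonneg_left hDuv (by positivity)
  -- conclude
  have hBpos : (0:ℝ) < (B.card : ℝ) := by exact_mod_cast hpos
  have hrhs : (40 : ℝ) * (n : ℝ) ^ (-(1 : ℝ) / 2) = 40 / s := by
    rw [neg_div, Real.rpow_neg (by positivity), ← hsdef]
    rw [div_eq_mul_inv]
  have hA0 : (0:ℝ) ≤ (A.card : ℝ) := by positivity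
  have key : (A.card : ℝ) / (B.card : ℝ) ≤ 40 / s := by
    rw [div_le_div_iff₀ hBpos hs0]
    nlinarith [hfinal, hssq, hs0, hA0, hBpos]
  unfold uniformCondProb
  rw [hrhs]
  have e1 : @Finset.filter _ (fun G => (fun G => G.Adj u v) G ∧
      (fun G => (∀ a b, a ∈ Z' → b ∈ Z' → (G.Adj a b ↔ H'.Adj a b)) ∧ F' ≤ G) G)
      (fun a => @instDecidableAnd _ _ (Classical.propDecidable _) (Classical.propDecidable _))
      (graphsWithDegreeSeq n D) = A := by
    ext G
    simp only [Finset.mem_filter]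
    rw [hA, Finset.mem_filter]
  have e2 : @Finset.filter _ (fun G => (∀ a b, a ∈ Z' → b ∈ Z' → (G.Adj a b ↔ H'.Adj a b)) ∧ F' ≤ G)
      (fun a => Classical.propDecidable _)
      (graphsWithDegreeSeq n D) = B := by
    ext G
    simp only [Finset.mem_filter]
    rw [hB, Finset.mem_filter]
  rw [e1, e2]
  exact key
end
end

section
/- There exists ν₀ ∈ (0,1) such that for every ν ∈ (0,ν₀] there exists n₀ ∈ ℕ such that the following holds for every n ≥ n₀. Let V = [n], let Z′ ⊆ V, let H′ be a graph with vertex set Z′, let F′ be a bipartite graph with vertex partition (Z′, V∖Z′), and let x ∈ V∖Z′ and z ∈ Z′ with xz ∉ E(F′). Let D be a feasible degree sequence on V such that: every w ∈ V with d(w) > n^{1/4} satisfies w ∈ Z′ and d(w) = d_{H′}(w); Σ_{w∈Z′} (d(w) − d_{H′}(w) − d_{F′}(w)) ≤ νn; and Σ_{w∈V∖Z′} (d(w) − d_{F′}(w)) ≥ n/20. Set Z″ := Z′∖{z}. Then for every integer i ≥ 0 and for E being either the event {xz ∈ E(G^D)} or the event {xz ∉ E(G^D)}, provided the conditioning event has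 positive probability, P[ d_{G^D}(x, Z″) − d_{F′}(x) > ⌊√ν·(d(x) − d_{F′}(x))⌋ + i | G^D[Z′] = H′, F′ ⊆ G^D, E ] ≤ (22√ν)^{i+1}; consequently the same bound holds conditioning only on {G^D[Z′] = H′, F′ ⊆ G^D}. -/
open Finset

noncomputable section
open scoped Classical

/-- Number of neighbours of `x` in the set `Z` in the graph `G`. -/
def degIn {n : ℕ} (G : SimpleGraph (Fin n)) (x : Fin n) (Z : Finset (Fin n)) : ℕ :=
  (Z.filter (fun w => G.Adj x w)).card

variable {V : Type*}

/-- Switch: remove edges xw, uv; add edges xu, wv. -/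
def switchGraph (G : SimpleGraph V) (x w u v : V) : SimpleGraph V where
  Adj a b :=
    (G.Adj a b ∧ ¬(a = x ∧ b = w) ∧ ¬(a = w ∧ b = x) ∧ ¬(a = u ∧ b = v) ∧ ¬(a = v ∧ b = u))
    ∨ (x ≠ u ∧ ((a = x ∧ b = u) ∨ (a = u ∧ b = x)))
    ∨ (w ≠ v ∧ ((a = w ∧ b = v) ∨ (a = v ∧ b = w)))
  symm := by
    constructor
    intro a b h
    rcases h with ⟨h1, h2, h3, h4, h5⟩ | ⟨hne, h | h⟩ | ⟨hne, h | h⟩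
    · exact Or.inl ⟨h1.symm, fun hc => h3 ⟨hc.2, hc.1⟩, fun hc => h2 ⟨hc.2, hc.1⟩,
        fun hc => h5 ⟨hc.2, hc.1⟩, fun hc => h4 ⟨hc.2, hc.1⟩⟩
    · exact Or.inr (Or.inl ⟨hne, Or.inr ⟨h.2, h.1⟩⟩)
    · exact Or.inr (Or.inl ⟨hne, Or.inl ⟨h.2, h.1⟩⟩)
    · exact Or.inr (Or.inr ⟨hne, Or.inr ⟨h.2, h.1⟩⟩)
    · exact Or.inr (Or.inr ⟨hne, Or.inl ⟨h.2, h.1⟩⟩)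
  loopless := by
    constructor
    intro a h
    rcases h with ⟨h1, -⟩ | ⟨hne, h | h⟩ | ⟨hne, h | h⟩
    · exact G.loopless.irrefl a h1
    · exact hne (h.1.symm.trans h.2)
    · exact hne (h.2.symm.trans h.1)
    · exact hne (h.1.symm.trans h.2)
    · exact hne (h.2.symm.trans h.1)

lemma switch_adj {G : SimpleGraph V} {x w u v : V} (a b : V) :
    (switchGraph G x w u v).Adj a b ↔
    (G.Adj a b ∧ ¬(a = x ∧ b = w) ∧ ¬(a = w ∧ b = x) ∧ ¬(a = u ∧ b = v) ∧ ¬(a = v ∧ b = u))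
    ∨ (x ≠ u ∧ ((a = x ∧ b = u) ∨ (a = u ∧ b = x)))
    ∨ (w ≠ v ∧ ((a = w ∧ b = v) ∨ (a = v ∧ b = w))) := Iff.rfl

/-- adjacency at x -/
lemma switch_adj_x {G : SimpleGraph V} {x w u v : V}
    (hxw : x ≠ w) (hxu : x ≠ u) (hxv : x ≠ v) (b : V) :
    (switchGraph G x w u v).Adj x b ↔ (b = u ∨ (b ≠ w ∧ G.Adj x b)) := by
  rw [switch_adj]
  constructor
  · rintro (⟨h1, h2, -⟩ | ⟨-, ⟨-, hb⟩ | ⟨hc, -⟩⟩ | ⟨-, ⟨hc, -⟩ | ⟨hc, -⟩⟩)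
    · exact Or.inr ⟨fun hb => h2 ⟨rfl, hb⟩, h1⟩
    · exact Or.inl hb
    · exact absurd hc.symm (Ne.symm hxu)
    · exact absurd hc hxw
    · exact absurd hc hxv
  · rintro (rfl | ⟨hbw, hadj⟩)
    · exact Or.inr (Or.inl ⟨hxu, Or.inl ⟨rfl, rfl⟩⟩)
    · exact Or.inl ⟨hadj, fun hc => hbw hc.2, fun hc => hxw hc.1,
        fun hc => hxu hc.1, fun hc => hxv hc.1⟩

lemma switch_comm1 (G : SimpleGraph V) (x w u v : V) :
    switchGraph G x w u v = switchGraph G w x v u := by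
  ext a b; rw [switch_adj, switch_adj]
  constructor
  · rintro (⟨h1, h2, h3, h4, h5⟩ | ⟨hne, h⟩ | ⟨hne, h⟩)
    · exact Or.inl ⟨h1, h3, h2, h5, h4⟩
    · exact Or.inr (Or.inr ⟨hne, h⟩)
    · exact Or.inr (Or.inl ⟨hne, h⟩)
  · rintro (⟨h1, h2, h3, h4, h5⟩ | ⟨hne, h⟩ | ⟨hne, h⟩)
    · exact Or.inl ⟨h1, h3, h2, h5, h4⟩
    · exact Or.inr (Or.inr ⟨hne, h⟩)
    · exact Or.inr (Or.inl ⟨hne, h⟩)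

lemma switch_comm2 (G : SimpleGraph V) (x w u v : V) :
    switchGraph G x w u v = switchGraph G u v x w := by
  ext a b; rw [switch_adj, switch_adj]
  constructor
  · rintro (⟨h1, h2, h3, h4, h5⟩ | ⟨hne, h⟩ | ⟨hne, h⟩)
    · exact Or.inl ⟨h1, h4, h5, h2, h3⟩
    · exact Or.inr (Or.inl ⟨hne.symm, h.symm⟩)
    · exact Or.inr (Or.inr ⟨hne.symm, h.symm⟩)
  · rintro (⟨h1, h2, h3, h4, h5⟩ | ⟨hne, h⟩ | ⟨hne, h⟩)
    · exact Or.inl ⟨h1, h4, h5, h2, h3⟩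
    · exact Or.inr (Or.inl ⟨hne.symm, h.symm⟩)
    · exact Or.inr (Or.inr ⟨hne.symm, h.symm⟩)

section DegLemmas
variable [Fintype V] {G : SimpleGraph V} {x w u v : V}

lemma switch_nbr_x (hxw : x ≠ w) (hxu : x ≠ u) (hxv : x ≠ v) :
    (switchGraph G x w u v).neighborFinset x = insert u ((G.neighborFinset x).erase w) := by
  ext b
  simp only [SimpleGraph.mem_neighborFinset, mem_insert, mem_erase]
  rw [switch_adj_x hxw hxu hxv]

lemma switch_degree_x (hxw : x ≠ w) (hxu : x ≠ u) (hxv : x ≠ v)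
    (haxw : G.Adj x w) (haxu : ¬G.Adj x u) :
    (switchGraph G x w u v).degree x = G.degree x := by
  have hw : w ∈ G.neighborFinset x := by simpa using haxw
  rw [SimpleGraph.degree, SimpleGraph.degree, switch_nbr_x hxw hxu hxv,
    card_insert_of_notMem (by simp [haxu]), card_erase_of_mem hw,
    Nat.sub_add_cancel (card_pos.2 ⟨w, hw⟩)]

lemma switch_adj_other {a : V} (hax : a ≠ x) (haw : a ≠ w) (hau : a ≠ u) (hav : a ≠ v)
    (b : V) : (switchGraph G x w u v).Adj a b ↔ G.Adj a b := by
  rw [switch_adj]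
  constructor
  · rintro (⟨h1, -⟩ | ⟨-, h | h⟩ | ⟨-, h | h⟩)
    · exact h1
    · exact absurd h.1 hax
    · exact absurd h.1 hau
    · exact absurd h.1 haw
    · exact absurd h.1 hav
  · intro h
    exact Or.inl ⟨h, fun hc => hax hc.1, fun hc => haw hc.1, fun hc => hau hc.1,
      fun hc => hav hc.1⟩

lemma switch_degree_other {a : V} (hax : a ≠ x) (haw : a ≠ w) (hau : a ≠ u) (hav : a ≠ v) :
    (switchGraph G x w u v).degree a = G.degree a := by
  rw [SimpleGraph.degree, SimpleGraph.degree]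
  congr 1
  ext b
  simp only [SimpleGraph.mem_neighborFinset]
  exact switch_adj_other hax haw hau hav b

lemma switch_degree (hxw : x ≠ w) (hxu : x ≠ u) (hxv : x ≠ v) (hwu : w ≠ u) (hwv : w ≠ v)
    (huv : u ≠ v) (haxw : G.Adj x w) (hauv : G.Adj u v) (haxu : ¬G.Adj x u)
    (hawv : ¬G.Adj w v) (a : V) :
    (switchGraph G x w u v).degree a = G.degree a := by
  by_cases hax : a = x
  · subst hax; exact switch_degree_x hxw hxu hxv haxw haxu
  by_cases haw : a = w
  · subst haw
    rw [switch_comm1]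
    exact switch_degree_x hxw.symm hwv hwu haxw.symm hawv
  by_cases hau : a = u
  · subst hau
    rw [switch_comm2]
    exact switch_degree_x huv hxu.symm hwu.symm hauv (fun h => haxu h.symm)
  by_cases hav : a = v
  · subst hav
    rw [switch_comm2, switch_comm1]
    exact switch_degree_x huv.symm hwv.symm hxv.symm hauv.symm (fun h => hawv h.symm)
  · exact switch_degree_other hax haw hau hav

end DegLemmas

lemma switch_switch {G : SimpleGraph V} {x w u v : V}
    (hxw : x ≠ w) (hxu : x ≠ u) (hxv : x ≠ v) (hwu : w ≠ u) (hwv : w ≠ v) (huv : u ≠ v)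
    (haxw : G.Adj x w) (hauv : G.Adj u v) (haxu : ¬G.Adj x u) (hawv : ¬G.Adj w v) :
    switchGraph (switchGraph G x w u v) x u w v = G := by
  ext a b
  rw [switch_adj, switch_adj]
  constructor
  · rintro (⟨hG' | ⟨-, h | h⟩ | ⟨-, h | h⟩, n1, n2, n3, n4⟩ | ⟨-, h | h⟩ | ⟨-, h | h⟩)
    · exact hG'.1
    · exact absurd h n1
    · exact absurd h n2
    · exact absurd h n3
    · exact absurd h n4
    · rw [h.1, h.2]; exact haxw
    · rw [h.1, h.2]; exact haxw.symm
    · rw [h.1, h.2]; exact hauv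
    · rw [h.1, h.2]; exact hauv.symm
  · intro hab
    by_cases p1 : a = x ∧ b = w
    · exact Or.inr (Or.inl ⟨hxw, Or.inl p1⟩)
    by_cases p2 : a = w ∧ b = x
    · exact Or.inr (Or.inl ⟨hxw, Or.inr p2⟩)
    by_cases p3 : a = u ∧ b = v
    · exact Or.inr (Or.inr ⟨huv, Or.inl p3⟩)
    by_cases p4 : a = v ∧ b = u
    · exact Or.inr (Or.inr ⟨huv, Or.inr p4⟩)
    · refine Or.inl ⟨Or.inl ⟨hab, p1, p2, p3, p4⟩, ?_, ?_, ?_, ?_⟩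
      · rintro ⟨rfl, rfl⟩; exact haxu hab
      · rintro ⟨rfl, rfl⟩; exact haxu hab.symm
      · rintro ⟨rfl, rfl⟩; exact hawv hab
      · rintro ⟨rfl, rfl⟩; exact hawv hab.symm

lemma switch_adj_inside {G : SimpleGraph V} {x w u v : V} {Z' : Finset V}
    (hx : x ∉ Z') (hu : u ∉ Z') (hv : v ∉ Z') {a b : V} (ha : a ∈ Z') (hb : b ∈ Z') :
    (switchGraph G x w u v).Adj a b ↔ G.Adj a b := by
  rw [switch_adj]
  constructor
  · rintro (⟨h1, -⟩ | ⟨-, h | h⟩ | ⟨-, h | h⟩)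
    · exact h1
    · exact absurd ha (h.1 ▸ hx)
    · exact absurd ha (h.1 ▸ hu)
    · exact absurd hb (h.2 ▸ hv)
    · exact absurd ha (h.1 ▸ hv)
  · intro h
    refine Or.inl ⟨h, ?_, ?_, ?_, ?_⟩
    · rintro ⟨rfl, -⟩; exact hx ha
    · rintro ⟨-, rfl⟩; exact hx hb
    · rintro ⟨rfl, -⟩; exact hu ha
    · rintro ⟨rfl, -⟩; exact hv ha

lemma switch_le {G F' : SimpleGraph V} {x w u v : V} (hF : F' ≤ G)
    (h1 : ¬F'.Adj x w) (h2 : ¬F'.Adj u v) : F' ≤ switchGraph G x w u v := by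
  intro a b hab
  refine Or.inl ⟨hF hab, ?_, ?_, ?_, ?_⟩
  · rintro ⟨rfl, rfl⟩; exact h1 hab
  · rintro ⟨rfl, rfl⟩; exact h1 hab.symm
  · rintro ⟨rfl, rfl⟩; exact h2 hab
  · rintro ⟨rfl, rfl⟩; exact h2 hab.symm


/-- normal form for filtered counts (fixed classical instance). -/
def fc {α : Type*} (s : Finset α) (p : α → Prop) : ℕ := (s.filter (fun b => p b)).card

lemma fc_congr {α : Type*} {s : Finset α} {p q : α → Prop} (h : ∀ b ∈ s, p b ↔ q b) :
    fc s p = fc s q := by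
  unfold fc; congr 1; exact filter_congr h

lemma filter_eq_filter {α : Type*} {p q : α → Prop} {h1 : DecidablePred p}
    {h2 : DecidablePred q} (s : Finset α) (h : ∀ b, p b ↔ q b) :
    @Finset.filter α p h1 s = @Finset.filter α q h2 s := by
  ext b
  rw [mem_filter, mem_filter, h b]

lemma card_filter_eq_fc {α : Type*} {p : α → Prop} {h1 : DecidablePred p} (s : Finset α) :
    (@Finset.filter α p h1 s).card = fc s p :=
  congrArg Finset.card (filter_eq_filter s (fun _ => Iff.rfl))

lemma fc_sum {α : Type*} (s : Finset α) (p : α → Prop) :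
    fc s p = ∑ b ∈ s, if p b then 1 else 0 := by
  unfold fc
  rw [card_filter]

lemma fc_split {α : Type*} (s : Finset α) (p q : α → Prop) :
    fc s (fun b => p b ∧ q b) + fc s (fun b => p b ∧ ¬ q b) = fc s p := by
  rw [fc_sum, fc_sum, fc_sum, ← Finset.sum_add_distrib]
  apply Finset.sum_congr rfl
  intro b _
  by_cases hp : p b <;> by_cases hq : q b <;> simp [hp, hq]

lemma fc_mono {α : Type*} {s : Finset α} {p q : α → Prop} (h : ∀ b ∈ s, p b → q b) :
    fc s p ≤ fc s q := by
  unfold fc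
  apply card_le_card
  intro b hb
  simp only [mem_filter] at hb ⊢
  exact ⟨hb.1, h b hb.1 hb.2⟩

lemma fc_mem {α : Type*} [DecidableEq α] {t : Finset α} (s : Finset α) (p : α → Prop) :
    fc s (fun b => p b ∧ b ∈ t) = fc (s ∩ t) p := by
  unfold fc; congr 1; ext b
  simp only [mem_filter, mem_inter]
  tauto

lemma fc_le_card {α : Type*} (s : Finset α) (p : α → Prop) : fc s p ≤ s.card :=
  card_le_card (filter_subset _ s)

lemma degree_eq_fc {n : ℕ} (G : SimpleGraph (Fin n)) (a : Fin n) :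
    G.degree a = fc univ (fun b => G.Adj a b) := by
  unfold fc
  rw [← SimpleGraph.card_neighborFinset_eq_degree]
  congr 1
  ext b
  simp [SimpleGraph.mem_neighborFinset]

section ClassFacts
variable {n : ℕ} {Z' : Finset (Fin n)} {H' F' : SimpleGraph (Fin n)} {D : Fin n → ℕ}
  {G : SimpleGraph (Fin n)}

lemma fc_adj_and_F (hFle : F' ≤ G) (a : Fin n) :
    fc univ (fun b => G.Adj a b ∧ F'.Adj a b) = F'.degree a := by
  rw [degree_eq_fc]
  exact fc_congr (fun b _ => ⟨fun h => h.2, fun h => ⟨hFle h, h⟩⟩)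

/-- split of the degree of any vertex into F'-nbrs, non-F' nbrs in Z', non-F' nbrs outside. -/
lemma deg_split3 (hFle : F' ≤ G) (hdeg : ∀ a, G.degree a = D a) (a : Fin n) :
    D a = F'.degree a
      + fc univ (fun b => (G.Adj a b ∧ ¬F'.Adj a b) ∧ b ∈ Z')
      + fc univ (fun b => (G.Adj a b ∧ ¬F'.Adj a b) ∧ b ∉ Z') := by
  have h1 := fc_split (univ : Finset (Fin n)) (fun b => G.Adj a b) (fun b => F'.Adj a b)
  have h2 := fc_split (univ : Finset (Fin n)) (fun b => G.Adj a b ∧ ¬F'.Adj a b)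
    (fun b => b ∈ Z')
  have h3 : fc univ (fun b => G.Adj a b ∧ ¬F'.Adj a b ∧ b ∉ Z')
      = fc univ (fun b => (G.Adj a b ∧ ¬F'.Adj a b) ∧ b ∉ Z') := fc_congr (fun b _ => by tauto)
  have h4 : fc univ (fun b => G.Adj a b ∧ ¬F'.Adj a b ∧ b ∈ Z')
      = fc univ (fun b => (G.Adj a b ∧ ¬F'.Adj a b) ∧ b ∈ Z') := fc_congr (fun b _ => by tauto)
  have h5 : fc univ (fun b => (G.Adj a b ∧ ¬F'.Adj a b) ∧ b ∈ Z')
      + fc univ (fun b => (G.Adj a b ∧ ¬F'.Adj a b) ∧ b ∉ Z')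
      = fc univ (fun b => G.Adj a b ∧ ¬F'.Adj a b) := h2
  have h6 := fc_adj_and_F hFle a
  have h7 := degree_eq_fc G a
  rw [hdeg a] at h7
  omega

/-- for `w ∈ Z'`: the G-neighbours of `w` inside `Z'` are exactly its H'-neighbours. -/
lemma fc_nbrs_inside (hagree : ∀ a b, a ∈ Z' → b ∈ Z' → (G.Adj a b ↔ H'.Adj a b))
    (hH : ∀ a b, H'.Adj a b → a ∈ Z' ∧ b ∈ Z') {w : Fin n} (hw : w ∈ Z') :
    fc univ (fun b => G.Adj w b ∧ b ∈ Z') = H'.degree w := by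
  rw [degree_eq_fc]
  apply fc_congr
  intro b _
  constructor
  · rintro ⟨h1, h2⟩; exact (hagree w b hw h2).1 h1
  · intro h; exact ⟨(hagree w b hw (hH w b h).2).2 h, (hH w b h).2⟩

/-- for `w ∈ Z'`, cross degree: `D w = H'.degree w + #(G-nbrs outside Z')`. -/
lemma crossdeg_eq (hagree : ∀ a b, a ∈ Z' → b ∈ Z' → (G.Adj a b ↔ H'.Adj a b))
    (hH : ∀ a b, H'.Adj a b → a ∈ Z' ∧ b ∈ Z') (hdeg : ∀ a, G.degree a = D a)
    {w : Fin n} (hw : w ∈ Z') :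
    D w = H'.degree w + fc univ (fun b => G.Adj w b ∧ b ∉ Z') := by
  have h1 := fc_split (univ : Finset (Fin n)) (fun b => G.Adj w b) (fun b => b ∈ Z')
  have h2 := fc_nbrs_inside hagree hH hw
  have h3 := degree_eq_fc G w
  rw [hdeg w] at h3
  omega

/-- for `w ∈ Z'`: full split. -/
lemma deg_split_inside (hagree : ∀ a b, a ∈ Z' → b ∈ Z' → (G.Adj a b ↔ H'.Adj a b))
    (hH : ∀ a b, H'.Adj a b → a ∈ Z' ∧ b ∈ Z')
    (hF : ∀ a b, F'.Adj a b → ((a ∈ Z' ∧ b ∉ Z') ∨ (a ∉ Z' ∧ b ∈ Z')))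
    (hFle : F' ≤ G) (hdeg : ∀ a, G.degree a = D a) {w : Fin n} (hw : w ∈ Z') :
    D w = H'.degree w + F'.degree w + fc univ (fun b => (G.Adj w b ∧ ¬F'.Adj w b) ∧ b ∉ Z') := by
  have h0 := crossdeg_eq hagree hH hdeg hw
  have h1 := fc_split (univ : Finset (Fin n)) (fun b => G.Adj w b ∧ b ∉ Z')
    (fun b => F'.Adj w b)
  have h2 : fc univ (fun b => (G.Adj w b ∧ b ∉ Z') ∧ F'.Adj w b) = F'.degree w := by
    rw [← fc_adj_and_F hFle w]
    apply fc_congr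
    intro b _
    constructor
    · rintro ⟨⟨h, -⟩, hf⟩; exact ⟨h, hf⟩
    · rintro ⟨h, hf⟩
      rcases hF w b hf with ⟨-, hb⟩ | ⟨hwn, -⟩
      · exact ⟨⟨h, hb⟩, hf⟩
      · exact absurd hw hwn
  have h3 : fc univ (fun b => (G.Adj w b ∧ b ∉ Z') ∧ ¬F'.Adj w b)
      = fc univ (fun b => (G.Adj w b ∧ ¬F'.Adj w b) ∧ b ∉ Z') := fc_congr (fun b _ => by tauto)
  omega

end ClassFacts

lemma fc_filter {α : Type*} (s : Finset α) (p q : α → Prop) :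
    fc s (fun b => p b ∧ q b) = fc (s.filter (fun b => q b)) p := by
  unfold fc; congr 1; ext b; simp only [mem_filter]; tauto

lemma fc_pair_sum {α β : Type*} (s : Finset α) (t : Finset β) (p : α → β → Prop) :
    fc (s ×ˢ t) (fun q => p q.1 q.2) = ∑ a ∈ s, fc t (p a) := by
  rw [fc_sum, Finset.sum_product]
  exact Finset.sum_congr rfl (fun a _ => (fc_sum t (p a)).symm)

lemma fc_le_three {α : Type*} (s : Finset α) (p c1 c2 c3 : α → Prop)
    (h : ∀ b ∈ s, p b → c1 b ∨ c2 b ∨ c3 b) :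
    fc s p ≤ fc s (fun b => p b ∧ c1 b) + fc s (fun b => p b ∧ c2 b)
      + fc s (fun b => p b ∧ c3 b) := by
  rw [fc_sum, fc_sum, fc_sum, fc_sum, ← Finset.sum_add_distrib, ← Finset.sum_add_distrib]
  apply Finset.sum_le_sum
  intro b hb
  by_cases hp : p b
  · rcases h b hb hp with h1 | h2 | h3 <;>
      by_cases hc1 : c1 b <;> by_cases hc2 : c2 b <;> by_cases hc3 : c3 b <;>
      simp_all
  · simp [hp]

section PairBounds
variable {n : ℕ}

lemma fc_pair_le_sum_left (G : SimpleGraph (Fin n)) (s t : Finset (Fin n))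
    (P : Fin n × Fin n → Prop) (U : Finset (Fin n))
    (h1 : ∀ q ∈ s ×ˢ t, P q → q.1 ∈ U) (h2 : ∀ q ∈ s ×ˢ t, P q → G.Adj q.1 q.2) :
    fc (s ×ˢ t) P ≤ ∑ a ∈ U, G.degree a := by
  unfold fc
  calc ((s ×ˢ t).filter (fun q => P q)).card
      ≤ (U.biUnion (fun a => {a} ×ˢ G.neighborFinset a)).card := by
        apply card_le_card
        intro q hq
        rw [mem_filter] at hq
        rw [mem_biUnion]
        refine ⟨q.1, h1 q hq.1 hq.2, ?_⟩
        rw [mem_product, mem_singleton, SimpleGraph.mem_neighborFinset]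
        exact ⟨rfl, h2 q hq.1 hq.2⟩
    _ ≤ ∑ a ∈ U, ({a} ×ˢ G.neighborFinset a).card := card_biUnion_le
    _ = ∑ a ∈ U, G.degree a := by
        apply Finset.sum_congr rfl
        intro a _
        rw [card_product, card_singleton, one_mul, SimpleGraph.card_neighborFinset_eq_degree]

lemma fc_pair_le_sum_right (G : SimpleGraph (Fin n)) (s t : Finset (Fin n))
    (P : Fin n × Fin n → Prop) (U : Finset (Fin n))
    (h1 : ∀ q ∈ s ×ˢ t, P q → q.2 ∈ U) (h2 : ∀ q ∈ s ×ˢ t, P q → G.Adj q.1 q.2) :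
    fc (s ×ˢ t) P ≤ ∑ a ∈ U, G.degree a := by
  unfold fc
  calc ((s ×ˢ t).filter (fun q => P q)).card
      ≤ (U.biUnion (fun a => G.neighborFinset a ×ˢ {a})).card := by
        apply card_le_card
        intro q hq
        rw [mem_filter] at hq
        rw [mem_biUnion]
        refine ⟨q.2, h1 q hq.1 hq.2, ?_⟩
        rw [mem_product, mem_singleton, SimpleGraph.mem_neighborFinset]
        exact ⟨(h2 q hq.1 hq.2).symm, rfl⟩
    _ ≤ ∑ a ∈ U, (G.neighborFinset a ×ˢ {a}).card := card_biUnion_le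
    _ = ∑ a ∈ U, G.degree a := by
        apply Finset.sum_congr rfl
        intro a _
        rw [card_product, card_singleton, mul_one, SimpleGraph.card_neighborFinset_eq_degree]

end PairBounds

def Kc (n : ℕ) : ℕ := ⌊(n:ℝ) ^ ((1:ℝ)/4)⌋₊

def OutS {n : ℕ} (Z' : Finset (Fin n)) : Finset (Fin n) := univ.filter (fun u => u ∉ Z')

section Counting
variable {n : ℕ} {Z' : Finset (Fin n)} {H' F' : SimpleGraph (Fin n)} {D : Fin n → ℕ}
  {G : SimpleGraph (Fin n)}

lemma fc_swap {α β : Type*} (s : Finset α) (t : Finset β) (P : α × β → Prop) :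
    fc (s ×ˢ t) P = fc (t ×ˢ s) (fun q => P (q.2, q.1)) := by
  unfold fc
  apply card_bij (fun q _ => (q.2, q.1))
  · intro q hq
    rw [mem_filter] at hq ⊢
    rw [mem_product] at hq ⊢
    exact ⟨⟨hq.1.2, hq.1.1⟩, hq.2⟩
  · intro q hq q' hq' h
    have h1 : q.2 = q'.2 := congrArg Prod.fst h
    have h2 : q.1 = q'.1 := congrArg Prod.snd h
    exact Prod.ext h2 h1
  · intro q hq
    rw [mem_filter, mem_product] at hq
    exact ⟨(q.2, q.1), by rw [mem_filter, mem_product]; exact ⟨⟨hq.1.2, hq.1.1⟩, hq.2⟩, rfl⟩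

lemma fc_set_congr {α : Type*} {s t : Finset α} (p : α → Prop) (h : ∀ b, b ∈ s ↔ b ∈ t) :
    fc s p = fc t p := by
  unfold fc
  congr 1
  ext b
  rw [mem_filter, mem_filter, h b]

lemma double_count (G : SimpleGraph (Fin n)) (F' : SimpleGraph (Fin n)) (Z' : Finset (Fin n)) :
    ∑ u ∈ OutS Z', fc univ (fun b => (G.Adj u b ∧ ¬F'.Adj u b) ∧ b ∈ Z')
      = ∑ w ∈ Z', fc univ (fun b => (G.Adj w b ∧ ¬F'.Adj w b) ∧ b ∉ Z') := by
  have l1 : ∀ u : Fin n, fc univ (fun b => (G.Adj u b ∧ ¬F'.Adj u b) ∧ b ∈ Z')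
      = fc Z' (fun b => G.Adj u b ∧ ¬F'.Adj u b) := by
    intro u
    rw [fc_filter]
    exact fc_set_congr _ (fun b => by simp)
  have l2 : ∀ w : Fin n, fc univ (fun b => (G.Adj w b ∧ ¬F'.Adj w b) ∧ b ∉ Z')
      = fc (OutS Z') (fun b => G.Adj w b ∧ ¬F'.Adj w b) := by
    intro w
    rw [fc_filter]
    exact fc_set_congr _ (fun b => by simp [OutS])
  calc ∑ u ∈ OutS Z', fc univ (fun b => (G.Adj u b ∧ ¬F'.Adj u b) ∧ b ∈ Z')
      = ∑ u ∈ OutS Z', fc Z' (fun b => G.Adj u b ∧ ¬F'.Adj u b) :=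
        Finset.sum_congr rfl (fun u _ => l1 u)
    _ = fc (OutS Z' ×ˢ Z') (fun q => G.Adj q.1 q.2 ∧ ¬F'.Adj q.1 q.2) :=
        (fc_pair_sum _ _ _).symm
    _ = fc (Z' ×ˢ OutS Z') (fun q => G.Adj q.2 q.1 ∧ ¬F'.Adj q.2 q.1) := fc_swap _ _ _
    _ = fc (Z' ×ˢ OutS Z') (fun q => G.Adj q.1 q.2 ∧ ¬F'.Adj q.1 q.2) := by
        apply fc_congr
        intro q _
        rw [G.adj_comm, F'.adj_comm]
    _ = ∑ w ∈ Z', fc (OutS Z') (fun b => G.Adj w b ∧ ¬F'.Adj w b) :=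
        fc_pair_sum Z' (OutS Z') (fun a b => G.Adj a b ∧ ¬F'.Adj a b)
    _ = ∑ w ∈ Z', fc univ (fun b => (G.Adj w b ∧ ¬F'.Adj w b) ∧ b ∉ Z') :=
        Finset.sum_congr rfl (fun w _ => (l2 w).symm)

lemma D_le_K (hbig : ∀ w : Fin n, (n : ℝ) ^ ((1:ℝ)/4) < (D w : ℝ) → w ∈ Z' ∧ H'.degree w = D w)
    {a : Fin n} (ha : a ∉ Z') : D a ≤ Kc n := by
  by_cases h : (n : ℝ) ^ ((1:ℝ)/4) < (D a : ℝ)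
  · exact absurd (hbig a h).1 ha
  · exact Nat.le_floor (le_of_not_gt h)

lemma crossdeg_le_K (hagree : ∀ a b, a ∈ Z' → b ∈ Z' → (G.Adj a b ↔ H'.Adj a b))
    (hH : ∀ a b, H'.Adj a b → a ∈ Z' ∧ b ∈ Z') (hdeg : ∀ a, G.degree a = D a)
    (hbig : ∀ w : Fin n, (n : ℝ) ^ ((1:ℝ)/4) < (D w : ℝ) → w ∈ Z' ∧ H'.degree w = D w)
    {w : Fin n} (hw : w ∈ Z') :
    fc univ (fun b => G.Adj w b ∧ b ∉ Z') ≤ Kc n := by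
  have h0 := crossdeg_eq hagree hH hdeg hw
  by_cases h : (n : ℝ) ^ ((1:ℝ)/4) < (D w : ℝ)
  · have := (hbig w h).2
    omega
  · have : D w ≤ Kc n := Nat.le_floor (le_of_not_gt h)
    omega

end Counting

def PallP {n : ℕ} (Z' : Finset (Fin n)) (F' G : SimpleGraph (Fin n)) : Fin n × Fin n → Prop :=
  fun q => (G.Adj q.1 q.2 ∧ ¬F'.Adj q.1 q.2) ∧ q.2 ∉ Z'

def goodP {n : ℕ} (Z' : Finset (Fin n)) (F' G : SimpleGraph (Fin n)) (x w : Fin n) :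
    Fin n × Fin n → Prop :=
  fun q => PallP Z' F' G q ∧ (¬G.Adj x q.1 ∧ q.1 ≠ x ∧ ¬G.Adj w q.2)

section PerGraph
variable {n : ℕ} {ν : ℝ} {Z' : Finset (Fin n)} {H' F' : SimpleGraph (Fin n)} {D : Fin n → ℕ}
  {G : SimpleGraph (Fin n)} {x z : Fin n}

lemma sum_cOut_le
    (hagree : ∀ a b, a ∈ Z' → b ∈ Z' → (G.Adj a b ↔ H'.Adj a b))
    (hH : ∀ a b, H'.Adj a b → a ∈ Z' ∧ b ∈ Z')
    (hF : ∀ a b, F'.Adj a b → ((a ∈ Z' ∧ b ∉ Z') ∨ (a ∉ Z' ∧ b ∈ Z')))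
    (hFle : F' ≤ G) (hdeg : ∀ a, G.degree a = D a)
    (hin : (∑ w ∈ Z', ((D w : ℝ) - (H'.degree w : ℝ) - (F'.degree w : ℝ))) ≤ ν * n) :
    (∑ w ∈ Z', (fc univ (fun b => (G.Adj w b ∧ ¬F'.Adj w b) ∧ b ∉ Z') : ℝ)) ≤ ν * n := by
  refine le_trans (le_of_eq ?_) hin
  apply Finset.sum_congr rfl
  intro w hw
  have h := deg_split_inside hagree hH hF hFle hdeg hw
  have h' : (D w : ℝ) = (H'.degree w : ℝ) + (F'.degree w : ℝ)
      + (fc univ (fun b => (G.Adj w b ∧ ¬F'.Adj w b) ∧ b ∉ Z') : ℝ) := by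
    exact_mod_cast congrArg (Nat.cast : ℕ → ℝ) h
  linarith

lemma pall_lower
    (hagree : ∀ a b, a ∈ Z' → b ∈ Z' → (G.Adj a b ↔ H'.Adj a b))
    (hH : ∀ a b, H'.Adj a b → a ∈ Z' ∧ b ∈ Z')
    (hF : ∀ a b, F'.Adj a b → ((a ∈ Z' ∧ b ∉ Z') ∨ (a ∉ Z' ∧ b ∈ Z')))
    (hFle : F' ≤ G) (hdeg : ∀ a, G.degree a = D a)
    (hin : (∑ w ∈ Z', ((D w : ℝ) - (H'.degree w : ℝ) - (F'.degree w : ℝ))) ≤ ν * n)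
    (hout : (n : ℝ)/20 ≤ ∑ w ∈ OutS Z', ((D w : ℝ) - (F'.degree w : ℝ))) :
    (n : ℝ)/20 - ν * n ≤ (fc (OutS Z' ×ˢ univ) (PallP Z' F' G) : ℝ) := by
  have hp : fc (OutS Z' ×ˢ univ) (PallP Z' F' G)
      = ∑ u ∈ OutS Z', fc univ (fun b => (G.Adj u b ∧ ¬F'.Adj u b) ∧ b ∉ Z') :=
    fc_pair_sum (OutS Z') univ (fun a b => (G.Adj a b ∧ ¬F'.Adj a b) ∧ b ∉ Z')
  have e1 : ∀ u ∈ OutS Z',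
      (fc univ (fun b => (G.Adj u b ∧ ¬F'.Adj u b) ∧ b ∉ Z') : ℝ)
      = ((D u : ℝ) - (F'.degree u : ℝ))
        - (fc univ (fun b => (G.Adj u b ∧ ¬F'.Adj u b) ∧ b ∈ Z') : ℝ) := by
    intro u _
    have h := deg_split3 (Z' := Z') hFle hdeg u
    have h' : (D u : ℝ) = (F'.degree u : ℝ)
        + (fc univ (fun b => (G.Adj u b ∧ ¬F'.Adj u b) ∧ b ∈ Z') : ℝ)
        + (fc univ (fun b => (G.Adj u b ∧ ¬F'.Adj u b) ∧ b ∉ Z') : ℝ) := by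
      exact_mod_cast congrArg (Nat.cast : ℕ → ℝ) h
    linarith
  have e2 : (∑ u ∈ OutS Z', (fc univ (fun b => (G.Adj u b ∧ ¬F'.Adj u b) ∧ b ∉ Z') : ℝ))
      = (∑ u ∈ OutS Z', ((D u : ℝ) - (F'.degree u : ℝ)))
        - ∑ u ∈ OutS Z', (fc univ (fun b => (G.Adj u b ∧ ¬F'.Adj u b) ∧ b ∈ Z') : ℝ) := by
    rw [← Finset.sum_sub_distrib]
    exact Finset.sum_congr rfl e1
  have e3 : (∑ u ∈ OutS Z', (fc univ (fun b => (G.Adj u b ∧ ¬F'.Adj u b) ∧ b ∈ Z') : ℝ))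
      = ∑ w ∈ Z', (fc univ (fun b => (G.Adj w b ∧ ¬F'.Adj w b) ∧ b ∉ Z') : ℝ) := by
    exact_mod_cast congrArg (Nat.cast : ℕ → ℝ) (double_count G F' Z')
  have e4 := sum_cOut_le hagree hH hF hFle hdeg hin
  have hcast : (fc (OutS Z' ×ˢ univ) (PallP Z' F' G) : ℝ)
      = ∑ u ∈ OutS Z', (fc univ (fun b => (G.Adj u b ∧ ¬F'.Adj u b) ∧ b ∉ Z') : ℝ) := by
    rw [hp]; push_cast; ring
  rw [hcast, e2, e3]
  linarith

end PerGraph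

lemma numeric_K {n : ℕ} (hn : 100000000 ≤ n) :
    ((Kc n : ℝ) + 1) * (Kc n) + (Kc n) * (Kc n) ≤ 3 * ((n : ℝ) / 10000) := by
  set r : ℝ := (n : ℝ) ^ ((1:ℝ)/4) with hr
  have hn' : (100000000 : ℝ) ≤ (n : ℝ) := by exact_mod_cast hn
  have hn0 : (0 : ℝ) ≤ (n : ℝ) := by linarith
  have hK : (Kc n : ℝ) ≤ r := by
    rw [Kc]
    exact Nat.floor_le (Real.rpow_nonneg hn0 _)
  have hK0 : (0 : ℝ) ≤ (Kc n : ℝ) := Nat.cast_nonneg _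
  have hr1 : (1 : ℝ) ≤ r := by
    rw [hr]
    apply Real.one_le_rpow (by linarith) (by norm_num)
  have hrsq : r ^ 2 = (n : ℝ) ^ ((1:ℝ)/2) := by
    rw [hr, ← Real.rpow_natCast ((n:ℝ) ^ ((1:ℝ)/4)) 2, ← Real.rpow_mul hn0]
    norm_num
  have hsq : (n : ℝ) ^ ((1:ℝ)/2) ≤ (n : ℝ) / 10000 := by
    have h1 : (10000 : ℝ) ≤ (n : ℝ) ^ ((1:ℝ)/2) := by
      have h2 : ((100000000 : ℕ) : ℝ) ^ ((1:ℝ)/2) ≤ (n : ℝ) ^ ((1:ℝ)/2) :=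
        Real.rpow_le_rpow (by norm_num) (by exact_mod_cast hn) (by norm_num)
      have h3 : ((100000000 : ℕ) : ℝ) ^ ((1:ℝ)/2) = 10000 := by
        rw [show ((100000000 : ℕ) : ℝ) = (10000 : ℝ) ^ (2 : ℕ) by norm_num,
          ← Real.rpow_natCast (10000 : ℝ) 2, ← Real.rpow_mul (by norm_num)]
        norm_num
      linarith
    have h4 : (n : ℝ) ^ ((1:ℝ)/2) * (n : ℝ) ^ ((1:ℝ)/2) = (n : ℝ) := by
      rw [← Real.rpow_add (by linarith : (0:ℝ) < (n:ℝ))]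
      norm_num
    nlinarith [Real.rpow_nonneg hn0 ((1:ℝ)/2)]
  nlinarith

section GoodPairs
variable {n : ℕ} {ν : ℝ} {Z' : Finset (Fin n)} {H' F' : SimpleGraph (Fin n)} {D : Fin n → ℕ}
  {G : SimpleGraph (Fin n)} {x z : Fin n}

lemma good_pairs_lower (hn : 100000000 ≤ n) (hν0 : 0 < ν) (hν1 : ν ≤ 1/1000000)
    (hagree : ∀ a b, a ∈ Z' → b ∈ Z' → (G.Adj a b ↔ H'.Adj a b))
    (hH : ∀ a b, H'.Adj a b → a ∈ Z' ∧ b ∈ Z')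
    (hF : ∀ a b, F'.Adj a b → ((a ∈ Z' ∧ b ∉ Z') ∨ (a ∉ Z' ∧ b ∈ Z')))
    (hFle : F' ≤ G) (hdeg : ∀ a, G.degree a = D a)
    (hbig : ∀ w : Fin n, (n : ℝ) ^ ((1:ℝ)/4) < (D w : ℝ) → w ∈ Z' ∧ H'.degree w = D w)
    (hin : (∑ w ∈ Z', ((D w : ℝ) - (H'.degree w : ℝ) - (F'.degree w : ℝ))) ≤ ν * n)
    (hout : (n : ℝ)/20 ≤ ∑ w ∈ OutS Z', ((D w : ℝ) - (F'.degree w : ℝ)))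
    (hx : x ∉ Z') {w : Fin n} (hw : w ∈ Z') :
    (n : ℝ)/21 ≤ (fc (OutS Z' ×ˢ univ) (goodP Z' F' G x w) : ℝ) := by
  -- covering bound
  have hcover : fc (OutS Z' ×ˢ univ) (PallP Z' F' G)
      ≤ fc (OutS Z' ×ˢ univ) (goodP Z' F' G x w)
        + fc (OutS Z' ×ˢ univ) (fun q => PallP Z' F' G q ∧ (G.Adj x q.1 ∨ q.1 = x))
        + fc (OutS Z' ×ˢ univ) (fun q => PallP Z' F' G q ∧ G.Adj w q.2) := by
    apply fc_le_three
    intro q _ _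
    by_cases h1 : G.Adj x q.1
    · exact Or.inr (Or.inl (Or.inl h1))
    by_cases h2 : q.1 = x
    · exact Or.inr (Or.inl (Or.inr h2))
    by_cases h3 : G.Adj w q.2
    · exact Or.inr (Or.inr h3)
    · exact Or.inl ⟨h1, h2, h3⟩
  -- bad set 1
  have hbad1 : fc (OutS Z' ×ˢ univ) (fun q => PallP Z' F' G q ∧ (G.Adj x q.1 ∨ q.1 = x))
      ≤ (Kc n + 1) * Kc n := by
    set U₁ : Finset (Fin n) := insert x (univ.filter (fun a => G.Adj x a ∧ a ∉ Z')) with hU₁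
    have hsub := fc_pair_le_sum_left G (OutS Z') univ
      (fun q => PallP Z' F' G q ∧ (G.Adj x q.1 ∨ q.1 = x)) U₁
      (by
        intro q hq hP
        rw [mem_product] at hq
        have hq1 : q.1 ∉ Z' := by
          have := hq.1
          simp only [OutS, mem_filter] at this
          exact this.2
        rcases hP.2 with h | h
        · exact mem_insert_of_mem (by simp [h, hq1])
        · rw [h]; exact mem_insert_self _ _)
      (fun q _ hP => hP.1.1.1)
    refine le_trans hsub ?_
    have hDS : ∀ a ∈ U₁, G.degree a ≤ Kc n := by
      intro a ha
      rw [hdeg a]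
      rw [hU₁, mem_insert, mem_filter] at ha
      rcases ha with rfl | ⟨-, -, ha2⟩
      · exact D_le_K hbig hx
      · exact D_le_K hbig ha2
    refine le_trans (Finset.sum_le_card_nsmul U₁ _ (Kc n) hDS) ?_
    rw [smul_eq_mul]
    have hcard : U₁.card ≤ Kc n + 1 := by
      refine le_trans (card_insert_le _ _) ?_
      have h5 : (univ.filter (fun a => G.Adj x a ∧ a ∉ Z')).card
          = fc univ (fun a => G.Adj x a ∧ a ∉ Z') := card_filter_eq_fc _
      have h6 : fc univ (fun a => G.Adj x a ∧ a ∉ Z') ≤ fc univ (fun a => G.Adj x a) :=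
        fc_mono (fun a _ h => h.1)
      have h7 : fc univ (fun a => G.Adj x a) = D x := by rw [← degree_eq_fc, hdeg]
      have h8 : D x ≤ Kc n := D_le_K hbig hx
      omega
    exact Nat.mul_le_mul_right _ hcard
  -- bad set 2
  have hbad2 : fc (OutS Z' ×ˢ univ) (fun q => PallP Z' F' G q ∧ G.Adj w q.2)
      ≤ Kc n * Kc n := by
    set U₂ : Finset (Fin n) := univ.filter (fun b => G.Adj w b ∧ b ∉ Z') with hU₂
    have hsub := fc_pair_le_sum_right G (OutS Z') univ
      (fun q => PallP Z' F' G q ∧ G.Adj w q.2) U₂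
      (by
        intro q _ hP
        rw [hU₂, mem_filter]
        exact ⟨mem_univ _, hP.2, hP.1.2⟩)
      (fun q _ hP => hP.1.1.1)
    refine le_trans hsub ?_
    have hDS : ∀ a ∈ U₂, G.degree a ≤ Kc n := by
      intro a ha
      rw [hdeg a]
      rw [hU₂, mem_filter] at ha
      exact D_le_K hbig ha.2.2
    refine le_trans (Finset.sum_le_card_nsmul U₂ _ (Kc n) hDS) ?_
    rw [smul_eq_mul]
    have hcard : U₂.card ≤ Kc n := by
      rw [hU₂, card_filter_eq_fc]
      exact crossdeg_le_K hagree hH hdeg hbig hw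
    exact Nat.mul_le_mul_right _ hcard
  -- assemble over ℝ
  have hpall := pall_lower hagree hH hF hFle hdeg hin hout
  have hc : (fc (OutS Z' ×ˢ univ) (PallP Z' F' G) : ℝ)
      ≤ (fc (OutS Z' ×ˢ univ) (goodP Z' F' G x w) : ℝ)
        + ((Kc n : ℝ) + 1) * (Kc n) + (Kc n) * (Kc n) := by
    have := hcover
    have h1 := hbad1
    have h2 := hbad2
    push_cast
    exact_mod_cast le_trans (Nat.cast_le.2 this) (by push_cast; linarith)
  have hnum := numeric_K hn
  have hν : ν * n ≤ (n : ℝ)/1000000 := by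
    have hn0 : (0:ℝ) ≤ (n:ℝ) := Nat.cast_nonneg _
    calc ν * n ≤ (1/1000000) * n := by nlinarith
    _ = (n : ℝ)/1000000 := by ring
  have hn' : (100000000 : ℝ) ≤ (n : ℝ) := by exact_mod_cast hn
  linarith

end GoodPairs

lemma fc_false {α : Type*} (s : Finset α) : fc s (fun _ => False) = 0 := by
  unfold fc
  rw [card_eq_zero]
  ext b
  simp

lemma fc_pair_mul {α β : Type*} (s : Finset α) (t : Finset β) (p : α → Prop) (q : β → Prop) :
    fc (s ×ˢ t) (fun r => p r.1 ∧ q r.2) = fc s p * fc t q := by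
  unfold fc
  rw [← card_product]
  congr 1
  ext r
  simp only [mem_filter, mem_product]
  tauto

def bwdP {n : ℕ} (Z' : Finset (Fin n)) (F' : SimpleGraph (Fin n)) (x z : Fin n)
    (G' : SimpleGraph (Fin n)) : Fin n × Fin n × Fin n → Prop := fun t =>
  (t.1 ∈ Z'.erase z ∧ ¬F'.Adj x t.1 ∧ ¬G'.Adj x t.1)
  ∧ (G'.Adj x t.2.1 ∧ t.2.1 ∉ Z' ∧ ¬F'.Adj x t.2.1)
  ∧ (G'.Adj t.1 t.2.2 ∧ t.2.2 ∉ Z' ∧ ¬F'.Adj t.1 t.2.2)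

section Bwd
variable {n : ℕ} {ν : ℝ} {Z' : Finset (Fin n)} {H' F' : SimpleGraph (Fin n)} {D : Fin n → ℕ}
  {G : SimpleGraph (Fin n)} {x z : Fin n}

lemma bwd_upper
    (hagree : ∀ a b, a ∈ Z' → b ∈ Z' → (G.Adj a b ↔ H'.Adj a b))
    (hH : ∀ a b, H'.Adj a b → a ∈ Z' ∧ b ∈ Z')
    (hF : ∀ a b, F'.Adj a b → ((a ∈ Z' ∧ b ∉ Z') ∨ (a ∉ Z' ∧ b ∈ Z')))
    (hFle : F' ≤ G) (hdeg : ∀ a, G.degree a = D a)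
    (hin : (∑ w ∈ Z', ((D w : ℝ) - (H'.degree w : ℝ) - (F'.degree w : ℝ))) ≤ ν * n) :
    (fc ((univ : Finset (Fin n)) ×ˢ ((univ : Finset (Fin n)) ×ˢ (univ : Finset (Fin n))))
      (bwdP Z' F' x z G) : ℝ) ≤ ((D x : ℝ) - (F'.degree x : ℝ)) * (ν * n) := by
  -- the non-F' degree of x
  have hx1 : fc univ (fun b => G.Adj x b ∧ F'.Adj x b)
      + fc univ (fun b => G.Adj x b ∧ ¬F'.Adj x b) = D x := by
    rw [fc_split univ (fun b => G.Adj x b) (fun b => F'.Adj x b), ← degree_eq_fc, hdeg]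
  have hx2 := fc_adj_and_F hFle x
  have hU : (fc univ (fun b => G.Adj x b ∧ ¬F'.Adj x b) : ℝ)
      = (D x : ℝ) - (F'.degree x : ℝ) := by
    have : fc univ (fun b => G.Adj x b ∧ ¬F'.Adj x b) + F'.degree x = D x := by omega
    have := congrArg (Nat.cast : ℕ → ℝ) this
    push_cast at this
    linarith
  -- split over the first coordinate
  have hsum : fc ((univ : Finset (Fin n)) ×ˢ ((univ : Finset (Fin n)) ×ˢ (univ : Finset (Fin n))))
      (bwdP Z' F' x z G)
      = ∑ w ∈ (univ : Finset (Fin n)), fc ((univ : Finset (Fin n)) ×ˢ (univ : Finset (Fin n)))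
        (fun q => (w ∈ Z'.erase z ∧ ¬F'.Adj x w ∧ ¬G.Adj x w)
          ∧ ((G.Adj x q.1 ∧ q.1 ∉ Z' ∧ ¬F'.Adj x q.1)
            ∧ (G.Adj w q.2 ∧ q.2 ∉ Z' ∧ ¬F'.Adj w q.2))) := by
    rw [← fc_pair_sum (univ : Finset (Fin n)) ((univ : Finset (Fin n)) ×ˢ (univ : Finset (Fin n)))
      (fun w q => (w ∈ Z'.erase z ∧ ¬F'.Adj x w ∧ ¬G.Adj x w)
          ∧ ((G.Adj x q.1 ∧ q.1 ∉ Z' ∧ ¬F'.Adj x q.1)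
            ∧ (G.Adj w q.2 ∧ q.2 ∉ Z' ∧ ¬F'.Adj w q.2)))]
    apply fc_congr
    intro t _
    unfold bwdP
    tauto
  -- per-w bound
  have hperw : ∀ w ∈ (univ : Finset (Fin n)),
      fc ((univ : Finset (Fin n)) ×ˢ (univ : Finset (Fin n)))
        (fun q => (w ∈ Z'.erase z ∧ ¬F'.Adj x w ∧ ¬G.Adj x w)
          ∧ ((G.Adj x q.1 ∧ q.1 ∉ Z' ∧ ¬F'.Adj x q.1)
            ∧ (G.Adj w q.2 ∧ q.2 ∉ Z' ∧ ¬F'.Adj w q.2)))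
      ≤ (if w ∈ Z' then 1 else 0) * (fc univ (fun b => G.Adj x b ∧ ¬F'.Adj x b)
          * fc univ (fun b => (G.Adj w b ∧ ¬F'.Adj w b) ∧ b ∉ Z')) := by
    intro w _
    by_cases hw : w ∈ Z'.erase z
    · have hwZ : w ∈ Z' := mem_of_mem_erase hw
      rw [if_pos hwZ, one_mul]
      have hmono : fc ((univ : Finset (Fin n)) ×ˢ (univ : Finset (Fin n)))
          (fun q => (w ∈ Z'.erase z ∧ ¬F'.Adj x w ∧ ¬G.Adj x w)
            ∧ ((G.Adj x q.1 ∧ q.1 ∉ Z' ∧ ¬F'.Adj x q.1)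
              ∧ (G.Adj w q.2 ∧ q.2 ∉ Z' ∧ ¬F'.Adj w q.2)))
          ≤ fc ((univ : Finset (Fin n)) ×ˢ (univ : Finset (Fin n)))
            (fun q => (G.Adj x q.1 ∧ ¬F'.Adj x q.1)
              ∧ ((G.Adj w q.2 ∧ ¬F'.Adj w q.2) ∧ q.2 ∉ Z')) := by
        apply fc_mono
        intro q _ hq
        exact ⟨⟨hq.2.1.1, hq.2.1.2.2⟩, ⟨hq.2.2.1, hq.2.2.2.2⟩, hq.2.2.2.1⟩
      refine le_trans hmono (le_of_eq ?_)
      exact fc_pair_mul univ univ (fun b => G.Adj x b ∧ ¬F'.Adj x b)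
        (fun b => (G.Adj w b ∧ ¬F'.Adj w b) ∧ b ∉ Z')
    · have h0 : fc ((univ : Finset (Fin n)) ×ˢ (univ : Finset (Fin n)))
          (fun q => (w ∈ Z'.erase z ∧ ¬F'.Adj x w ∧ ¬G.Adj x w)
            ∧ ((G.Adj x q.1 ∧ q.1 ∉ Z' ∧ ¬F'.Adj x q.1)
              ∧ (G.Adj w q.2 ∧ q.2 ∉ Z' ∧ ¬F'.Adj w q.2))) = 0 := by
        rw [← fc_false ((univ : Finset (Fin n)) ×ˢ (univ : Finset (Fin n)))]
        apply fc_congr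
        intro q _
        simp only [iff_false]
        intro hq
        exact hw hq.1.1
      rw [h0]
      exact Nat.zero_le _
  -- sum it up
  have hsum2 : fc ((univ : Finset (Fin n)) ×ˢ ((univ : Finset (Fin n)) ×ˢ (univ : Finset (Fin n))))
      (bwdP Z' F' x z G)
      ≤ ∑ w ∈ Z', fc univ (fun b => G.Adj x b ∧ ¬F'.Adj x b)
          * fc univ (fun b => (G.Adj w b ∧ ¬F'.Adj w b) ∧ b ∉ Z') := by
    rw [hsum]
    refine le_trans (Finset.sum_le_sum hperw) (le_of_eq ?_)
    have hite : ∀ w : Fin n, (if w ∈ Z' then 1 else 0)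
        * (fc univ (fun b => G.Adj x b ∧ ¬F'.Adj x b)
          * fc univ (fun b => (G.Adj w b ∧ ¬F'.Adj w b) ∧ b ∉ Z'))
        = if w ∈ Z' then fc univ (fun b => G.Adj x b ∧ ¬F'.Adj x b)
          * fc univ (fun b => (G.Adj w b ∧ ¬F'.Adj w b) ∧ b ∉ Z') else 0 := by
      intro w
      by_cases h : w ∈ Z' <;> simp [h]
    rw [Finset.sum_congr rfl (fun w _ => hite w), ← Finset.sum_filter]
    apply Finset.sum_congr
    · ext w; simp
    · intro w _; rfl
  -- cast to ℝ
  have hVsum := sum_cOut_le hagree hH hF hFle hdeg hin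
  have hcast : (fc ((univ : Finset (Fin n)) ×ˢ ((univ : Finset (Fin n)) ×ˢ (univ : Finset (Fin n))))
      (bwdP Z' F' x z G) : ℝ)
      ≤ (fc univ (fun b => G.Adj x b ∧ ¬F'.Adj x b) : ℝ)
        * ∑ w ∈ Z', (fc univ (fun b => (G.Adj w b ∧ ¬F'.Adj w b) ∧ b ∉ Z') : ℝ) := by
    rw [Finset.mul_sum]
    have := hsum2
    calc (fc ((univ : Finset (Fin n)) ×ˢ ((univ : Finset (Fin n)) ×ˢ (univ : Finset (Fin n))))
        (bwdP Z' F' x z G) : ℝ)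
        ≤ ((∑ w ∈ Z', fc univ (fun b => G.Adj x b ∧ ¬F'.Adj x b)
          * fc univ (fun b => (G.Adj w b ∧ ¬F'.Adj w b) ∧ b ∉ Z') : ℕ) : ℝ) := by
          exact_mod_cast this
      _ = ∑ w ∈ Z', (fc univ (fun b => G.Adj x b ∧ ¬F'.Adj x b) : ℝ)
          * (fc univ (fun b => (G.Adj w b ∧ ¬F'.Adj w b) ∧ b ∉ Z') : ℝ) := by
          push_cast; ring_nf
  refine le_trans hcast ?_
  rw [hU]
  apply mul_le_mul_of_nonneg_left hVsum
  rw [← hU]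
  exact Nat.cast_nonneg _

end Bwd

def fwdP {n : ℕ} (Z' : Finset (Fin n)) (F' : SimpleGraph (Fin n)) (x z : Fin n)
    (G : SimpleGraph (Fin n)) : Fin n × Fin n × Fin n → Prop := fun t =>
  (t.1 ∈ Z'.erase z ∧ G.Adj x t.1 ∧ ¬F'.Adj x t.1) ∧ goodP Z' F' G x t.1 t.2

def bs {n : ℕ} (Z' : Finset (Fin n)) (F' : SimpleGraph (Fin n)) (x z : Fin n)
    (G : SimpleGraph (Fin n)) : Finset (Fin n) :=
  (Z'.erase z).filter (fun w => G.Adj x w ∧ ¬F'.Adj x w)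

section Fwd
variable {n : ℕ} {ν : ℝ} {Z' : Finset (Fin n)} {H' F' : SimpleGraph (Fin n)} {D : Fin n → ℕ}
  {G : SimpleGraph (Fin n)} {x z : Fin n}

lemma fwd_lower (hn : 100000000 ≤ n) (hν0 : 0 < ν) (hν1 : ν ≤ 1/1000000)
    (hagree : ∀ a b, a ∈ Z' → b ∈ Z' → (G.Adj a b ↔ H'.Adj a b))
    (hH : ∀ a b, H'.Adj a b → a ∈ Z' ∧ b ∈ Z')
    (hF : ∀ a b, F'.Adj a b → ((a ∈ Z' ∧ b ∉ Z') ∨ (a ∉ Z' ∧ b ∈ Z')))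
    (hFle : F' ≤ G) (hdeg : ∀ a, G.degree a = D a)
    (hbig : ∀ w : Fin n, (n : ℝ) ^ ((1:ℝ)/4) < (D w : ℝ) → w ∈ Z' ∧ H'.degree w = D w)
    (hin : (∑ w ∈ Z', ((D w : ℝ) - (H'.degree w : ℝ) - (F'.degree w : ℝ))) ≤ ν * n)
    (hout : (n : ℝ)/20 ≤ ∑ w ∈ OutS Z', ((D w : ℝ) - (F'.degree w : ℝ)))
    (hx : x ∉ Z') :
    ((bs Z' F' x z G).card : ℝ) * ((n : ℝ)/21)
      ≤ (fc ((univ : Finset (Fin n)) ×ˢ (OutS Z' ×ˢ (univ : Finset (Fin n))))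
          (fwdP Z' F' x z G) : ℝ) := by
  have hsum : fc ((univ : Finset (Fin n)) ×ˢ (OutS Z' ×ˢ (univ : Finset (Fin n))))
      (fwdP Z' F' x z G)
      = ∑ w ∈ (univ : Finset (Fin n)), fc (OutS Z' ×ˢ (univ : Finset (Fin n)))
          (fun q => (w ∈ Z'.erase z ∧ G.Adj x w ∧ ¬F'.Adj x w) ∧ goodP Z' F' G x w q) := by
    rw [← fc_pair_sum (univ : Finset (Fin n)) (OutS Z' ×ˢ (univ : Finset (Fin n)))
      (fun w q => (w ∈ Z'.erase z ∧ G.Adj x w ∧ ¬F'.Adj x w) ∧ goodP Z' F' G x w q)]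
    apply fc_congr
    intro t _
    unfold fwdP
    exact Iff.rfl
  have hcast : (fc ((univ : Finset (Fin n)) ×ˢ (OutS Z' ×ˢ (univ : Finset (Fin n))))
      (fwdP Z' F' x z G) : ℝ)
      = ∑ w ∈ (univ : Finset (Fin n)), (fc (OutS Z' ×ˢ (univ : Finset (Fin n)))
          (fun q => (w ∈ Z'.erase z ∧ G.Adj x w ∧ ¬F'.Adj x w) ∧ goodP Z' F' G x w q) : ℝ) := by
    rw [hsum]
    push_cast
    rfl
  rw [hcast]
  have hsub : (bs Z' F' x z G) ⊆ (univ : Finset (Fin n)) := subset_univ _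
  have h1 : ∑ w ∈ bs Z' F' x z G, (fc (OutS Z' ×ˢ (univ : Finset (Fin n)))
        (fun q => (w ∈ Z'.erase z ∧ G.Adj x w ∧ ¬F'.Adj x w) ∧ goodP Z' F' G x w q) : ℝ)
      ≤ ∑ w ∈ (univ : Finset (Fin n)), (fc (OutS Z' ×ˢ (univ : Finset (Fin n)))
        (fun q => (w ∈ Z'.erase z ∧ G.Adj x w ∧ ¬F'.Adj x w) ∧ goodP Z' F' G x w q) : ℝ) :=
    Finset.sum_le_sum_of_subset_of_nonneg hsub (fun _ _ _ => Nat.cast_nonneg _)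
  refine le_trans ?_ h1
  have h2 : ∀ w ∈ bs Z' F' x z G, ((n:ℝ)/21) ≤ (fc (OutS Z' ×ˢ (univ : Finset (Fin n)))
      (fun q => (w ∈ Z'.erase z ∧ G.Adj x w ∧ ¬F'.Adj x w) ∧ goodP Z' F' G x w q) : ℝ) := by
    intro w hw
    rw [bs, mem_filter] at hw
    have heq : fc (OutS Z' ×ˢ (univ : Finset (Fin n)))
        (fun q => (w ∈ Z'.erase z ∧ G.Adj x w ∧ ¬F'.Adj x w) ∧ goodP Z' F' G x w q)
        = fc (OutS Z' ×ˢ (univ : Finset (Fin n))) (goodP Z' F' G x w) := by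
      apply fc_congr
      intro q _
      constructor
      · exact fun h => h.2
      · exact fun h => ⟨⟨hw.1, hw.2⟩, h⟩
    rw [heq]
    exact good_pairs_lower hn hν0 hν1 hagree hH hF hFle hdeg hbig hin hout hx
      (mem_of_mem_erase hw.1)
  calc ((bs Z' F' x z G).card : ℝ) * ((n : ℝ)/21)
      = ∑ _w ∈ bs Z' F' x z G, ((n:ℝ)/21) := by rw [Finset.sum_const, nsmul_eq_mul]
    _ ≤ _ := Finset.sum_le_sum h2

end Fwd

section SwitchProps
variable {n : ℕ} {Z' : Finset (Fin n)} {H' F' : SimpleGraph (Fin n)} {D : Fin n → ℕ}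
  {G : SimpleGraph (Fin n)} {x z w u v : Fin n}

lemma switch_props
    (hH : ∀ a b, H'.Adj a b → a ∈ Z' ∧ b ∈ Z')
    (hF : ∀ a b, F'.Adj a b → ((a ∈ Z' ∧ b ∉ Z') ∨ (a ∉ Z' ∧ b ∈ Z')))
    (hx : x ∉ Z') (hz : z ∈ Z')
    (hagree : ∀ a b, a ∈ Z' → b ∈ Z' → (G.Adj a b ↔ H'.Adj a b))
    (hFle : F' ≤ G) (hdeg : ∀ a, G.degree a = D a)
    (hwmem : w ∈ Z'.erase z) (hxw : G.Adj x w) (hxwF : ¬F'.Adj x w)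
    (huO : u ∉ Z') (hvO : v ∉ Z') (huv : G.Adj u v) (huvF : ¬F'.Adj u v)
    (hxu : ¬G.Adj x u) (hux : u ≠ x) (hwv : ¬G.Adj w v) :
    (∀ a, (switchGraph G x w u v).degree a = D a)
    ∧ (∀ a b, a ∈ Z' → b ∈ Z' → ((switchGraph G x w u v).Adj a b ↔ H'.Adj a b))
    ∧ F' ≤ switchGraph G x w u v
    ∧ ((switchGraph G x w u v).Adj x z ↔ G.Adj x z)
    ∧ bs Z' F' x z (switchGraph G x w u v) = (bs Z' F' x z G).erase w
    ∧ w ∈ bs Z' F' x z G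
    ∧ (¬(switchGraph G x w u v).Adj x w ∧ (switchGraph G x w u v).Adj x u
        ∧ ¬F'.Adj x u ∧ (switchGraph G x w u v).Adj w v ∧ ¬F'.Adj w v)
    ∧ switchGraph (switchGraph G x w u v) x u w v = G := by
  have hwZ : w ∈ Z' := mem_of_mem_erase hwmem
  have hwz : w ≠ z := (mem_erase.1 hwmem).1
  have hxwne : x ≠ w := fun e => hx (e ▸ hwZ)
  have hxune : x ≠ u := hux.symm
  have hxvne : x ≠ v := fun e => hwv (e ▸ hxw.symm)
  have hwune : w ≠ u := fun e => huO (e ▸ hwZ)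
  have hwvne : w ≠ v := fun e => hvO (e ▸ hwZ)
  have huvne : u ≠ v := huv.ne
  have hzu : z ≠ u := fun e => huO (e ▸ hz)
  refine ⟨?_, ?_, ?_, ?_, ?_, ?_, ⟨?_, ?_, ?_, ?_, ?_⟩, ?_⟩
  · intro a
    rw [switch_degree hxwne hxune hxvne hwune hwvne huvne hxw huv hxu hwv a, hdeg a]
  · intro a b ha hb
    rw [switch_adj_inside hx huO hvO ha hb]
    exact hagree a b ha hb
  · exact switch_le hFle hxwF huvF
  · rw [switch_adj_x hxwne hxune hxvne z]
    constructor
    · rintro (rfl | ⟨-, h⟩)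
      · exact absurd hz huO
      · exact h
    · intro h
      exact Or.inr ⟨fun e => hwz e.symm, h⟩
  · ext b
    rw [bs, bs]
    simp only [mem_erase, mem_filter]
    rw [switch_adj_x hxwne hxune hxvne b]
    constructor
    · rintro ⟨⟨hbz, hbZ⟩, (rfl | ⟨hbw, hadj⟩), hb3⟩
      · exact absurd hbZ huO
      · exact ⟨hbw, ⟨hbz, hbZ⟩, hadj, hb3⟩
    · rintro ⟨hbw, ⟨hbz, hbZ⟩, hadj, hb3⟩
      exact ⟨⟨hbz, hbZ⟩, Or.inr ⟨hbw, hadj⟩, hb3⟩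
  · rw [bs, mem_filter]
    exact ⟨hwmem, hxw, hxwF⟩
  · rw [switch_adj_x hxwne hxune hxvne w]
    rintro (h | ⟨h, -⟩)
    · exact hwune h
    · exact h rfl
  · rw [switch_adj_x hxwne hxune hxvne u]
    exact Or.inl rfl
  · exact fun h => hxu (hFle h)
  · exact Or.inr (Or.inr ⟨hwvne, Or.inl ⟨rfl, rfl⟩⟩)
  · exact fun h => hwv (hFle h)
  · exact switch_switch hxwne hxune hxvne hwune hwvne huvne hxw huv hxu hwv

end SwitchProps

def clsA {n : ℕ} (Z' : Finset (Fin n)) (H' F' : SimpleGraph (Fin n)) (x z : Fin n)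
    (D : Fin n → ℕ) (E : SimpleGraph (Fin n) → Prop) (j : ℕ) : Finset (SimpleGraph (Fin n)) :=
  (graphsWithDegreeSeq n D).filter (fun G =>
    (((∀ a b, a ∈ Z' → b ∈ Z' → (G.Adj a b ↔ H'.Adj a b)) ∧ F' ≤ G) ∧ E G)
    ∧ (bs Z' F' x z G).card = j)

lemma mem_clsA {n : ℕ} {Z' : Finset (Fin n)} {H' F' : SimpleGraph (Fin n)} {x z : Fin n}
    {D : Fin n → ℕ} {E : SimpleGraph (Fin n) → Prop} {j : ℕ} {G : SimpleGraph (Fin n)} :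
    G ∈ clsA Z' H' F' x z D E j ↔
    ((∀ v, G.degree v = D v)
      ∧ (((∀ a b, a ∈ Z' → b ∈ Z' → (G.Adj a b ↔ H'.Adj a b)) ∧ F' ≤ G) ∧ E G)
      ∧ (bs Z' F' x z G).card = j) := by
  rw [clsA, mem_filter, graphsWithDegreeSeq, mem_filter]
  simp only [mem_univ, true_and]

section Ratio
variable {n : ℕ} {ν : ℝ} {Z' : Finset (Fin n)} {H' F' : SimpleGraph (Fin n)} {D : Fin n → ℕ}
  {x z : Fin n} {E : SimpleGraph (Fin n) → Prop}

lemma ratio_step (hn : 100000000 ≤ n) (hν0 : 0 < ν) (hν1 : ν ≤ 1/1000000)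
    (hH : ∀ a b, H'.Adj a b → a ∈ Z' ∧ b ∈ Z')
    (hF : ∀ a b, F'.Adj a b → ((a ∈ Z' ∧ b ∉ Z') ∨ (a ∉ Z' ∧ b ∈ Z')))
    (hx : x ∉ Z') (hz : z ∈ Z')
    (hbig : ∀ w : Fin n, (n : ℝ) ^ ((1:ℝ)/4) < (D w : ℝ) → w ∈ Z' ∧ H'.degree w = D w)
    (hin : (∑ w ∈ Z', ((D w : ℝ) - (H'.degree w : ℝ) - (F'.degree w : ℝ))) ≤ ν * n)
    (hout : (n : ℝ)/20 ≤ ∑ w ∈ OutS Z', ((D w : ℝ) - (F'.degree w : ℝ)))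
    (hE : ∀ G G' : SimpleGraph (Fin n), (G.Adj x z ↔ G'.Adj x z) → (E G → E G'))
    (j : ℕ) :
    ((clsA Z' H' F' x z D E (j+1)).card : ℝ) * (((j : ℝ)+1) * ((n : ℝ)/21))
      ≤ ((clsA Z' H' F' x z D E j).card : ℝ)
        * (((D x : ℝ) - (F'.degree x : ℝ)) * (ν * n)) := by
  classical
  set A1 := clsA Z' H' F' x z D E (j+1) with hA1
  set A0 := clsA Z' H' F' x z D E j with hA0
  set tripF : Finset (Fin n × Fin n × Fin n) :=
    (univ : Finset (Fin n)) ×ˢ (OutS Z' ×ˢ (univ : Finset (Fin n))) with htripF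
  set tripB : Finset (Fin n × Fin n × Fin n) :=
    (univ : Finset (Fin n)) ×ˢ ((univ : Finset (Fin n)) ×ˢ (univ : Finset (Fin n))) with htripB
  set S := (A1 ×ˢ tripF).filter (fun y => fwdP Z' F' x z y.1 y.2) with hS
  set T := (A0 ×ˢ tripB).filter (fun y => bwdP Z' F' x z y.1 y.2) with hT
  -- Step 1: lower bound on |S|
  have hScard : S.card = ∑ G ∈ A1, fc tripF (fwdP Z' F' x z G) := by
    rw [hS, card_filter_eq_fc]
    exact fc_pair_sum A1 tripF (fun G t => fwdP Z' F' x z G t)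
  have hSlow : ((A1.card : ℝ)) * (((j : ℝ)+1) * ((n : ℝ)/21)) ≤ (S.card : ℝ) := by
    rw [hScard]
    have : ∀ G ∈ A1, ((j : ℝ)+1) * ((n : ℝ)/21) ≤ (fc tripF (fwdP Z' F' x z G) : ℝ) := by
      intro G hG
      rw [hA1, mem_clsA] at hG
      obtain ⟨hdeg, ⟨⟨hagree, hFle⟩, -⟩, hbc⟩ := hG
      have := fwd_lower hn hν0 hν1 hagree hH hF hFle hdeg hbig hin hout hx (z := z)
      rw [hbc] at this
      push_cast at this
      exact this
    calc ((A1.card : ℝ)) * (((j : ℝ)+1) * ((n : ℝ)/21))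
        = ∑ _G ∈ A1, ((j : ℝ)+1) * ((n : ℝ)/21) := by rw [Finset.sum_const, nsmul_eq_mul]
      _ ≤ ∑ G ∈ A1, (fc tripF (fwdP Z' F' x z G) : ℝ) := Finset.sum_le_sum this
      _ = ((∑ G ∈ A1, fc tripF (fwdP Z' F' x z G) : ℕ) : ℝ) := by push_cast; rfl
  -- Step 2: |S| ≤ |T| via switching
  have hST : S.card ≤ T.card := by
    apply Finset.card_le_card_of_injOn
      (fun y => (switchGraph y.1 x y.2.1 y.2.2.1 y.2.2.2, y.2))
    · -- maps S into T
      rintro ⟨G, w, u, v⟩ hy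
      rw [hS, Finset.mem_coe, mem_filter, mem_product] at hy
      obtain ⟨⟨hGA1, htrip⟩, hfwd⟩ := hy
      rw [htripF, mem_product] at htrip
      have huO : u ∉ Z' := by
        have := htrip.2
        rw [mem_product] at this
        have := this.1
        simp only [OutS, mem_filter] at this
        exact this.2
      rw [hA1, mem_clsA] at hGA1
      obtain ⟨hdeg, ⟨⟨hagree, hFle⟩, hEG⟩, hbc⟩ := hGA1
      obtain ⟨⟨hwmem, hxw, hxwF⟩, ⟨⟨huv, huvF⟩, hvO⟩, hnxu, hune, hnwv⟩ := hfwd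
      obtain ⟨hdeg', hagree', hFle', hxziff, hbs', hwbs, hbwd, -⟩ :=
        switch_props hH hF hx hz hagree hFle hdeg hwmem hxw hxwF huO hvO huv huvF hnxu hune hnwv
      rw [hT, Finset.mem_coe, mem_filter, mem_product]
      refine ⟨⟨?_, ?_⟩, ?_⟩
      · rw [hA0, mem_clsA]
        refine ⟨hdeg', ⟨⟨hagree', hFle'⟩, hE G _ hxziff.symm hEG⟩, ?_⟩
        rw [hbs', card_erase_of_mem hwbs, hbc]
        omega
      · rw [htripB, mem_product, mem_product]
        exact ⟨mem_univ _, mem_univ _, mem_univ _⟩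
      · exact ⟨⟨hwmem, hxwF, hbwd.1⟩, ⟨hbwd.2.1, huO, hbwd.2.2.1⟩,
          ⟨hbwd.2.2.2.1, hvO, hbwd.2.2.2.2⟩⟩
    · -- injectivity
      rintro ⟨G1, w1, u1, v1⟩ hy1 ⟨G2, w2, u2, v2⟩ hy2 heq
      simp only [Finset.mem_coe] at hy1 hy2
      have h2 : (w1, u1, v1) = (w2, u2, v2) := congrArg Prod.snd heq
      have h1 : switchGraph G1 x w1 u1 v1 = switchGraph G2 x w2 u2 v2 := congrArg Prod.fst heq
      obtain ⟨rfl, rfl, rfl⟩ : w1 = w2 ∧ u1 = u2 ∧ v1 = v2 := by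
        rw [Prod.ext_iff, Prod.ext_iff] at h2
        exact ⟨h2.1, h2.2.1, h2.2.2⟩
      have hrec : ∀ G : SimpleGraph (Fin n), (G, w1, u1, v1) ∈ S →
          switchGraph (switchGraph G x w1 u1 v1) x u1 w1 v1 = G := by
        intro G hy
        rw [hS, mem_filter, mem_product] at hy
        obtain ⟨⟨hGA1, htrip⟩, hfwd⟩ := hy
        rw [htripF, mem_product] at htrip
        have huO : u1 ∉ Z' := by
          have := htrip.2
          rw [mem_product] at this
          have := this.1
          simp only [OutS, mem_filter] at this
          exact this.2
        rw [hA1, mem_clsA] at hGA1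
        obtain ⟨hdeg, ⟨⟨hagree, hFle⟩, hEG⟩, hbc⟩ := hGA1
        obtain ⟨⟨hwmem, hxw, hxwF⟩, ⟨⟨huv, huvF⟩, hvO⟩, hnxu, hune, hnwv⟩ := hfwd
        exact (switch_props hH hF hx hz hagree hFle hdeg hwmem hxw hxwF huO hvO huv huvF
          hnxu hune hnwv).2.2.2.2.2.2.2
      have e1 := hrec G1 hy1
      have e2 := hrec G2 hy2
      rw [h1] at e1
      rw [e2] at e1
      rw [Prod.ext_iff]
      exact ⟨e1.symm, rfl⟩
  -- Step 3: upper bound on |T|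
  have hTcard : T.card = ∑ G ∈ A0, fc tripB (bwdP Z' F' x z G) := by
    rw [hT, card_filter_eq_fc]
    exact fc_pair_sum A0 tripB (fun G t => bwdP Z' F' x z G t)
  have hThigh : (T.card : ℝ) ≤ ((A0.card : ℝ))
      * (((D x : ℝ) - (F'.degree x : ℝ)) * (ν * n)) := by
    rw [hTcard]
    have hb : ∀ G ∈ A0, (fc tripB (bwdP Z' F' x z G) : ℝ)
        ≤ ((D x : ℝ) - (F'.degree x : ℝ)) * (ν * n) := by
      intro G hG
      rw [hA0, mem_clsA] at hG
      obtain ⟨hdeg, ⟨⟨hagree, hFle⟩, -⟩, -⟩ := hG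
      exact bwd_upper hagree hH hF hFle hdeg hin
    calc ((∑ G ∈ A0, fc tripB (bwdP Z' F' x z G) : ℕ) : ℝ)
        = ∑ G ∈ A0, (fc tripB (bwdP Z' F' x z G) : ℝ) := by push_cast; rfl
      _ ≤ ∑ _G ∈ A0, ((D x : ℝ) - (F'.degree x : ℝ)) * (ν * n) := Finset.sum_le_sum hb
      _ = ((A0.card : ℝ)) * (((D x : ℝ) - (F'.degree x : ℝ)) * (ν * n)) := by
          rw [Finset.sum_const, nsmul_eq_mul]
  have hSTr : (S.card : ℝ) ≤ (T.card : ℝ) := Nat.cast_le.2 hST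
  linarith

end Ratio

section Master
variable {n : ℕ} {ν : ℝ} {Z' : Finset (Fin n)} {H' F' : SimpleGraph (Fin n)} {D : Fin n → ℕ}
  {x z : Fin n} {E : SimpleGraph (Fin n) → Prop}

lemma geom_tail_le {c : ℝ} (hc0 : 0 ≤ c) (hc1 : c < 1) (N : ℕ) :
    ∑ k ∈ Finset.range N, c ^ k ≤ 1 / (1 - c) := by
  have h1 : 0 < 1 - c := by linarith
  rw [le_div_iff₀ h1]
  have h2 := geom_sum_mul c N
  have h3 : (∑ k ∈ Finset.range N, c ^ k) * (1 - c) = 1 - c ^ N := by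
    have := congrArg Neg.neg h2
    ring_nf at this ⊢
    linarith [h2]
  rw [h3]
  have := pow_nonneg hc0 N
  linarith

lemma master (hn : 100000000 ≤ n) (hν0 : 0 < ν) (hν1 : ν ≤ 1/1000000)
    (hH : ∀ a b, H'.Adj a b → a ∈ Z' ∧ b ∈ Z')
    (hF : ∀ a b, F'.Adj a b → ((a ∈ Z' ∧ b ∉ Z') ∨ (a ∉ Z' ∧ b ∈ Z')))
    (hx : x ∉ Z') (hz : z ∈ Z') (hxzF : ¬F'.Adj x z)
    (hbig : ∀ w : Fin n, (n : ℝ) ^ ((1:ℝ)/4) < (D w : ℝ) → w ∈ Z' ∧ H'.degree w = D w)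
    (hin : (∑ w ∈ Z', ((D w : ℝ) - (H'.degree w : ℝ) - (F'.degree w : ℝ))) ≤ ν * n)
    (hout : (n : ℝ)/20 ≤ ∑ w ∈ OutS Z', ((D w : ℝ) - (F'.degree w : ℝ)))
    (hE : ∀ G G' : SimpleGraph (Fin n), (G.Adj x z ↔ G'.Adj x z) → (E G → E G'))
    (i : ℕ)
    (hpos : 0 < ((graphsWithDegreeSeq n D).filter (fun G =>
      ((∀ a b, a ∈ Z' → b ∈ Z' → (G.Adj a b ↔ H'.Adj a b)) ∧ F' ≤ G) ∧ E G)).card) :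
    (((graphsWithDegreeSeq n D).filter (fun G =>
        ((⌊Real.sqrt ν * ((D x : ℝ) - (F'.degree x : ℝ))⌋ : ℝ) + i <
          (degIn G x (Z'.erase z) : ℝ) - (F'.degree x : ℝ))
        ∧ (((∀ a b, a ∈ Z' → b ∈ Z' → (G.Adj a b ↔ H'.Adj a b)) ∧ F' ≤ G) ∧ E G))).card : ℝ)
      / (((graphsWithDegreeSeq n D).filter (fun G =>
        ((∀ a b, a ∈ Z' → b ∈ Z' → (G.Adj a b ↔ H'.Adj a b)) ∧ F' ≤ G) ∧ E G)).card : ℝ)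
      ≤ (22 * Real.sqrt ν) ^ (i + 1) := by
  classical
  set cls := (graphsWithDegreeSeq n D).filter (fun G =>
      ((∀ a b, a ∈ Z' → b ∈ Z' → (G.Adj a b ↔ H'.Adj a b)) ∧ F' ≤ G) ∧ E G) with hcls
  set Num := (graphsWithDegreeSeq n D).filter (fun G =>
      ((⌊Real.sqrt ν * ((D x : ℝ) - (F'.degree x : ℝ))⌋ : ℝ) + i <
        (degIn G x (Z'.erase z) : ℝ) - (F'.degree x : ℝ))
      ∧ (((∀ a b, a ∈ Z' → b ∈ Z' → (G.Adj a b ↔ H'.Adj a b)) ∧ F' ≤ G) ∧ E G)) with hNum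
  -- basic quantities
  have hsq : Real.sqrt ν ≤ 1/1000 := by
    have h1 : Real.sqrt ν ≤ Real.sqrt (1/1000000) := Real.sqrt_le_sqrt hν1
    have h2 : Real.sqrt (1/1000000) = 1/1000 := by
      rw [show (1/1000000 : ℝ) = (1/1000 : ℝ)^2 by norm_num, Real.sqrt_sq (by norm_num)]
    linarith
  have hsq0 : 0 < Real.sqrt ν := Real.sqrt_pos.2 hν0
  set c : ℝ := 21 * Real.sqrt ν with hc
  have hc0 : 0 ≤ c := by positivity
  have hc1 : c < 1 := by rw [hc]; nlinarith
  -- a graph in the class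
  obtain ⟨G₀, hG₀⟩ : ∃ G₀, G₀ ∈ cls := Finset.card_pos.1 hpos
  rw [hcls, mem_filter, graphsWithDegreeSeq, mem_filter] at hG₀
  obtain ⟨⟨-, hdeg₀⟩, ⟨-, hFle₀⟩, -⟩ := hG₀
  have hyx : F'.degree x ≤ D x := by
    rw [← hdeg₀ x, SimpleGraph.degree, SimpleGraph.degree]
    apply card_le_card
    intro b hb
    rw [SimpleGraph.mem_neighborFinset] at hb ⊢
    exact hFle₀ hb
  set t : ℝ := (D x : ℝ) - (F'.degree x : ℝ) with ht
  have ht0 : 0 ≤ t := by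
    rw [ht]
    have : (F'.degree x : ℝ) ≤ (D x : ℝ) := by exact_mod_cast hyx
    linarith
  set s : ℝ := Real.sqrt ν * t with hs
  have hs0 : 0 ≤ s := mul_nonneg hsq0.le ht0
  set m : ℕ := (⌊s⌋).toNat with hm
  have hmf : ((m : ℕ) : ℝ) = (⌊s⌋ : ℝ) := by
    rw [hm]
    exact_mod_cast Int.toNat_of_nonneg (Int.floor_nonneg.2 hs0)
  have hsm : s < (m : ℝ) + 1 := by
    rw [hmf]
    exact Int.lt_floor_add_one s
  -- characterisation of the numerator condition within the class
  have hdegIn : ∀ G : SimpleGraph (Fin n), F' ≤ G →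
      degIn G x (Z'.erase z) = F'.degree x + (bs Z' F' x z G).card := by
    intro G hFle
    have e0 : degIn G x (Z'.erase z) = fc (Z'.erase z) (fun b => G.Adj x b) :=
      card_filter_eq_fc _
    have e1 : (bs Z' F' x z G).card
        = fc (Z'.erase z) (fun b => G.Adj x b ∧ ¬F'.Adj x b) := card_filter_eq_fc _
    have e2 : fc (Z'.erase z) (fun b => G.Adj x b ∧ F'.Adj x b) = F'.degree x := by
      rw [← SimpleGraph.card_neighborFinset_eq_degree]
      unfold fc
      congr 1
      ext b
      simp only [mem_filter, mem_erase, SimpleGraph.mem_neighborFinset]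
      constructor
      · rintro ⟨-, -, h⟩; exact h
      · intro h
        have hbZ : b ∈ Z' := by
          rcases hF x b h with ⟨hxZ, -⟩ | ⟨-, hbZ⟩
          · exact absurd hxZ hx
          · exact hbZ
        have hbz : b ≠ z := fun e => hxzF (e ▸ h)
        exact ⟨⟨hbz, hbZ⟩, hFle h, h⟩
    have e3 := fc_split (Z'.erase z) (fun b => G.Adj x b) (fun b => F'.Adj x b)
    omega
  have hQiff : ∀ G : SimpleGraph (Fin n), F' ≤ G →
      (((⌊Real.sqrt ν * ((D x : ℝ) - (F'.degree x : ℝ))⌋ : ℝ) + i <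
        (degIn G x (Z'.erase z) : ℝ) - (F'.degree x : ℝ))
        ↔ m + i + 1 ≤ (bs Z' F' x z G).card) := by
    intro G hFle
    have hd := hdegIn G hFle
    have hdr : (degIn G x (Z'.erase z) : ℝ)
        = (F'.degree x : ℝ) + ((bs Z' F' x z G).card : ℝ) := by exact_mod_cast hd
    constructor
    · intro h
      rw [hdr] at h
      have : ((m : ℕ) : ℝ) + i < ((bs Z' F' x z G).card : ℝ) := by
        rw [hmf]
        rw [← hs] at h
        linarith
      have : ((m + i : ℕ) : ℝ) < ((bs Z' F' x z G).card : ℝ) := by push_cast; linarith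
      have := Nat.cast_lt.mp this
      omega
    · intro h
      rw [hdr, ← hs, ← hmf]
      have : ((m + i + 1 : ℕ) : ℝ) ≤ ((bs Z' F' x z G).card : ℝ) := by exact_mod_cast h
      push_cast at this
      linarith
  -- numerator as a sum over levels
  have hNumsum : Num.card = ∑ j ∈ Finset.Icc (m+i+1) n, (clsA Z' H' F' x z D E j).card := by
    rw [Finset.card_eq_sum_card_fiberwise
      (f := fun G => (bs Z' F' x z G).card) (t := Finset.Icc (m+i+1) n) ?_]
    · apply Finset.sum_congr rfl
      intro j hj
      rw [Finset.mem_Icc] at hj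
      congr 1
      ext G
      rw [mem_filter, hNum, mem_filter, mem_clsA]
      constructor
      · rintro ⟨⟨hGr, hQ, hP⟩, hcard⟩
        rw [graphsWithDegreeSeq, mem_filter] at hGr
        exact ⟨hGr.2, hP, hcard⟩
      · rintro ⟨hdeg, hP, hcard⟩
        refine ⟨⟨?_, ?_, hP⟩, hcard⟩
        · rw [graphsWithDegreeSeq, mem_filter]; exact ⟨mem_univ _, hdeg⟩
        · rw [hQiff G hP.1.2, hcard]
          omega
    · intro G hG
      rw [hNum, Finset.mem_coe, mem_filter] at hG
      rw [Finset.mem_coe, Finset.mem_Icc]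
      constructor
      · rw [← hQiff G hG.2.2.1.2]; exact hG.2.1
      · calc (bs Z' F' x z G).card ≤ (Z'.erase z).card := card_le_card (filter_subset _ _)
          _ ≤ (univ : Finset (Fin n)).card := card_le_card (subset_univ _)
          _ = n := by rw [card_univ, Fintype.card_fin]
  -- the chain inequality
  have hchain : ∀ k : ℕ, s < (k : ℝ) + 1 →
      ((clsA Z' H' F' x z D E (k+1)).card : ℝ) ≤ c * ((clsA Z' H' F' x z D E k).card : ℝ) := by
    intro k hk
    have hstep := ratio_step hn hν0 hν1 hH hF hx hz hbig hin hout hE k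
    have hX : 0 < ((k : ℝ) + 1) * ((n : ℝ)/21) := by
      have : (0:ℝ) < (n:ℝ) := by
        have : (100000000 : ℝ) ≤ (n : ℝ) := by exact_mod_cast hn
        linarith
      positivity
    have hkey : t * (ν * n) ≤ ((k : ℝ) + 1) * ((n : ℝ)/21) * c := by
      have hn0 : (0:ℝ) ≤ (n:ℝ) := Nat.cast_nonneg _
      have h1 : t * (ν * n) = s * (Real.sqrt ν * n) := by
        rw [hs, show (Real.sqrt ν * t) * (Real.sqrt ν * (n:ℝ))
          = (Real.sqrt ν * Real.sqrt ν) * (t * (n:ℝ)) from by ring,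
          Real.mul_self_sqrt hν0.le]
        ring
      have h2 : s * (Real.sqrt ν * n) ≤ (((k:ℝ)+1)) * (Real.sqrt ν * n) := by
        apply mul_le_mul_of_nonneg_right (le_of_lt hk) (by positivity)
      have h3 : (((k:ℝ)+1)) * (Real.sqrt ν * n) = ((k : ℝ) + 1) * ((n : ℝ)/21) * c := by
        rw [hc]; ring
      rw [h1, ← h3]
      exact h2
    have h4 : ((clsA Z' H' F' x z D E (k+1)).card : ℝ) * (((k : ℝ)+1) * ((n : ℝ)/21))
        ≤ ((clsA Z' H' F' x z D E k).card : ℝ) * (((k : ℝ) + 1) * ((n : ℝ)/21) * c) := by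
      refine le_trans hstep ?_
      have hteq : ((D x : ℝ) - (F'.degree x : ℝ)) * (ν * (n:ℝ)) = t * (ν * (n:ℝ)) := by
        rw [ht]
      rw [hteq]
      exact mul_le_mul_of_nonneg_left hkey (Nat.cast_nonneg _)
    have h5 : ((clsA Z' H' F' x z D E (k+1)).card : ℝ) * (((k : ℝ)+1) * ((n : ℝ)/21))
        ≤ (c * ((clsA Z' H' F' x z D E k).card : ℝ)) * (((k : ℝ)+1) * ((n : ℝ)/21)) :=
      le_trans h4 (le_of_eq (by ring))
    exact le_of_mul_le_mul_right h5 hX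
  -- iterate the chain
  have hiter : ∀ tt : ℕ, ((clsA Z' H' F' x z D E (m+1+tt)).card : ℝ)
      ≤ c ^ (tt+1) * ((clsA Z' H' F' x z D E m).card : ℝ) := by
    intro tt
    induction tt with
    | zero =>
        have := hchain m hsm
        simpa using this
    | succ tt ih =>
        have hs' : s < ((m+1+tt : ℕ) : ℝ) + 1 := by
          push_cast
          linarith [hsm]
        have hstep := hchain (m+1+tt) hs'
        have : (m+1+(tt+1)) = (m+1+tt)+1 := by omega
        rw [this]
        calc ((clsA Z' H' F' x z D E ((m+1+tt)+1)).card : ℝ)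
            ≤ c * ((clsA Z' H' F' x z D E (m+1+tt)).card : ℝ) := hstep
          _ ≤ c * (c ^ (tt+1) * ((clsA Z' H' F' x z D E m).card : ℝ)) :=
              mul_le_mul_of_nonneg_left ih hc0
          _ = c ^ (tt+1+1) * ((clsA Z' H' F' x z D E m).card : ℝ) := by ring
  -- bound each level in the numerator range
  have hlevel : ∀ j ∈ Finset.Icc (m+i+1) n,
      ((clsA Z' H' F' x z D E j).card : ℝ)
      ≤ c ^ (j - m) * ((clsA Z' H' F' x z D E m).card : ℝ) := by
    intro j hj
    rw [Finset.mem_Icc] at hj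
    have hj1 : m + 1 + (j - m - 1) = j := by omega
    have := hiter (j - m - 1)
    rw [hj1] at this
    have he : (j - m - 1) + 1 = j - m := by omega
    rw [he] at this
    exact this
  -- numerator bound
  have hNumR : (Num.card : ℝ)
      ≤ (c ^ (i+1) / (1 - c)) * ((clsA Z' H' F' x z D E m).card : ℝ) := by
    have h1 : (Num.card : ℝ) = ∑ j ∈ Finset.Icc (m+i+1) n,
        ((clsA Z' H' F' x z D E j).card : ℝ) := by
      rw [hNumsum]; push_cast; rfl
    rw [h1]
    have h2 : ∑ j ∈ Finset.Icc (m+i+1) n, ((clsA Z' H' F' x z D E j).card : ℝ)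
        ≤ ∑ j ∈ Finset.Icc (m+i+1) n, c ^ (j - m) * ((clsA Z' H' F' x z D E m).card : ℝ) :=
      Finset.sum_le_sum hlevel
    refine le_trans h2 ?_
    rw [← Finset.sum_mul]
    apply mul_le_mul_of_nonneg_right _ (Nat.cast_nonneg _)
    · have h4 : ∀ j ∈ Finset.Icc (m+i+1) n, c ^ (j - m) = c ^ (i+1) * c ^ (j - (m+i+1)) := by
        intro j hj
        rw [Finset.mem_Icc] at hj
        rw [← pow_add]
        congr 1
        omega
      rw [Finset.sum_congr rfl h4, ← Finset.mul_sum, div_eq_mul_one_div]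
      apply mul_le_mul_of_nonneg_left _ (pow_nonneg hc0 _)
      have h5 : ∑ j ∈ Finset.Icc (m+i+1) n, c ^ (j - (m+i+1))
          = ∑ k ∈ (Finset.Icc (m+i+1) n).image (fun j => j - (m+i+1)), c ^ k := by
        rw [Finset.sum_image]
        intro a ha b hb hab
        rw [Finset.mem_coe, Finset.mem_Icc] at ha hb
        simp only at hab
        omega
      rw [h5]
      refine le_trans (Finset.sum_le_sum_of_subset_of_nonneg ?_
        (fun k _ _ => pow_nonneg hc0 k)) (geom_tail_le hc0 hc1 (n+1))
      intro k hk
      rw [Finset.mem_image] at hk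
      obtain ⟨j, hj, rfl⟩ := hk
      rw [Finset.mem_Icc] at hj
      rw [Finset.mem_range]
      omega
  -- denominator bound
  have hDen : ((clsA Z' H' F' x z D E m).card : ℝ) ≤ (cls.card : ℝ) := by
    have : clsA Z' H' F' x z D E m ⊆ cls := by
      intro G hG
      rw [mem_clsA] at hG
      rw [hcls, mem_filter, graphsWithDegreeSeq, mem_filter]
      exact ⟨⟨mem_univ _, hG.1⟩, hG.2.1⟩
    exact_mod_cast card_le_card this
  have hDenPos : (0:ℝ) < (cls.card : ℝ) := by exact_mod_cast hpos
  -- put it together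
  rw [div_le_iff₀ hDenPos]
  have hfrac : c ^ (i+1) / (1 - c) ≤ (22 * Real.sqrt ν) ^ (i+1) := by
    have h1 : (22 * Real.sqrt ν) ^ (i+1) = (22/21 : ℝ)^(i+1) * c^(i+1) := by
      rw [← mul_pow]
      congr 1
      rw [hc]; ring
    have h2 : 1/(1-c) ≤ (22/21 : ℝ) := by
      rw [div_le_div_iff₀ (by linarith) (by norm_num)]
      nlinarith
    have h3 : (22/21 : ℝ) ≤ (22/21 : ℝ) ^ (i+1) := le_self_pow₀ (by norm_num) (Nat.succ_ne_zero i)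
    calc c ^ (i+1) / (1-c) = c ^ (i+1) * (1/(1-c)) := by ring
      _ ≤ c ^ (i+1) * (22/21 : ℝ) := mul_le_mul_of_nonneg_left h2 (pow_nonneg hc0 _)
      _ ≤ c ^ (i+1) * (22/21 : ℝ) ^ (i+1) := by
          apply mul_le_mul_of_nonneg_left h3 (pow_nonneg hc0 _)
      _ = (22/21 : ℝ) ^ (i+1) * c ^ (i+1) := by ring
      _ = (22 * Real.sqrt ν) ^ (i+1) := h1.symm
  have hnonneg : (0:ℝ) ≤ c ^ (i+1) / (1 - c) := by
    apply div_nonneg (pow_nonneg hc0 _)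
    linarith
  calc (Num.card : ℝ)
      ≤ (c ^ (i+1) / (1 - c)) * ((clsA Z' H' F' x z D E m).card : ℝ) := hNumR
    _ ≤ (c ^ (i+1) / (1 - c)) * (cls.card : ℝ) := mul_le_mul_of_nonneg_left hDen hnonneg
    _ ≤ (22 * Real.sqrt ν) ^ (i+1) * (cls.card : ℝ) :=
        mul_le_mul_of_nonneg_right hfrac (Nat.cast_nonneg _)

end Master

lemma card_filter_pos_congr {α : Type*} {s : Finset α} {p q : α → Prop}
    {h1 : DecidablePred p} {h2 : DecidablePred q} (h : ∀ b, p b ↔ q b)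
    (hp : 0 < (@Finset.filter α p h1 s).card) : 0 < (@Finset.filter α q h2 s).card :=
  lt_of_lt_of_eq hp (congrArg Finset.card (filter_eq_filter s h))


/-- **Lemma (few back edges).**
Conditional on `G^D[Z'] = H'`, `F' ⊆ G^D` and additionally on `xz` being (or not being)
an edge of `G^D`, the probability that `x` has more than `⌊√ν (d(x) - d_{F'}(x))⌋ + i`
non-`F'` neighbours in `Z'' = Z' \ {z}` is at most `(22√ν)^{i+1}`. -/
theorem few_back_edges :
    ∃ ν₀ : ℝ, 0 < ν₀ ∧ ν₀ < 1 ∧ ∀ ν : ℝ, 0 < ν → ν ≤ ν₀ →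
    ∃ n₀ : ℕ, ∀ n : ℕ, n₀ ≤ n →
    ∀ Z' : Finset (Fin n), ∀ H' F' : SimpleGraph (Fin n),
    -- `H'` is a graph on the vertex set `Z'`
    (∀ a b, H'.Adj a b → a ∈ Z' ∧ b ∈ Z') →
    -- `F'` is bipartite with parts `(Z', V \ Z')`
    (∀ a b, F'.Adj a b → ((a ∈ Z' ∧ b ∉ Z') ∨ (a ∉ Z' ∧ b ∈ Z'))) →
    ∀ x z : Fin n, x ∉ Z' → z ∈ Z' → ¬ F'.Adj x z →
    ∀ D : Fin n → ℕ, (∀ w, 1 ≤ D w) →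
    -- all large-degree vertices lie in `Z'` with all their edges in `H'`
    (∀ w : Fin n, (n : ℝ) ^ ((1 : ℝ) / 4) < (D w : ℝ) → w ∈ Z' ∧ H'.degree w = D w) →
    -- few free half-edges inside `Z'`
    (∑ w ∈ Z', ((D w : ℝ) - (H'.degree w : ℝ) - (F'.degree w : ℝ))) ≤ ν * n →
    -- many free half-edges outside `Z'`
    (n : ℝ) / 20 ≤ (∑ w ∈ Finset.univ.filter (fun w => w ∉ Z'),
        ((D w : ℝ) - (F'.degree w : ℝ))) →
    ∀ i : ℕ,
    (let B : SimpleGraph (Fin n) → Prop :=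
      fun G => (∀ a b, a ∈ Z' → b ∈ Z' → (G.Adj a b ↔ H'.Adj a b)) ∧ F' ≤ G;
     let Q : SimpleGraph (Fin n) → Prop :=
      fun G => ((⌊Real.sqrt ν * ((D x : ℝ) - (F'.degree x : ℝ))⌋ : ℝ) + i <
        (degIn G x (Z'.erase z) : ℝ) - (F'.degree x : ℝ));
     -- conditioning additionally on `xz ∈ E(G^D)`
     (0 < ((graphsWithDegreeSeq n D).filter (fun G => B G ∧ G.Adj x z)).card →
        uniformCondProb n D Q (fun G => B G ∧ G.Adj x z)
          ≤ (22 * Real.sqrt ν) ^ (i + 1)) ∧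
     -- conditioning additionally on `xz ∉ E(G^D)`
     (0 < ((graphsWithDegreeSeq n D).filter (fun G => B G ∧ ¬ G.Adj x z)).card →
        uniformCondProb n D Q (fun G => B G ∧ ¬ G.Adj x z)
          ≤ (22 * Real.sqrt ν) ^ (i + 1)) ∧
     -- conditioning only on `B`
     (0 < ((graphsWithDegreeSeq n D).filter B).card →
        uniformCondProb n D Q B ≤ (22 * Real.sqrt ν) ^ (i + 1))) := by
  refine ⟨1/1000000, by norm_num, by norm_num, ?_⟩
  intro ν hν0 hν1
  refine ⟨100000000, ?_⟩
  intro n hn Z' H' F' hH hF x z hx hz hxzF D hD1 hbig hin hout i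
  intro B Q
  have houtS : (n : ℝ)/20 ≤ ∑ w ∈ OutS Z', ((D w : ℝ) - (F'.degree w : ℝ)) := hout
  refine ⟨?_, ?_, ?_⟩
  · intro hpos
    have hmain := master hn hν0 hν1 hH hF hx hz hxzF hbig hin houtS
      (E := fun G => G.Adj x z) (fun G G' hiff hEG => hiff.mp hEG) i
      (card_filter_pos_congr (fun G => Iff.rfl) hpos)
    rw [uniformCondProb]
    convert hmain using 3
    · exact congrArg Finset.card (filter_eq_filter _ (fun G => Iff.rfl))
    · exact congrArg Finset.card (filter_eq_filter _ (fun G => Iff.rfl))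
  · intro hpos
    have hmain := master hn hν0 hν1 hH hF hx hz hxzF hbig hin houtS
      (E := fun G => ¬G.Adj x z) (fun G G' hiff hEG h => hEG (hiff.mpr h)) i
      (card_filter_pos_congr (fun G => Iff.rfl) hpos)
    rw [uniformCondProb]
    convert hmain using 3
    · exact congrArg Finset.card (filter_eq_filter _ (fun G => Iff.rfl))
    · exact congrArg Finset.card (filter_eq_filter _ (fun G => Iff.rfl))
  · intro hpos
    have hmain := master hn hν0 hν1 hH hF hx hz hxzF hbig hin houtS
      (E := fun _ => True) (fun G G' _ _ => trivial) i
      (card_filter_pos_congr (fun G => Iff.intro (fun h => ⟨h, trivial⟩) (fun h => h.1)) hpos)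
    rw [uniformCondProb]
    convert hmain using 3
    · exact congrArg Finset.card (filter_eq_filter _ (fun G => by
        constructor
        · rintro ⟨h1, h2⟩; exact ⟨h1, h2, trivial⟩
        · rintro ⟨h1, h2, -⟩; exact ⟨h1, h2⟩))
    · exact congrArg Finset.card (filter_eq_filter _ (fun G =>
        Iff.intro (fun h => ⟨h, trivial⟩) (fun h => h.1)))
end
end
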